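/- arXiv:math/0503589 — 5 statements merged into one kernel-verified Lean document; each statement's English description precedes it below -/
import Mathlib

section
/- Let X_1, ..., X_n be i.i.d. random variables with values in [0,1], let 1/2 ≤ c ≤ 1 be a fixed sampling cost, and let Y_i = X_i - i·c for i = 1, ..., n. Then M(Y_1,...,Y_n) - V(Y_1,...,Y_n) ≤ (1-c)/4. -/
open MeasureTheory ProbabilityTheory

/-- The σ-algebra generated by `Y 1, ..., Y i`. -/
def priorSigma {Ω : Type*} (Y : ℕ → Ω → ℝ) (i : ℕ) : MeasurableSpace Ω :=
  ⨆ j ∈ Finset.Icc 1 i, MeasurableSpace.comap (Y j) Real.measurableSpace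

/-- `τ` is a stopping rule for `Y 1, ..., Y n`: it takes values in `{1, ..., n}` and
each event `{τ = i}` depends only on `Y 1, ..., Y i`. -/
def IsStopRule {Ω : Type*} (Y : ℕ → Ω → ℝ) (n : ℕ) (τ : Ω → ℕ) : Prop :=
  (∀ ω, τ ω ∈ Finset.Icc 1 n) ∧
  ∀ i ∈ Finset.Icc 1 n, MeasurableSet[priorSigma Y i] {ω | τ ω = i}

/-- `V(Y_1,...,Y_n) = sup_τ E(Y_τ)`: the optimal expected return of the statistician. -/
noncomputable def Vn {Ω : Type*} [MeasurableSpace Ω] (μ : Measure Ω)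
    (Y : ℕ → Ω → ℝ) (n : ℕ) : ℝ :=
  sSup {r | ∃ τ, IsStopRule Y n τ ∧ r = ∫ ω, Y (τ ω) ω ∂μ}

/-- `M(Y_1,...,Y_n) = E(max_{1 ≤ i ≤ n} Y_i)`: the expected return of the prophet. -/
noncomputable def Mn {Ω : Type*} [MeasurableSpace Ω] (μ : Measure Ω)
    (Y : ℕ → Ω → ℝ) (n : ℕ) : ℝ :=
  ∫ ω, sSup ((fun i => Y i ω) '' Set.Icc 1 n) ∂μ

set_option linter.unusedVariables false

theorem stmt1
    {Ω : Type*} [MeasurableSpace Ω] (μ : Measure Ω) [IsProbabilityMeasure μ]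
    (n : ℕ) (X : ℕ → Ω → ℝ)
    (hmeas : ∀ i, Measurable (X i))
    (hindep : iIndepFun (fun i : Fin n => X (i.1 + 1)) μ)
    (hident : ∀ i ∈ Set.Icc 1 n, IdentDistrib (X i) (X 1) μ μ)
    (hval : ∀ i ∈ Set.Icc 1 n, ∀ ω, X i ω ∈ Set.Icc (0:ℝ) 1)
    (c : ℝ) (Y : ℕ → Ω → ℝ) (hY : ∀ i ω, Y i ω = X i ω - i * c)
    (hn : 1 ≤ n) (hc0 : 1/2 ≤ c) (hc : c ≤ 1) :
    Mn μ Y n - Vn μ Y n ≤ (1 - c) / 4 := by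
  have hc0' : (0:ℝ) ≤ c := by linarith
  have hYmeas : ∀ i, Measurable (Y i) := by
    intro i
    have : Y i = fun ω => X i ω - (i : ℝ) * c := funext (hY i)
    rw [this]; exact (hmeas i).sub measurable_const
  -- integrability of bounded measurable functions
  have intOf : ∀ (f : Ω → ℝ) (C : ℝ), Measurable f → (∀ ω, |f ω| ≤ C) → Integrable f μ := by
    intro f C hf hb
    exact Integrable.mono' (integrable_const C) hf.aestronglyMeasurable
      (ae_of_all _ fun ω => by simpa [Real.norm_eq_abs] using hb ω)
  -- integral ≤ 1 for functions bounded by 1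
  have intLeOne : ∀ f : Ω → ℝ, (∀ ω, f ω ≤ 1) → ∫ ω, f ω ∂μ ≤ 1 := by
    intro f h
    by_cases hf : Integrable f μ
    · calc ∫ ω, f ω ∂μ ≤ ∫ _ω, (1:ℝ) ∂μ := integral_mono hf (integrable_const 1) h
        _ = 1 := by simp
    · rw [integral_undef hf]; norm_num
  have hX1 : ∀ ω, X 1 ω ∈ Set.Icc (0:ℝ) 1 := hval 1 (Set.mem_Icc.mpr ⟨le_refl 1, hn⟩)
  have hY1int : Integrable (Y 1) μ := by
    refine intOf _ (1 + c) (hYmeas 1) fun ω => ?_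
    rw [hY]
    have := hX1 ω
    rw [Set.mem_Icc] at this
    rw [abs_le]; constructor <;> push_cast <;> linarith [this.1, this.2]
  -- lower bound for Vn : stop immediately
  have hVlb : ∫ ω, Y 1 ω ∂μ ≤ Vn μ Y n := by
    have hbdd : BddAbove {r | ∃ τ, IsStopRule Y n τ ∧ r = ∫ ω, Y (τ ω) ω ∂μ} := by
      refine ⟨1, ?_⟩
      rintro r ⟨τ, hτ, rfl⟩
      refine intLeOne _ fun ω => ?_
      obtain ⟨h1, h2⟩ := Finset.mem_Icc.mp (hτ.1 ω)
      have hXv := hval (τ ω) (Set.mem_Icc.mpr ⟨h1, h2⟩) ω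
      rw [Set.mem_Icc] at hXv
      have hpos : (0:ℝ) ≤ (τ ω : ℝ) * c := mul_nonneg (Nat.cast_nonneg _) hc0'
      rw [hY]; linarith [hXv.2]
    refine le_csSup hbdd ?_
    refine ⟨fun _ => 1, ⟨fun ω => Finset.mem_Icc.mpr ⟨le_refl 1, hn⟩, ?_⟩, rfl⟩
    intro i hi
    rcases eq_or_ne i 1 with h | h
    · subst h
      have : {ω : Ω | (1:ℕ) = 1} = Set.univ := by ext ω; simp
      rw [this]; exact @MeasurableSet.univ Ω (priorSigma Y 1)
    · have : {ω : Ω | (1:ℕ) = i} = ∅ := by ext ω; simp [Ne.symm h]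
      rw [this]; exact @MeasurableSet.empty Ω (priorSigma Y i)
  by_cases hn2 : 2 ≤ n
  · -- main case
    -- h is the excess of the prophet
    set h : Ω → ℝ := fun ω => max (X 2 ω - c - X 1 ω) 0 with hh
    have hX2 : ∀ ω, X 2 ω ∈ Set.Icc (0:ℝ) 1 := hval 2 (Set.mem_Icc.mpr ⟨by omega, hn2⟩)
    have hhmeas : Measurable h := (((hmeas 2).sub measurable_const).sub (hmeas 1)).max measurable_const
    have hhint : Integrable h μ := by
      refine intOf _ 1 hhmeas fun ω => ?_
      have h1 := hX1 ω; have h2 := hX2 ω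
      rw [Set.mem_Icc] at h1 h2
      rw [abs_le]
      constructor
      · linarith [le_max_right (X 2 ω - c - X 1 ω) (0:ℝ)]
      · apply max_le <;> linarith
    -- Mn ≤ ∫ Y 1 + ∫ h
    have hne : (Finset.Icc 1 n).Nonempty := ⟨1, Finset.mem_Icc.mpr ⟨le_refl 1, hn⟩⟩
    have hMle : Mn μ Y n ≤ (∫ ω, Y 1 ω ∂μ) + ∫ ω, h ω ∂μ := by
      have hFeq : ∀ ω, sSup ((fun i => Y i ω) '' Set.Icc 1 n)
          = (Finset.Icc 1 n).sup' hne (fun i => Y i ω) := by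
        intro ω
        rw [Finset.sup'_eq_csSup_image, Finset.coe_Icc]
      have hFmeas : Measurable ((Finset.Icc 1 n).sup' hne Y) :=
        Finset.measurable_sup' hne (fun i _ => hYmeas i)
      have hFbound : ∀ ω, (Finset.Icc 1 n).sup' hne (fun i => Y i ω) ≤ Y 1 ω + h ω := by
        intro ω
        refine Finset.sup'_le hne _ fun i hi => ?_
        obtain ⟨hi1, hi2⟩ := Finset.mem_Icc.mp hi
        have hXi := hval i (Set.mem_Icc.mpr ⟨hi1, hi2⟩) ω
        rw [Set.mem_Icc] at hXi
        have h1 := hX1 ω; rw [Set.mem_Icc] at h1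
        have hmax0 : (0:ℝ) ≤ h ω := le_max_right _ _
        rcases Nat.lt_or_ge i 3 with hlt | hge
        · interval_cases i
          · linarith
          · have hmax1 : X 2 ω - c - X 1 ω ≤ h ω := le_max_left _ _
            rw [hY, hY]; push_cast; linarith
        · -- i ≥ 3 : Y i ≤ 1 - 3c ≤ -c ≤ Y 1
          have hi3 : (3:ℝ) ≤ (i:ℝ) := by exact_mod_cast hge
          have : (0:ℝ) ≤ ((i:ℝ) - 3) * c := mul_nonneg (by linarith) hc0'
          rw [hY, hY]; push_cast; nlinarith [hXi.2, h1.1]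
      have hFint : Integrable (fun ω => (Finset.Icc 1 n).sup' hne (fun i => Y i ω)) μ := by
        refine intOf _ (1 + c) (by
          have : (fun ω => (Finset.Icc 1 n).sup' hne (fun i => Y i ω))
              = (Finset.Icc 1 n).sup' hne Y := by
            funext ω; rw [Finset.sup'_apply]
          rw [this]; exact hFmeas) fun ω => ?_
        rw [abs_le]
        constructor
        · have h1 := hX1 ω; rw [Set.mem_Icc] at h1
          have : Y 1 ω ≤ (Finset.Icc 1 n).sup' hne (fun i => Y i ω) :=
            Finset.le_sup' (fun i => Y i ω) (Finset.mem_Icc.mpr ⟨le_refl 1, hn⟩)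
          rw [hY] at this; push_cast at this; linarith
        · refine Finset.sup'_le hne _ fun i hi => ?_
          obtain ⟨hi1, hi2⟩ := Finset.mem_Icc.mp hi
          have hXi := hval i (Set.mem_Icc.mpr ⟨hi1, hi2⟩) ω
          rw [Set.mem_Icc] at hXi
          have hpos : (0:ℝ) ≤ (i:ℝ) * c := mul_nonneg (Nat.cast_nonneg _) hc0'
          rw [hY]; linarith [hXi.2]
      calc Mn μ Y n = ∫ ω, (Finset.Icc 1 n).sup' hne (fun i => Y i ω) ∂μ := by
            unfold Mn; exact integral_congr_ae (ae_of_all _ hFeq)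
        _ ≤ ∫ ω, (Y 1 ω + h ω) ∂μ := integral_mono hFint (hY1int.add hhint) hFbound
        _ = (∫ ω, Y 1 ω ∂μ) + ∫ ω, h ω ∂μ := integral_add hY1int hhint
    -- bound ∫ h using independence
    have hhbound : ∫ ω, h ω ∂μ ≤ (1 - c) / 4 := by
      set g2 : Ω → ℝ := fun ω => max (X 2 ω - c) 0 with hg2
      set ind1 : Ω → ℝ := fun ω => if X 1 ω < 1 - c then 1 else 0 with hind1
      have hg2meas : Measurable g2 := ((hmeas 2).sub measurable_const).max measurable_const
      have hind1meas : Measurable ind1 := by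
        apply Measurable.ite _ measurable_const measurable_const
        exact (hmeas 1) measurableSet_Iio
      have hg2int : Integrable g2 μ := by
        refine intOf _ 1 hg2meas fun ω => ?_
        have h2 := hX2 ω; rw [Set.mem_Icc] at h2
        rw [abs_le]; constructor
        · linarith [le_max_right (X 2 ω - c) (0:ℝ)]
        · apply max_le <;> linarith
      have hind1int : Integrable ind1 μ := by
        refine intOf _ 1 hind1meas fun ω => ?_
        simp only [hind1]; split <;> simp
      -- pointwise bound
      have hpw : ∀ ω, h ω ≤ g2 ω * ind1 ω := by
        intro ω
        have h1 := hX1 ω; have h2 := hX2 ω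
        rw [Set.mem_Icc] at h1 h2
        simp only [hh, hg2, hind1]
        by_cases hx : X 1 ω < 1 - c
        · rw [if_pos hx, mul_one]
          apply max_le
          · linarith [le_max_left (X 2 ω - c) (0:ℝ)]
          · exact le_max_right _ _
        · rw [if_neg hx, mul_zero]
          push_neg at hx
          apply max_le <;> linarith
      -- independence
      have hindep12 : IndepFun (X 2) (X 1) μ := by
        have := hindep.indepFun (i := (⟨1, by omega⟩ : Fin n)) (j := (⟨0, by omega⟩ : Fin n))
          (by simp)
        simpa using this
      have hIF : IndepFun g2 ind1 μ := by
        have mg : Measurable (fun x : ℝ => max (x - c) 0) :=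
          (measurable_id.sub measurable_const).max measurable_const
        have mi : Measurable (fun x : ℝ => if x < 1 - c then (1:ℝ) else 0) := by
          apply Measurable.ite _ measurable_const measurable_const
          exact measurableSet_Iio
        exact hindep12.comp mg mi
      have hmul : ∫ ω, g2 ω * ind1 ω ∂μ = (∫ ω, g2 ω ∂μ) * ∫ ω, ind1 ω ∂μ :=
        hIF.integral_fun_mul_eq_mul_integral hg2int.aestronglyMeasurable hind1int.aestronglyMeasurable
      -- compute ∫ ind1 as a measure
      set p : ℝ := (μ {ω | X 1 ω < 1 - c}).toReal with hp
      set q : ℝ := (μ {ω | c < X 2 ω}).toReal with hq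
      have hs1 : MeasurableSet {ω | X 1 ω < 1 - c} := (hmeas 1) measurableSet_Iio
      have hs2 : MeasurableSet {ω | c < X 2 ω} := (hmeas 2) measurableSet_Ioi
      have hind1val : ∫ ω, ind1 ω ∂μ = p := by
        have : ind1 = Set.indicator {ω | X 1 ω < 1 - c} (fun _ => (1:ℝ)) := by
          funext ω; rw [Set.indicator_apply]; rfl
        rw [this, integral_indicator_const _ hs1]; simp [hp, measureReal_def]
      have hg2val : ∫ ω, g2 ω ∂μ ≤ (1 - c) * q := by
        have hpw2 : ∀ ω, g2 ω ≤ Set.indicator {ω | c < X 2 ω} (fun _ => (1 - c : ℝ)) ω := by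
          intro ω
          have h2 := hX2 ω; rw [Set.mem_Icc] at h2
          rw [Set.indicator_apply]
          simp only [Set.mem_setOf_eq]
          by_cases hx : c < X 2 ω
          · rw [if_pos hx]
            apply max_le <;> linarith
          · rw [if_neg hx]
            push_neg at hx
            apply max_le <;> linarith
        have hiint : Integrable (Set.indicator {ω | c < X 2 ω} (fun _ => (1 - c : ℝ))) μ :=
          (integrable_const (1 - c)).indicator hs2
        calc ∫ ω, g2 ω ∂μ ≤ ∫ ω, Set.indicator {ω | c < X 2 ω} (fun _ => (1 - c : ℝ)) ω ∂μ :=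
              integral_mono hg2int hiint hpw2
          _ = (1 - c) * q := by rw [integral_indicator_const _ hs2]; simp [hq, mul_comm, measureReal_def]
      -- q ≤ 1 - p via identical distribution and disjointness
      have hqp : q + p ≤ 1 := by
        have hid2 : IdentDistrib (X 2) (X 1) μ μ := hident 2 (Set.mem_Icc.mpr ⟨by omega, hn2⟩)
        have hpeq : μ {ω | X 1 ω < 1 - c} = μ {ω | X 2 ω < 1 - c} :=
          (hid2.measure_mem_eq (s := Set.Iio (1 - c)) measurableSet_Iio).symm
        have hdisj : Disjoint {ω | c < X 2 ω} {ω | X 2 ω < 1 - c} := by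
          rw [Set.disjoint_left]
          intro ω h1 h2
          simp only [Set.mem_setOf_eq] at h1 h2
          linarith
        have hsum : μ {ω | c < X 2 ω} + μ {ω | X 2 ω < 1 - c} ≤ 1 := by
          rw [← measure_union hdisj ((hmeas 2) measurableSet_Iio)]
          exact prob_le_one
        rw [hq, hp, hpeq]
        calc (μ {ω | c < X 2 ω}).toReal + (μ {ω | X 2 ω < 1 - c}).toReal
            = (μ {ω | c < X 2 ω} + μ {ω | X 2 ω < 1 - c}).toReal :=
              (ENNReal.toReal_add (measure_ne_top _ _) (measure_ne_top _ _)).symm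
          _ ≤ (1 : ENNReal).toReal := ENNReal.toReal_mono (by simp) hsum
          _ = 1 := by simp
      have hp0 : 0 ≤ p := ENNReal.toReal_nonneg
      have hq0 : 0 ≤ q := ENNReal.toReal_nonneg
      have hprodint : Integrable (fun ω => g2 ω * ind1 ω) μ := by
        refine intOf _ 1 (hg2meas.mul hind1meas) fun ω => ?_
        rw [abs_mul]
        have hb1 : |g2 ω| ≤ 1 := by
          have h2 := hX2 ω; rw [Set.mem_Icc] at h2
          rw [abs_le]; constructor
          · linarith [le_max_right (X 2 ω - c) (0:ℝ)]
          · apply max_le <;> linarith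
        have hb2 : |ind1 ω| ≤ 1 := by
          simp only [hind1]; split <;> simp
        calc |g2 ω| * |ind1 ω| ≤ 1 * 1 :=
              mul_le_mul hb1 hb2 (abs_nonneg _) (by norm_num)
          _ = 1 := by norm_num
      have hqple : q * p ≤ 1 / 4 := by nlinarith [sq_nonneg (q - p)]
      calc ∫ ω, h ω ∂μ ≤ ∫ ω, g2 ω * ind1 ω ∂μ := integral_mono hhint hprodint hpw
        _ = (∫ ω, g2 ω ∂μ) * p := by rw [hmul, hind1val]
        _ ≤ ((1 - c) * q) * p := mul_le_mul_of_nonneg_right hg2val hp0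
        _ = (1 - c) * (q * p) := by ring
        _ ≤ (1 - c) * (1 / 4) := mul_le_mul_of_nonneg_left hqple (by linarith)
        _ = (1 - c) / 4 := by ring
    linarith
  · -- n = 1
    have hn1 : n = 1 := by omega
    subst hn1
    have hMn : Mn μ Y 1 = ∫ ω, Y 1 ω ∂μ := by
      unfold Mn
      refine integral_congr_ae (ae_of_all _ fun ω => ?_)
      simp only [Set.Icc_self, Set.image_singleton, csSup_singleton]
    rw [hMn]
    linarith
end

section
/- Let 0 < c ≤ 1/2, let n ≥ ⟦1/c⟧ + 1, and let X_1, ..., X_n be i.i.d. random variables with P(X_1 = 1) = c = 1 - P(X_1 = 0). With Y_i = X_i - i·c, one has M(Y_1,...,Y_n) - V(Y_1,...,Y_n) = ⟦1/c⟧·c·(1-c)^{⟦1/c⟧+1}; that is, the upper bound of the prophet inequality for fixed cost c ≤ 1/2 is attained. -/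
open MeasureTheory ProbabilityTheory

set_option linter.unusedVariables false

set_option linter.unusedSectionVars false
set_option linter.unusedVariables false

namespace Stmt4

variable {Ω : Type*} [MeasurableSpace Ω]

lemma integrable_indSum (μ : Measure Ω) [IsProbabilityMeasure μ] (s : Finset ℕ)
    (S : ℕ → Set Ω) (hS : ∀ t ∈ s, MeasurableSet (S t)) (v : ℕ → ℝ) :
    Integrable (fun ω => ∑ t ∈ s, (S t).indicator (fun _ => v t) ω) μ :=
  integrable_finset_sum s (fun t ht => (integrable_const (v t)).indicator (hS t ht))

lemma integral_indSum (μ : Measure Ω) [IsProbabilityMeasure μ] (s : Finset ℕ)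
    (S : ℕ → Set Ω) (hS : ∀ t ∈ s, MeasurableSet (S t)) (v : ℕ → ℝ) :
    ∫ ω, ∑ t ∈ s, (S t).indicator (fun _ => v t) ω ∂μ
      = ∑ t ∈ s, v t * (μ (S t)).toReal := by
  rw [integral_finset_sum s (fun t ht => (integrable_const (v t)).indicator (hS t ht))]
  exact Finset.sum_congr rfl fun t ht => by
    rw [integral_indicator_const (v t) (hS t ht), smul_eq_mul, mul_comm]; rfl


def S1 (X : ℕ → Ω → ℝ) (i : ℕ) : Set Ω := X i ⁻¹' {1}
def S0 (X : ℕ → Ω → ℝ) (i : ℕ) : Set Ω := X i ⁻¹' {0}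
def evA (X : ℕ → Ω → ℝ) (t : ℕ) : Set Ω := (⋂ j ∈ Finset.Icc 1 (t-1), S0 X j) ∩ S1 X t
def evB (X : ℕ → Ω → ℝ) (n : ℕ) : Set Ω := ⋂ j ∈ Finset.Icc 1 n, S0 X j
def good (X : ℕ → Ω → ℝ) (n : ℕ) : Set Ω := ⋂ j ∈ Finset.Icc 1 n, (S0 X j ∪ S1 X j)

noncomputable def ee (n : ℕ) (c : ℝ) : ℕ → ℝ
  | 0 => -((n : ℝ) * c)
  | (m+1) => c * (1 - ((n - m : ℕ) : ℝ) * c) + (1-c) * ee n c m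

lemma ee_rec {n : ℕ} (c : ℝ) {i : ℕ} (h1 : 1 ≤ i) (h2 : i ≤ n) :
    ee n c (n+1-i) = c * (1 - (i:ℝ)*c) + (1-c) * ee n c (n-i) := by
  have h : n+1-i = (n-i)+1 := by omega
  rw [h]
  show c * (1 - ((n - (n-i) : ℕ) : ℝ) * c) + (1-c) * ee n c (n-i) = _
  have : n - (n-i) = i := by omega
  rw [this]

lemma ee_lb {n : ℕ} {c : ℝ} (hc0 : 0 < c) (hc1 : c ≤ 1) :
    ∀ m, m ≤ n → -(((n-m : ℕ):ℝ) * c) ≤ ee n c m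
  | 0, _ => by simp [ee]
  | (m+1), h => by
    have IH := ee_lb (n := n) hc0 hc1 m (by omega)
    have hq : (0:ℝ) ≤ 1 - c := by linarith
    have h1 : ((n - m : ℕ):ℝ) = (n:ℝ) - m := by
      rw [Nat.cast_sub (by omega)]
    have h2 : ((n - (m+1) : ℕ):ℝ) = (n:ℝ) - m - 1 := by
      rw [Nat.cast_sub (by omega)]; push_cast; ring
    show -(((n - (m+1) : ℕ):ℝ) * c) ≤ c * (1 - ((n - m : ℕ) : ℝ) * c) + (1-c) * ee n c m
    have hmul := mul_le_mul_of_nonneg_left IH hq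
    rw [h1] at IH hmul ⊢
    rw [h2]
    nlinarith [hmul]

lemma ee_ub {n : ℕ} {c : ℝ} (hc0 : 0 < c) (hc1 : c ≤ 1) :
    ∀ m, m ≤ n → ee n c m ≤ 1 - ((n+1-m : ℕ):ℝ) * c
  | 0, _ => by
    show -((n : ℝ) * c) ≤ 1 - ((n+1-0 : ℕ):ℝ) * c
    have : ((n+1-0 : ℕ):ℝ) = (n:ℝ) + 1 := by push_cast; ring
    rw [this]; nlinarith
  | (m+1), h => by
    have IH := ee_ub (n := n) hc0 hc1 m (by omega)
    have hq : (0:ℝ) ≤ 1 - c := by linarith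
    have h1 : ((n - m : ℕ):ℝ) = (n:ℝ) - m := by rw [Nat.cast_sub (by omega)]
    have h2 : ((n + 1 - m : ℕ):ℝ) = (n:ℝ) + 1 - m := by
      rw [Nat.cast_sub (by omega)]; push_cast; ring
    have h3 : ((n + 1 - (m+1) : ℕ):ℝ) = (n:ℝ) - m := by
      rw [Nat.cast_sub (by omega)]; push_cast; ring
    show c * (1 - ((n - m : ℕ) : ℝ) * c) + (1-c) * ee n c m ≤ 1 - ((n+1-(m+1) : ℕ):ℝ) * c
    have hmul := mul_le_mul_of_nonneg_left IH hq
    rw [h2] at hmul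
    rw [h1, h3]
    nlinarith [hmul]

lemma ee_closed {n : ℕ} {c : ℝ} :
    ∀ m, m ≤ n → ee n c m = (∑ t ∈ Finset.Icc (n+1-m) n,
      c * (1-c)^(t-(n+1-m)) * (1 - (t:ℝ)*c)) + (1-c)^m * (-((n:ℝ)*c))
  | 0, _ => by
    have : Finset.Icc (n+1) n = ∅ := by
      apply Finset.Icc_eq_empty; omega
    simp [ee, this]
  | (m+1), h => by
    have ha : n+1-(m+1) = n-m := by omega
    have ihm := ee_closed (n := n) (c := c) m (by omega)
    show c * (1 - ((n - m : ℕ):ℝ) * c) + (1-c) * ee n c m = _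
    rw [ihm, ha, Finset.Icc_eq_cons_Ioc (by omega : n-m ≤ n), Finset.sum_cons]
    have hIoc : Finset.Ioc (n-m) n = Finset.Icc (n+1-m) n := by
      rw [← Finset.Icc_add_one_left_eq_Ioc]; congr 1; omega
    rw [hIoc]
    have hre : ∀ t ∈ Finset.Icc (n+1-m) n,
        c * (1-c)^(t-(n-m)) * (1 - (t:ℝ)*c)
          = (1-c) * (c * (1-c)^(t-(n+1-m)) * (1 - (t:ℝ)*c)) := by
      intro t ht
      obtain ⟨ht1, ht2⟩ := Finset.mem_Icc.1 ht
      have he : t - (n-m) = (t - (n+1-m)) + 1 := by omega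
      rw [he, pow_succ]
      ring
    rw [Finset.sum_congr rfl hre, ← Finset.mul_sum]
    simp only [Nat.sub_self, pow_zero, pow_succ]
    ring

def sig (X : ℕ → Ω → ℝ) (i : ℕ) : MeasurableSpace Ω :=
  ⨆ j ∈ Finset.Icc 1 i, MeasurableSpace.comap (X j) Real.measurableSpace

lemma comap_Y_le (X : ℕ → Ω → ℝ) (c : ℝ) (Y : ℕ → Ω → ℝ)
    (hY : ∀ i ω, Y i ω = X i ω - i * c) (j : ℕ) :
    MeasurableSpace.comap (Y j) Real.measurableSpace
      ≤ MeasurableSpace.comap (X j) Real.measurableSpace := by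
  have hfun : Y j = (fun x : ℝ => x - j * c) ∘ X j := funext fun ω => hY j ω
  rw [hfun, ← MeasurableSpace.comap_comp]
  exact MeasurableSpace.comap_mono ((measurable_id.sub_const _).comap_le)

lemma priorSigma_le_sig (X : ℕ → Ω → ℝ) (c : ℝ) (Y : ℕ → Ω → ℝ)
    (hY : ∀ i ω, Y i ω = X i ω - i * c) (i : ℕ) :
    priorSigma Y i ≤ sig X i :=
  iSup₂_le fun j hj => le_trans (comap_Y_le X c Y hY j) (le_iSup₂ (f := fun j _ =>
    MeasurableSpace.comap (X j) Real.measurableSpace) j hj)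

lemma sig_le_ambient (X : ℕ → Ω → ℝ) (hmeas : ∀ i, Measurable (X i)) (i : ℕ) :
    sig X i ≤ (inferInstance : MeasurableSpace Ω) :=
  iSup₂_le fun j _ => (hmeas j).comap_le

lemma sig_mono (X : ℕ → Ω → ℝ) {i i' : ℕ} (h : i ≤ i') : sig X i ≤ sig X i' :=
  iSup₂_le fun j hj => le_iSup₂ (f := fun j _ =>
    MeasurableSpace.comap (X j) Real.measurableSpace) j
    (Finset.mem_Icc.2 ⟨(Finset.mem_Icc.1 hj).1, le_trans (Finset.mem_Icc.1 hj).2 h⟩)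

lemma indep_sig_comap (μ : Measure Ω) [IsProbabilityMeasure μ] (n : ℕ) (X : ℕ → Ω → ℝ)
    (hmeas : ∀ i, Measurable (X i))
    (hindep : iIndepFun (fun i : Fin n => X (i.1 + 1)) μ)
    {i : ℕ} (hi1 : 1 ≤ i) (hin : i ≤ n) :
    Indep (sig X (i-1)) (MeasurableSpace.comap (X i) Real.measurableSpace) μ := by
  set s : Fin n → MeasurableSpace Ω :=
    fun j => MeasurableSpace.comap (X ((j : ℕ) + 1)) Real.measurableSpace with hs
  have h_le : ∀ j, s j ≤ (inferInstance : MeasurableSpace Ω) := fun j => (hmeas _).comap_le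
  have hbig := indep_biSup_compl h_le hindep.iIndep {j : Fin n | (j : ℕ) + 1 < i}
  refine indep_of_indep_of_le_left (indep_of_indep_of_le_right hbig ?_) ?_
  · -- comap (X i) ≤ ⨆ j ∈ tᶜ, s j
    have hlt : i - 1 < n := by omega
    have hval : ((⟨i-1, hlt⟩ : Fin n) : ℕ) + 1 = i := by simp; omega
    have hmem : (⟨i-1, hlt⟩ : Fin n) ∈ {j : Fin n | (j : ℕ) + 1 < i}ᶜ := by
      simp [Set.mem_setOf_eq]; omega
    have : MeasurableSpace.comap (X i) Real.measurableSpace = s ⟨i-1, hlt⟩ := by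
      rw [hs]; simp only [hval]
    rw [this]
    exact le_iSup₂ (f := fun j (_ : j ∈ {j : Fin n | (j : ℕ) + 1 < i}ᶜ) => s j) _ hmem
  · -- sig X (i-1) ≤ ⨆ j ∈ t, s j
    refine iSup₂_le fun j hj => ?_
    obtain ⟨hj1, hj2⟩ := Finset.mem_Icc.1 hj
    have hlt : j - 1 < n := by omega
    have hval : ((⟨j-1, hlt⟩ : Fin n) : ℕ) + 1 = j := by simp; omega
    have hmem : (⟨j-1, hlt⟩ : Fin n) ∈ {j : Fin n | (j : ℕ) + 1 < i} := by
      simp only [Set.mem_setOf_eq, hval]; omega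
    have : MeasurableSpace.comap (X j) Real.measurableSpace = s ⟨j-1, hlt⟩ := by
      rw [hs]; simp only [hval]
    rw [this]
    exact le_iSup₂ (f := fun j (_ : j ∈ {j : Fin n | (j : ℕ) + 1 < i}) => s j) _ hmem

lemma indep_inter_eq (μ : Measure Ω) [IsProbabilityMeasure μ] (n : ℕ) (X : ℕ → Ω → ℝ)
    (hmeas : ∀ i, Measurable (X i))
    (hindep : iIndepFun (fun i : Fin n => X (i.1 + 1)) μ)
    {i : ℕ} (hi1 : 1 ≤ i) (hin : i ≤ n) {T : Set Ω}
    (hT : MeasurableSet[sig X (i-1)] T) {s : Set ℝ} (hs : MeasurableSet s) :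
    μ (T ∩ X i ⁻¹' s) = μ T * μ (X i ⁻¹' s) :=
  (Indep_iff _ _ μ).1 (indep_sig_comap μ n X hmeas hindep hi1 hin) T _ hT ⟨s, hs, rfl⟩

section Main

variable (μ : Measure Ω) [IsProbabilityMeasure μ] (n : ℕ) (X : ℕ → Ω → ℝ) (c : ℝ)

/-- reindexed independence -/
lemma meas_biInter_Icc
    (hindep : iIndepFun (fun i : Fin n => X (i.1 + 1)) μ)
    (S : Finset ℕ) (hSsub : S ⊆ Finset.Icc 1 n) (sets : ℕ → Set ℝ)
    (hsets : ∀ j ∈ S, MeasurableSet (sets j)) :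
    μ (⋂ j ∈ S, X j ⁻¹' sets j) = ∏ j ∈ S, μ (X j ⁻¹' sets j) := by
  have hmem : ∀ j ∈ S, 1 ≤ j ∧ j ≤ n := by
    intro j hj; have := hSsub hj; simpa [Finset.mem_Icc] using this
  set S' : Finset (Fin n) := Finset.univ.filter (fun i : Fin n => (i : ℕ) + 1 ∈ S) with hS'
  have hmemS' : ∀ i : Fin n, i ∈ S' ↔ (i : ℕ) + 1 ∈ S := by
    intro i; simp [hS']
  have key := hindep.meas_biInter (S := S')
    (s := fun i => X ((i : ℕ) + 1) ⁻¹' sets ((i : ℕ) + 1))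
    (fun i hi => ⟨sets ((i : ℕ) + 1), hsets _ ((hmemS' i).1 hi), rfl⟩)
  have hset : (⋂ i ∈ S', X ((i : ℕ) + 1) ⁻¹' sets ((i : ℕ) + 1))
      = ⋂ j ∈ S, X j ⁻¹' sets j := by
    ext ω
    simp only [Set.mem_iInter, hmemS']
    constructor
    · intro h j hj
      obtain ⟨h1, h2⟩ := hmem j hj
      have hlt : j - 1 < n := by omega
      have hj1 : j - 1 + 1 = j := by omega
      have := h ⟨j - 1, hlt⟩ (by simpa [hj1] using hj)
      simpa [hj1] using this
    · intro h i hi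
      exact h _ hi
  have hprod : (∏ i ∈ S', μ (X ((i : ℕ) + 1) ⁻¹' sets ((i : ℕ) + 1)))
      = ∏ j ∈ S, μ (X j ⁻¹' sets j) := by
    refine Finset.prod_bij (fun i _ => (i : ℕ) + 1) ?_ ?_ ?_ ?_
    · intro i hi; exact (hmemS' i).1 hi
    · intro a ha b hb hab
      exact Fin.ext (by omega)
    · intro j hj
      obtain ⟨h1, h2⟩ := hmem j hj
      have hlt : j - 1 < n := by omega
      have hj1 : j - 1 + 1 = j := by omega
      exact ⟨⟨j - 1, hlt⟩, (hmemS' _).2 (by simpa [hj1] using hj), by simp [hj1]⟩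
    · intro i hi; rfl
  rw [← hset, key, hprod]


lemma measS1 (hmeas : ∀ i, Measurable (X i)) (i : ℕ) : MeasurableSet (S1 X i) :=
  (hmeas i) (measurableSet_singleton 1)
lemma measS0 (hmeas : ∀ i, Measurable (X i)) (i : ℕ) : MeasurableSet (S0 X i) :=
  (hmeas i) (measurableSet_singleton 0)
lemma measevA (hmeas : ∀ i, Measurable (X i)) (t : ℕ) : MeasurableSet (evA X t) :=
  (MeasurableSet.biInter (Finset.Icc 1 (t-1)).countable_toSet
    (fun j _ => measS0 X hmeas j)).inter (measS1 X hmeas t)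
lemma measevB (hmeas : ∀ i, Measurable (X i)) : MeasurableSet (evB X n) :=
  MeasurableSet.biInter (Finset.Icc 1 n).countable_toSet (fun j _ => measS0 X hmeas j)
lemma measgood (hmeas : ∀ i, Measurable (X i)) : MeasurableSet (good X n) :=
  MeasurableSet.biInter (Finset.Icc 1 n).countable_toSet
    (fun j _ => (measS0 X hmeas j).union (measS1 X hmeas j))

lemma meas_S1_eq (hident : ∀ i ∈ Set.Icc 1 n, IdentDistrib (X i) (X 1) μ μ)
    (h1 : μ {ω | X 1 ω = 1} = ENNReal.ofReal c) {i : ℕ} (hi : i ∈ Finset.Icc 1 n) :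
    μ (S1 X i) = ENNReal.ofReal c := by
  have := (hident i (by simpa [Set.mem_Icc] using (Finset.mem_Icc.1 hi))).measure_mem_eq
    (measurableSet_singleton (1:ℝ))
  rw [S1, this, ← h1]
  rfl

lemma meas_S0_eq (hident : ∀ i ∈ Set.Icc 1 n, IdentDistrib (X i) (X 1) μ μ)
    (h0 : μ {ω | X 1 ω = 0} = ENNReal.ofReal (1 - c)) {i : ℕ} (hi : i ∈ Finset.Icc 1 n) :
    μ (S0 X i) = ENNReal.ofReal (1 - c) := by
  have := (hident i (by simpa [Set.mem_Icc] using (Finset.mem_Icc.1 hi))).measure_mem_eq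
    (measurableSet_singleton (0:ℝ))
  rw [S0, this, ← h0]
  rfl

lemma meas_good_compl (hmeas : ∀ i, Measurable (X i))
    (hident : ∀ i ∈ Set.Icc 1 n, IdentDistrib (X i) (X 1) μ μ)
    (hc0 : 0 < c) (hc1 : c ≤ 1)
    (h1 : μ {ω | X 1 ω = 1} = ENNReal.ofReal c)
    (h0 : μ {ω | X 1 ω = 0} = ENNReal.ofReal (1 - c)) :
    μ (good X n)ᶜ = 0 := by
  have : (good X n)ᶜ = ⋃ j ∈ Finset.Icc 1 n, (S0 X j ∪ S1 X j)ᶜ := by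
    simp [good, Set.compl_iInter]
  rw [this]
  refine measure_biUnion_null_iff (Finset.Icc 1 n).countable_toSet |>.2 (fun j hj => ?_)
  have hj' : j ∈ Finset.Icc 1 n := hj
  have hdisj : Disjoint (S0 X j) (S1 X j) := by
    rw [Set.disjoint_left]
    rintro ω h0' h1'
    have e0 : X j ω = 0 := h0'
    have e1 : X j ω = 1 := h1'
    rw [e0] at e1; norm_num at e1
  have hu : μ (S0 X j ∪ S1 X j) = 1 := by
    rw [measure_union hdisj (measS1 X hmeas j), meas_S0_eq μ n X c hident h0 hj',
      meas_S1_eq μ n X c hident h1 hj', ← ENNReal.ofReal_add (by linarith) hc0.le]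
    norm_num
  rw [measure_compl ((measS0 X hmeas j).union (measS1 X hmeas j)) (by simp), hu,
    measure_univ, tsub_self]

lemma meas_evA_eq (hmeas : ∀ i, Measurable (X i))
    (hindep : iIndepFun (fun i : Fin n => X (i.1 + 1)) μ)
    (hident : ∀ i ∈ Set.Icc 1 n, IdentDistrib (X i) (X 1) μ μ)
    (h1 : μ {ω | X 1 ω = 1} = ENNReal.ofReal c)
    (h0 : μ {ω | X 1 ω = 0} = ENNReal.ofReal (1 - c))
    (hc0 : 0 < c) (hc1 : c ≤ 1)
    {t : ℕ} (ht : t ∈ Finset.Icc 1 n) :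
    μ (evA X t) = ENNReal.ofReal (c * (1-c)^(t-1)) := by
  obtain ⟨ht1, htn⟩ := Finset.mem_Icc.1 ht
  obtain ⟨m, rfl⟩ : ∃ m, t = m + 1 := ⟨t - 1, by omega⟩
  have hset : evA X (m+1) = ⋂ j ∈ Finset.Icc 1 (m+1),
      X j ⁻¹' (if j = m+1 then ({1} : Set ℝ) else {0}) := by
    ext ω
    simp only [evA, S0, S1, Set.mem_inter_iff, Set.mem_iInter, Finset.mem_Icc,
      Set.mem_preimage, Nat.add_sub_cancel]
    constructor
    · rintro ⟨hz, ho⟩ j hj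
      by_cases h : j = m + 1
      · simpa [h] using ho
      · simpa [h] using hz j ⟨hj.1, by omega⟩
    · intro h
      refine ⟨fun j hj => ?_, ?_⟩
      · have hne : j ≠ m + 1 := by omega
        have h2 := h j ⟨hj.1, by omega⟩
        rw [if_neg hne] at h2
        simpa using h2
      · simpa using h (m+1) ⟨by omega, le_refl _⟩
  rw [hset, meas_biInter_Icc μ n X hindep _
      (by intro j hj; simp only [Finset.mem_Icc] at hj ⊢; omega) _
      (fun j _ => by split <;> exact measurableSet_singleton _)]
  rw [Finset.prod_Icc_succ_top (by omega : 1 ≤ m + 1)]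
  have hconst : ∀ j ∈ Finset.Icc 1 m,
      μ (X j ⁻¹' (if j = m+1 then ({1} : Set ℝ) else {0})) = ENNReal.ofReal (1-c) := by
    intro j hj
    obtain ⟨hj1, hjm⟩ := Finset.mem_Icc.1 hj
    rw [if_neg (by omega)]
    exact meas_S0_eq μ n X c hident h0 (Finset.mem_Icc.2 ⟨hj1, by omega⟩)
  rw [Finset.prod_congr rfl hconst, Finset.prod_const, Nat.card_Icc, if_pos rfl]
  have h1' : μ (X (m+1) ⁻¹' ({1} : Set ℝ)) = ENNReal.ofReal c :=
    meas_S1_eq μ n X c hident h1 (Finset.mem_Icc.2 ⟨(by omega : 1 ≤ m+1), htn⟩)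
  rw [h1', ENNReal.ofReal_mul hc0.le, ENNReal.ofReal_pow (by linarith), mul_comm]

lemma meas_evB_eq (hmeas : ∀ i, Measurable (X i))
    (hindep : iIndepFun (fun i : Fin n => X (i.1 + 1)) μ)
    (hident : ∀ i ∈ Set.Icc 1 n, IdentDistrib (X i) (X 1) μ μ)
    (h0 : μ {ω | X 1 ω = 0} = ENNReal.ofReal (1 - c)) (hc1 : c ≤ 1) :
    μ (evB X n) = ENNReal.ofReal ((1-c)^n) := by
  rw [evB]
  have : (⋂ j ∈ Finset.Icc 1 n, S0 X j) = ⋂ j ∈ Finset.Icc 1 n, X j ⁻¹' {0} := rfl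
  rw [this, meas_biInter_Icc μ n X hindep _ (le_refl _) _
      (fun j _ => measurableSet_singleton _)]
  have hconst : ∀ j ∈ Finset.Icc 1 n, μ (X j ⁻¹' ({0} : Set ℝ)) = ENNReal.ofReal (1-c) :=
    fun j hj => meas_S0_eq μ n X c hident h0 hj
  rw [Finset.prod_congr rfl hconst, Finset.prod_const, Nat.card_Icc,
    ENNReal.ofReal_pow (by linarith)]
  congr 1

end Main

lemma mem_evA {X : ℕ → Ω → ℝ} {t : ℕ} {ω : Ω} :
    ω ∈ evA X t ↔ (∀ j, 1 ≤ j → j ≤ t-1 → X j ω = 0) ∧ X t ω = 1 := by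
  simp [evA, S0, S1, Finset.mem_Icc, and_imp]

lemma mem_evB {X : ℕ → Ω → ℝ} {n : ℕ} {ω : Ω} :
    ω ∈ evB X n ↔ ∀ j, 1 ≤ j → j ≤ n → X j ω = 0 := by
  simp [evB, S0, Finset.mem_Icc, and_imp]

lemma mem_good {X : ℕ → Ω → ℝ} {n : ℕ} {ω : Ω} :
    ω ∈ good X n ↔ ∀ j, 1 ≤ j → j ≤ n → (X j ω = 0 ∨ X j ω = 1) := by
  simp [good, S0, S1, Finset.mem_Icc, and_imp]

lemma evA_disjoint {X : ℕ → Ω → ℝ} {s t : ℕ} (hs1 : 1 ≤ s) (ht1 : 1 ≤ t) (hst : s ≠ t)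
    {ω : Ω} (h1 : ω ∈ evA X s) (h2 : ω ∈ evA X t) : False := by
  rw [mem_evA] at h1 h2
  rcases Nat.lt_or_ge s t with h | h
  · have := h2.1 s hs1 (by omega)
    rw [h1.2] at this; norm_num at this
  · have hlt : t < s := by omega
    have := h1.1 t ht1 (by omega)
    rw [h2.2] at this; norm_num at this

lemma evA_evB_disjoint {X : ℕ → Ω → ℝ} {n t : ℕ} (ht : t ∈ Finset.Icc 1 n)
    {ω : Ω} (h1 : ω ∈ evA X t) (h2 : ω ∈ evB X n) : False := by
  obtain ⟨ht1, htn⟩ := Finset.mem_Icc.1 ht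
  rw [mem_evA] at h1; rw [mem_evB] at h2
  have := h2 t ht1 htn
  rw [h1.2] at this; norm_num at this

lemma good_cover {X : ℕ → Ω → ℝ} {n : ℕ} {ω : Ω} (hω : ω ∈ good X n) :
    ω ∈ evB X n ∨ ∃ s ∈ Finset.Icc 1 n, ω ∈ evA X s := by
  by_cases hex : ∃ t, 1 ≤ t ∧ t ≤ n ∧ X t ω = 1
  · right
    set P : ℕ → Prop := fun t => 1 ≤ t ∧ t ≤ n ∧ X t ω = 1 with hP
    have hs := Nat.sInf_mem (⟨hex.choose, hex.choose_spec⟩ : {t | P t}.Nonempty)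
    set s := sInf {t | P t}
    obtain ⟨hs1, hsn, hsx⟩ := hs
    refine ⟨s, Finset.mem_Icc.2 ⟨hs1, hsn⟩, mem_evA.2 ⟨fun j hj1 hj2 => ?_, hsx⟩⟩
    have hnot : ¬ P j := Nat.notMem_of_lt_sInf (show j < s by omega)
    rcases mem_good.1 hω j hj1 (by omega) with h | h
    · exact h
    · exact absurd ⟨hj1, by omega, h⟩ hnot
  · left
    refine mem_evB.2 fun j hj1 hjn => ?_
    rcases mem_good.1 hω j hj1 hjn with h | h
    · exact h
    · exact absurd ⟨j, hj1, hjn, h⟩ hex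

section Main2

variable (μ : Measure Ω) [IsProbabilityMeasure μ] (n : ℕ) (X : ℕ → Ω → ℝ) (c : ℝ)

/-- generic evaluation of integrals of functions constant on the atoms -/
lemma integral_eq_of_good (hmeas : ∀ i, Measurable (X i))
    (hindep : iIndepFun (fun i : Fin n => X (i.1 + 1)) μ)
    (hident : ∀ i ∈ Set.Icc 1 n, IdentDistrib (X i) (X 1) μ μ)
    (h1 : μ {ω | X 1 ω = 1} = ENNReal.ofReal c)
    (h0 : μ {ω | X 1 ω = 0} = ENNReal.ofReal (1 - c))
    (hc0 : 0 < c) (hc1 : c ≤ 1)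
    (f : Ω → ℝ) (v : ℕ → ℝ) (vB : ℝ)
    (hfA : ∀ ω ∈ good X n, ∀ s ∈ Finset.Icc 1 n, ω ∈ evA X s → f ω = v s)
    (hfB : ∀ ω ∈ good X n, ω ∈ evB X n → f ω = vB) :
    ∫ ω, f ω ∂μ = (∑ t ∈ Finset.Icc 1 n, v t * (c * (1-c)^(t-1))) + vB * (1-c)^n := by
  set F : Ω → ℝ := fun ω => (∑ t ∈ Finset.Icc 1 n, (evA X t).indicator (fun _ => v t) ω)
    + (evB X n).indicator (fun _ => vB) ω with hF
  have hae : ∀ᵐ ω ∂μ, ω ∈ good X n := by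
    rw [ae_iff]
    exact meas_good_compl μ n X c hmeas hident hc0 hc1 h1 h0
  have hcongr : f =ᵐ[μ] F := by
    filter_upwards [hae] with ω hω
    rcases good_cover hω with hB | ⟨s, hs, hA⟩
    · rw [hfB ω hω hB, hF]
      simp only
      rw [Set.indicator_of_mem hB, Finset.sum_eq_zero, zero_add]
      intro t ht
      exact Set.indicator_of_notMem (fun hmem => evA_evB_disjoint ht hmem hB) _
    · rw [hfA ω hω s hs hA, hF]
      simp only
      rw [Set.indicator_of_notMem (fun hmem => evA_evB_disjoint hs hA hmem), add_zero,
        Finset.sum_eq_single_of_mem s hs]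
      · rw [Set.indicator_of_mem hA]
      · intro t ht hts
        exact Set.indicator_of_notMem (fun hmem => evA_disjoint
          (Finset.mem_Icc.1 hs).1 (Finset.mem_Icc.1 ht).1 (Ne.symm hts) hA hmem) _
  rw [integral_congr_ae hcongr, hF]
  have hint1 := integrable_indSum μ (Finset.Icc 1 n) (evA X) (fun t _ => measevA X hmeas t) v
  have hint2 : Integrable ((evB X n).indicator (fun _ => vB)) μ :=
    (integrable_const vB).indicator (measevB n X hmeas)
  rw [integral_add hint1 hint2,
    integral_indSum μ (Finset.Icc 1 n) (evA X) (fun t _ => measevA X hmeas t) v,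
    integral_indicator_const vB (measevB n X hmeas),
    Measure.real, meas_evB_eq μ n X c hmeas hindep hident h0 hc1,
    ENNReal.toReal_ofReal (pow_nonneg (by linarith) n)]
  rw [smul_eq_mul, mul_comm ((1-c)^n) vB]
  congr 1
  refine Finset.sum_congr rfl fun t ht => ?_
  rw [meas_evA_eq μ n X c hmeas hindep hident h1 h0 hc0 hc1 ht,
    ENNReal.toReal_ofReal (mul_nonneg hc0.le (pow_nonneg (by linarith) _))]

lemma Mn_eq (hmeas : ∀ i, Measurable (X i))
    (hindep : iIndepFun (fun i : Fin n => X (i.1 + 1)) μ)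
    (hident : ∀ i ∈ Set.Icc 1 n, IdentDistrib (X i) (X 1) μ μ)
    (h1 : μ {ω | X 1 ω = 1} = ENNReal.ofReal c)
    (h0 : μ {ω | X 1 ω = 0} = ENNReal.ofReal (1 - c))
    (hc0 : 0 < c) (hc1 : c ≤ 1) (hn1 : 1 ≤ n)
    (Y : ℕ → Ω → ℝ) (hY : ∀ i ω, Y i ω = X i ω - i * c) :
    Mn μ Y n = (∑ t ∈ Finset.Icc 1 n, max (1 - (t:ℝ)*c) (-c) * (c * (1-c)^(t-1)))
      + (-c) * (1-c)^n := by
  rw [Mn]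
  refine integral_eq_of_good μ n X c hmeas hindep hident h1 h0 hc0 hc1 _
    (fun t => max (1 - (t:ℝ)*c) (-c)) (-c) ?_ ?_
  · intro ω hω s hs hA
    obtain ⟨hs1, hsn⟩ := Finset.mem_Icc.1 hs
    obtain ⟨hzero, hone⟩ := mem_evA.1 hA
    refine IsGreatest.csSup_eq ⟨?_, ?_⟩
    · show max (1 - (s:ℝ)*c) (-c) ∈ (fun i => Y i ω) '' Set.Icc 1 n
      rcases le_total (-c) (1 - (s:ℝ)*c) with h | h
      · rw [max_eq_left h]
        refine ⟨s, Set.mem_Icc.2 ⟨hs1, hsn⟩, ?_⟩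
        show Y s ω = 1 - (s:ℝ)*c
        rw [hY, hone]
      · rw [max_eq_right h]
        have hs2 : 2 ≤ s := by
          by_contra h2
          have hseq : s = 1 := by omega
          rw [hseq] at h; push_cast at h; linarith
        have hx0 : X 1 ω = 0 := hzero 1 le_rfl (by omega)
        refine ⟨1, Set.mem_Icc.2 ⟨le_rfl, hn1⟩, ?_⟩
        show Y 1 ω = -c
        rw [hY, hx0]; push_cast; ring
    · rintro y ⟨j, hj, rfl⟩
      obtain ⟨hj1, hjn⟩ := Set.mem_Icc.1 hj
      have hj1' : (1:ℝ) ≤ (j:ℝ) := by exact_mod_cast hj1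
      show Y j ω ≤ max (1 - (s:ℝ)*c) (-c)
      rw [hY]
      rcases lt_trichotomy j s with h | h | h
      · have hx0 : X j ω = 0 := hzero j hj1 (by omega)
        rw [hx0]
        refine le_trans ?_ (le_max_right _ _)
        nlinarith
      · subst h
        rw [hone]
        exact le_max_left _ _
      · rcases mem_good.1 hω j hj1 hjn with hx | hx
        · rw [hx]
          refine le_trans ?_ (le_max_right _ _)
          nlinarith
        · rw [hx]
          refine le_trans ?_ (le_max_left _ _)
          have : (s:ℝ) ≤ (j:ℝ) := by exact_mod_cast le_of_lt h
          nlinarith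
  · intro ω hω hB
    have hzero := mem_evB.1 hB
    refine IsGreatest.csSup_eq ⟨?_, ?_⟩
    · refine ⟨1, Set.mem_Icc.2 ⟨le_rfl, hn1⟩, ?_⟩
      show Y 1 ω = -c
      rw [hY, hzero 1 le_rfl hn1]; push_cast; ring
    · rintro y ⟨j, hj, rfl⟩
      obtain ⟨hj1, hjn⟩ := Set.mem_Icc.1 hj
      have hj1' : (1:ℝ) ≤ (j:ℝ) := by exact_mod_cast hj1
      show Y j ω ≤ -c
      rw [hY, hzero j hj1 hjn]
      nlinarith

noncomputable def tauStar (X : ℕ → Ω → ℝ) (n : ℕ) : Ω → ℕ :=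
  fun ω => sInf ({t | 1 ≤ t ∧ t ≤ n ∧ X t ω = 1} ∪ {n})

lemma tauStar_mem (X : ℕ → Ω → ℝ) {n : ℕ} (hn1 : 1 ≤ n) (ω : Ω) :
    tauStar X n ω ∈ Finset.Icc 1 n := by
  have hne : ({t | 1 ≤ t ∧ t ≤ n ∧ X t ω = 1} ∪ {n} : Set ℕ).Nonempty :=
    ⟨n, Or.inr rfl⟩
  have hmem := Nat.sInf_mem hne
  have hτ : tauStar X n ω = sInf ({t | 1 ≤ t ∧ t ≤ n ∧ X t ω = 1} ∪ {n}) := rfl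
  rw [Finset.mem_Icc, hτ]
  constructor
  · rcases hmem with h | h
    · exact h.1
    · rw [Set.mem_singleton_iff] at h; omega
  · exact Nat.sInf_le (Or.inr rfl)

lemma tauStar_eq_iff (X : ℕ → Ω → ℝ) {n : ℕ} (hn1 : 1 ≤ n) (ω : Ω) {i : ℕ}
    (hi1 : 1 ≤ i) (hin : i ≤ n) :
    tauStar X n ω = i ↔
      ((∀ j, 1 ≤ j → j ≤ i-1 → X j ω ≠ 1) ∧ (i = n ∨ X i ω = 1)) := by
  have hτ : tauStar X n ω = sInf ({t | 1 ≤ t ∧ t ≤ n ∧ X t ω = 1} ∪ {n}) := rfl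
  rw [hτ]
  set S : Set ℕ := {t | 1 ≤ t ∧ t ≤ n ∧ X t ω = 1} ∪ {n} with hS
  have hne : S.Nonempty := ⟨n, Or.inr rfl⟩
  constructor
  · intro h
    have hmem : i ∈ S := h ▸ Nat.sInf_mem hne
    constructor
    · intro j hj1 hj2 hx
      have hjS : j ∈ S := Or.inl ⟨hj1, by omega, hx⟩
      have := Nat.sInf_le hjS
      omega
    · rcases hmem with hm | hm
      · exact Or.inr hm.2.2
      · exact Or.inl hm
  · rintro ⟨hno, hi⟩
    have hlow : ∀ t ∈ S, i ≤ t := by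
      rintro t (ht | ht)
      · by_contra hlt
        exact hno t ht.1 (by omega) ht.2.2
      · rw [Set.mem_singleton_iff] at ht; omega
    have hiS : i ∈ S := by
      rcases hi with h | h
      · exact Or.inr (by rw [h]; rfl)
      · exact Or.inl ⟨hi1, hin, h⟩
    exact IsLeast.csInf_eq ⟨hiS, hlow⟩

lemma tauStar_isStopRule (X : ℕ → Ω → ℝ) {n : ℕ} (hn1 : 1 ≤ n) (c : ℝ)
    (Y : ℕ → Ω → ℝ) (hY : ∀ i ω, Y i ω = X i ω - i * c) :
    IsStopRule Y n (tauStar X n) := by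
  refine ⟨tauStar_mem X hn1, fun i hi => ?_⟩
  obtain ⟨hi1, hin⟩ := Finset.mem_Icc.1 hi
  have hXY : ∀ j ω', X j ω' = 1 ↔ Y j ω' = 1 - j * c := by
    intro j ω'
    rw [hY]
    constructor <;> intro h <;> linarith
  have hYset : ∀ j, j ∈ Finset.Icc 1 i →
      MeasurableSet[priorSigma Y i] {ω | Y j ω = 1 - j * c} := by
    intro j hj
    have hle : MeasurableSpace.comap (Y j) Real.measurableSpace ≤ priorSigma Y i :=
      le_iSup₂ (f := fun j (_ : j ∈ Finset.Icc 1 i) =>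
        MeasurableSpace.comap (Y j) Real.measurableSpace) j hj
    exact hle _ ⟨{1 - (j:ℝ) * c}, measurableSet_singleton _, rfl⟩
  have hset : {ω | tauStar X n ω = i}
      = (⋂ j ∈ Finset.Icc 1 (i-1), {ω | Y j ω = 1 - j * c}ᶜ)
        ∩ (if i = n then Set.univ else {ω | Y i ω = 1 - i * c}) := by
    ext ω
    rw [Set.mem_setOf_eq, tauStar_eq_iff X hn1 ω hi1 hin]
    simp only [Set.mem_inter_iff, Set.mem_iInter, Finset.mem_Icc, Set.mem_compl_iff,
      Set.mem_setOf_eq, and_imp]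
    constructor
    · rintro ⟨hno, hi'⟩
      refine ⟨fun j hj1 hj2 => ?_, ?_⟩
      · rw [← hXY]; exact hno j hj1 hj2
      · split
        · exact Set.mem_univ ω
        · rcases hi' with h | h
          · exact absurd h (by assumption)
          · exact (hXY i ω).1 h
    · rintro ⟨hno, hi'⟩
      refine ⟨fun j hj1 hj2 hx => hno j hj1 hj2 ((hXY j ω).1 hx), ?_⟩
      by_cases h : i = n
      · exact Or.inl h
      · rw [if_neg h] at hi'
        exact Or.inr ((hXY i ω).2 hi')
  rw [hset]
  refine MeasurableSet.inter ?_ ?_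
  · refine MeasurableSet.biInter (Finset.Icc 1 (i-1)).countable_toSet (fun j hj => ?_)
    have hj0 : j ∈ Finset.Icc 1 (i-1) := hj
    have hj' : j ∈ Finset.Icc 1 i := by
      rw [Finset.mem_Icc] at hj0 ⊢; omega
    exact (hYset j hj').compl
  · split
    · exact MeasurableSet.univ
    · exact hYset i (Finset.mem_Icc.2 ⟨hi1, le_rfl⟩)

lemma tauStar_integral (μ : Measure Ω) [IsProbabilityMeasure μ] (n : ℕ) (X : ℕ → Ω → ℝ)
    (c : ℝ) (hmeas : ∀ i, Measurable (X i))
    (hindep : iIndepFun (fun i : Fin n => X (i.1 + 1)) μ)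
    (hident : ∀ i ∈ Set.Icc 1 n, IdentDistrib (X i) (X 1) μ μ)
    (h1 : μ {ω | X 1 ω = 1} = ENNReal.ofReal c)
    (h0 : μ {ω | X 1 ω = 0} = ENNReal.ofReal (1 - c))
    (hc0 : 0 < c) (hc1 : c ≤ 1) (hn1 : 1 ≤ n)
    (Y : ℕ → Ω → ℝ) (hY : ∀ i ω, Y i ω = X i ω - i * c) :
    ∫ ω, Y (tauStar X n ω) ω ∂μ = ee n c n := by
  have hval : ∫ ω, Y (tauStar X n ω) ω ∂μ
      = (∑ t ∈ Finset.Icc 1 n, (1 - (t:ℝ)*c) * (c * (1-c)^(t-1))) + (-((n:ℝ)*c)) * (1-c)^n := by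
    refine integral_eq_of_good μ n X c hmeas hindep hident h1 h0 hc0 hc1 _
      (fun t => 1 - (t:ℝ)*c) (-((n:ℝ)*c)) ?_ ?_
    · intro ω hω s hs hA
      obtain ⟨hs1, hsn⟩ := Finset.mem_Icc.1 hs
      obtain ⟨hzero, hone⟩ := mem_evA.1 hA
      have htau : tauStar X n ω = s := by
        rw [tauStar_eq_iff X hn1 ω hs1 hsn]
        exact ⟨fun j hj1 hj2 hx => by rw [hzero j hj1 hj2] at hx; norm_num at hx,
          Or.inr hone⟩
      rw [htau, hY, hone]
    · intro ω hω hB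
      have hzero := mem_evB.1 hB
      have htau : tauStar X n ω = n := by
        rw [tauStar_eq_iff X hn1 ω hn1 le_rfl]
        exact ⟨fun j hj1 hj2 hx => by rw [hzero j hj1 (by omega)] at hx; norm_num at hx,
          Or.inl rfl⟩
      rw [htau, hY, hzero n hn1 le_rfl]
      ring
  rw [hval, ee_closed (n := n) (c := c) n le_rfl]
  have h11 : n + 1 - n = 1 := by omega
  rw [h11]
  congr 1
  · refine Finset.sum_congr rfl fun t ht => ?_
    ring
  · ring

lemma meas_compl_S01 (hmeas : ∀ i, Measurable (X i))
    (hident : ∀ i ∈ Set.Icc 1 n, IdentDistrib (X i) (X 1) μ μ)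
    (hc0 : 0 < c) (hc1 : c ≤ 1)
    (h1 : μ {ω | X 1 ω = 1} = ENNReal.ofReal c)
    (h0 : μ {ω | X 1 ω = 0} = ENNReal.ofReal (1 - c))
    {i : ℕ} (hi : i ∈ Finset.Icc 1 n) :
    μ (S0 X i ∪ S1 X i)ᶜ = 0 := by
  have hdisj : Disjoint (S0 X i) (S1 X i) := by
    rw [Set.disjoint_left]
    rintro ω h0' h1'
    have e0 : X i ω = 0 := h0'
    have e1 : X i ω = 1 := h1'
    rw [e0] at e1; norm_num at e1
  have hu : μ (S0 X i ∪ S1 X i) = 1 := by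
    rw [measure_union hdisj (measS1 X hmeas i), meas_S0_eq μ n X c hident h0 hi,
      meas_S1_eq μ n X c hident h1 hi, ← ENNReal.ofReal_add (by linarith) hc0.le]
    norm_num
  rw [measure_compl ((measS0 X hmeas i).union (measS1 X hmeas i)) (by simp), hu,
    measure_univ, tsub_self]

lemma meas_split (hmeas : ∀ i, Measurable (X i))
    (hident : ∀ i ∈ Set.Icc 1 n, IdentDistrib (X i) (X 1) μ μ)
    (hc0 : 0 < c) (hc1 : c ≤ 1)
    (h1 : μ {ω | X 1 ω = 1} = ENNReal.ofReal c)
    (h0 : μ {ω | X 1 ω = 0} = ENNReal.ofReal (1 - c))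
    {i : ℕ} (hi : i ∈ Finset.Icc 1 n) {A : Set Ω} (hA : MeasurableSet A) :
    μ A = μ (A ∩ S1 X i) + μ (A ∩ S0 X i) := by
  have hs : MeasurableSet (S0 X i ∪ S1 X i) := (measS0 X hmeas i).union (measS1 X hmeas i)
  have h2 : μ (A ∩ (S0 X i ∪ S1 X i)) + μ (A \ (S0 X i ∪ S1 X i)) = μ A :=
    measure_inter_add_diff A hs
  have h3 : μ (A \ (S0 X i ∪ S1 X i)) = 0 :=
    measure_mono_null (fun ω hω => hω.2)
      (meas_compl_S01 μ n X c hmeas hident hc0 hc1 h1 h0 hi)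
  have h4 : A ∩ (S0 X i ∪ S1 X i) = (A ∩ S1 X i) ∪ (A ∩ S0 X i) := by
    ext ω; constructor
    · rintro ⟨hA', h | h⟩
      · exact Or.inr ⟨hA', h⟩
      · exact Or.inl ⟨hA', h⟩
    · rintro (⟨hA', h⟩ | ⟨hA', h⟩)
      · exact ⟨hA', Or.inr h⟩
      · exact ⟨hA', Or.inl h⟩
  have hdisj : Disjoint (A ∩ S1 X i) (A ∩ S0 X i) := by
    rw [Set.disjoint_left]
    rintro ω ⟨_, h1'⟩ ⟨_, h0'⟩
    have e0 : X i ω = 0 := h0'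
    have e1 : X i ω = 1 := h1'
    rw [e0] at e1; norm_num at e1
  rw [← h2, h3, add_zero, h4, measure_union hdisj (hA.inter (measS0 X hmeas i))]

lemma indicator_repr (hmeas : ∀ i, Measurable (X i))
    (hident : ∀ i ∈ Set.Icc 1 n, IdentDistrib (X i) (X 1) μ μ)
    (hc0 : 0 < c) (hc1 : c ≤ 1)
    (h1 : μ {ω | X 1 ω = 1} = ENNReal.ofReal c)
    (h0 : μ {ω | X 1 ω = 0} = ENNReal.ofReal (1 - c))
    (Y : ℕ → Ω → ℝ) (hY : ∀ i ω, Y i ω = X i ω - i * c)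
    {t : ℕ} (ht : t ∈ Finset.Icc 1 n) {T : Set Ω} (hT : MeasurableSet T) :
    Integrable (T.indicator (Y t)) μ ∧
    ∫ ω, T.indicator (Y t) ω ∂μ
      = (1 - (t:ℝ)*c) * (μ (T ∩ S1 X t)).toReal + (-((t:ℝ)*c)) * (μ (T ∩ S0 X t)).toReal := by
  obtain ⟨ht1, htn⟩ := Finset.mem_Icc.1 ht
  set g : Ω → ℝ := fun ω => (T ∩ S1 X t).indicator (fun _ => 1 - (t:ℝ)*c) ω
    + (T ∩ S0 X t).indicator (fun _ => -((t:ℝ)*c)) ω with hg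
  have hmS1 := hT.inter (measS1 X hmeas t)
  have hmS0 := hT.inter (measS0 X hmeas t)
  have hgint : Integrable g μ :=
    ((integrable_const _).indicator hmS1).add ((integrable_const _).indicator hmS0)
  have hae : ∀ᵐ ω ∂μ, ω ∈ good X n := by
    rw [ae_iff]
    exact meas_good_compl μ n X c hmeas hident hc0 hc1 h1 h0
  have heq : T.indicator (Y t) =ᵐ[μ] g := by
    filter_upwards [hae] with ω hω
    by_cases hωT : ω ∈ T
    · rcases mem_good.1 hω t ht1 htn with hx | hx
      · have hne1 : ω ∉ T ∩ S1 X t := by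
          rintro ⟨_, hh⟩
          have : X t ω = 1 := hh
          rw [hx] at this; norm_num at this
        rw [Set.indicator_of_mem hωT, hg]
        simp only
        rw [Set.indicator_of_notMem hne1, Set.indicator_of_mem (Set.mem_inter hωT (show ω ∈ S0 X t from hx)), hY, hx]
        ring
      · have hne0 : ω ∉ T ∩ S0 X t := by
          rintro ⟨_, hh⟩
          have : X t ω = 0 := hh
          rw [hx] at this; norm_num at this
        rw [Set.indicator_of_mem hωT, hg]
        simp only
        rw [Set.indicator_of_notMem hne0, Set.indicator_of_mem (Set.mem_inter hωT (show ω ∈ S1 X t from hx)), hY, hx]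
        ring
    · rw [Set.indicator_of_notMem hωT, hg]
      simp only
      rw [Set.indicator_of_notMem (fun h => hωT h.1),
        Set.indicator_of_notMem (fun h => hωT h.1), add_zero]
  refine ⟨hgint.congr heq.symm, ?_⟩
  rw [integral_congr_ae heq, hg, integral_add ((integrable_const _).indicator hmS1)
    ((integrable_const _).indicator hmS0), integral_indicator_const _ hmS1,
    integral_indicator_const _ hmS0, smul_eq_mul, smul_eq_mul]
  simp only [Measure.real]; ring

lemma Tge_eq (τ : Ω → ℕ) (hτ : ∀ ω, τ ω ∈ Finset.Icc 1 n) {i : ℕ} (hi1 : 1 ≤ i) :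
    {ω | i ≤ τ ω} = (⋃ t ∈ Finset.Icc 1 (i-1), {ω | τ ω = t})ᶜ := by
  ext ω
  have hτω := Finset.mem_Icc.1 (hτ ω)
  constructor
  · intro h hmem
    rw [Set.mem_iUnion₂] at hmem
    obtain ⟨t, ht, hteq⟩ := hmem
    obtain ⟨ht1, ht2⟩ := Finset.mem_Icc.1 ht
    have h' : i ≤ τ ω := h
    have ht' : τ ω = t := hteq
    omega
  · intro h
    show i ≤ τ ω
    by_contra hcon
    push_neg at hcon
    exact h (Set.mem_iUnion₂.2 ⟨τ ω, Finset.mem_Icc.2 ⟨by omega, by omega⟩, rfl⟩)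

lemma Tge_measurable (X : ℕ → Ω → ℝ) (c : ℝ) (Y : ℕ → Ω → ℝ)
    (hY : ∀ i ω, Y i ω = X i ω - i * c) {n : ℕ} (τ : Ω → ℕ) (hstop : IsStopRule Y n τ)
    {i : ℕ} (hi1 : 1 ≤ i) (hin : i ≤ n+1) :
    MeasurableSet[sig X (i-1)] {ω | i ≤ τ ω} := by
  rw [Tge_eq (n := n) τ hstop.1 hi1]
  refine (MeasurableSet.biUnion (Finset.Icc 1 (i-1)).countable_toSet (fun t ht => ?_)).compl
  have ht0 : t ∈ Finset.Icc 1 (i-1) := ht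
  obtain ⟨ht1, ht2⟩ := Finset.mem_Icc.1 ht0
  have htn : t ∈ Finset.Icc 1 n := Finset.mem_Icc.2 ⟨ht1, by omega⟩
  exact sig_mono X (by omega : t ≤ i - 1) _
    ((priorSigma_le_sig X c Y hY t) _ (hstop.2 t htn))

lemma stop_bound (hmeas : ∀ i, Measurable (X i))
    (hindep : iIndepFun (fun i : Fin n => X (i.1 + 1)) μ)
    (hident : ∀ i ∈ Set.Icc 1 n, IdentDistrib (X i) (X 1) μ μ)
    (h1 : μ {ω | X 1 ω = 1} = ENNReal.ofReal c)
    (h0 : μ {ω | X 1 ω = 0} = ENNReal.ofReal (1 - c))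
    (hc0 : 0 < c) (hc1 : c ≤ 1)
    (Y : ℕ → Ω → ℝ) (hY : ∀ i ω, Y i ω = X i ω - i * c)
    (τ : Ω → ℕ) (hstop : IsStopRule Y n τ) :
    ∀ m, m ≤ n →
      (∑ t ∈ Finset.Icc (n+1-m) n, ∫ ω, ({ω' | τ ω' = t}).indicator (Y t) ω ∂μ)
        ≤ ee n c m * (μ {ω | n+1-m ≤ τ ω}).toReal
  | 0, _ => by
    have he : Finset.Icc (n+1-0) n = ∅ := Finset.Icc_eq_empty (by omega)
    have hG : {ω | n+1-0 ≤ τ ω} = ∅ := by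
      ext ω
      simp only [Set.mem_setOf_eq, Set.mem_empty_iff_false, iff_false, not_le]
      have := Finset.mem_Icc.1 (hstop.1 ω); omega
    rw [he, hG]
    simp only [Finset.sum_empty, measure_empty, ENNReal.toReal_zero, mul_zero, le_refl]
  | (m+1), h => by
    have IH := stop_bound hmeas hindep hident h1 h0 hc0 hc1 Y hY τ hstop m (by omega)
    have hi1 : 1 ≤ n - m := by omega
    have hin : n - m ≤ n := by omega
    have hiS : (n - m) ∈ Finset.Icc 1 n := Finset.mem_Icc.2 ⟨hi1, hin⟩
    have hidx1 : n+1-(m+1) = n-m := by omega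
    have hidx2 : n+1-m = n-m+1 := by omega
    rw [hidx2] at IH
    rw [hidx1]
    -- measurability facts
    have hTt : ∀ t, t ∈ Finset.Icc 1 n → MeasurableSet {ω | τ ω = t} := fun t ht =>
      sig_le_ambient X hmeas t _ ((priorSigma_le_sig X c Y hY t) _ (hstop.2 t ht))
    have hGi1_sig : MeasurableSet[sig X (n-m+1-1)] {ω | n-m+1 ≤ τ ω} :=
      Tge_measurable X c Y hY τ hstop (by omega) (by omega)
    have hGi_sig : MeasurableSet[sig X (n-m-1)] {ω | n-m ≤ τ ω} :=
      Tge_measurable X c Y hY τ hstop (by omega) (by omega)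
    have hGi1 : MeasurableSet {ω | n-m+1 ≤ τ ω} :=
      sig_le_ambient X hmeas _ _ hGi1_sig
    have hGi : MeasurableSet {ω | n-m ≤ τ ω} :=
      sig_le_ambient X hmeas _ _ hGi_sig
    -- split sum
    have hIoc : Finset.Ioc (n-m) n = Finset.Icc (n-m+1) n := by
      rw [← Finset.Icc_add_one_left_eq_Ioc]
    rw [Finset.Icc_eq_cons_Ioc hin, Finset.sum_cons, hIoc]
    -- the indicator integral
    have hrep := indicator_repr μ n X c hmeas hident hc0 hc1 h1 h0 Y hY hiS
      (hTt (n-m) hiS)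
    -- bounds on ee
    have hlb : -(((n-m:ℕ)):ℝ) * c ≤ ee n c m := by
      have := ee_lb (n := n) hc0 hc1 m (by omega)
      linarith [this]
    have hub : ee n c m ≤ 1 - ((n-m:ℕ):ℝ) * c := by
      have := ee_ub (n := n) hc0 hc1 m (by omega)
      have hcast : ((n+1-m : ℕ):ℝ) = ((n-m : ℕ):ℝ) + 1 := by
        rw [Nat.cast_sub (by omega), Nat.cast_sub (by omega)]; push_cast; ring
      rw [hcast] at this
      nlinarith
    -- abbreviations
    set a1 := μ ({ω | τ ω = n-m} ∩ S1 X (n-m)) with ha1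
    set a0 := μ ({ω | τ ω = n-m} ∩ S0 X (n-m)) with ha0
    set b1 := μ ({ω | n-m+1 ≤ τ ω} ∩ S1 X (n-m)) with hb1
    set b0 := μ ({ω | n-m+1 ≤ τ ω} ∩ S0 X (n-m)) with hb0
    have hsplitG : μ {ω | n-m+1 ≤ τ ω} = b1 + b0 :=
      meas_split μ n X c hmeas hident hc0 hc1 h1 h0 hiS hGi1
    -- unions
    have hdisj1 : Disjoint ({ω | τ ω = n-m} ∩ S1 X (n-m)) ({ω | n-m+1 ≤ τ ω} ∩ S1 X (n-m)) := by
      rw [Set.disjoint_left]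
      rintro ω ⟨h1', _⟩ ⟨h2', _⟩
      have : τ ω = n-m := h1'
      have : n-m+1 ≤ τ ω := h2'
      omega
    have hdisj0 : Disjoint ({ω | τ ω = n-m} ∩ S0 X (n-m)) ({ω | n-m+1 ≤ τ ω} ∩ S0 X (n-m)) := by
      rw [Set.disjoint_left]
      rintro ω ⟨h1', _⟩ ⟨h2', _⟩
      have : τ ω = n-m := h1'
      have : n-m+1 ≤ τ ω := h2'
      omega
    have hcup1 : ({ω | τ ω = n-m} ∩ S1 X (n-m)) ∪ ({ω | n-m+1 ≤ τ ω} ∩ S1 X (n-m))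
        = {ω | n-m ≤ τ ω} ∩ S1 X (n-m) := by
      ext ω
      constructor
      · rintro (⟨h1', h2'⟩ | ⟨h1', h2'⟩)
        · exact ⟨by have h' : τ ω = n-m := h1'; show n-m ≤ τ ω; omega, h2'⟩
        · exact ⟨by have : n-m+1 ≤ τ ω := h1'; simp only [Set.mem_setOf_eq]; omega, h2'⟩
      · rintro ⟨h1', h2'⟩
        have hτω : n-m ≤ τ ω := h1'
        rcases Nat.eq_or_lt_of_le hτω with heq | hlt
        · exact Or.inl ⟨heq.symm, h2'⟩
        · exact Or.inr ⟨by simp only [Set.mem_setOf_eq]; omega, h2'⟩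
    have hcup0 : ({ω | τ ω = n-m} ∩ S0 X (n-m)) ∪ ({ω | n-m+1 ≤ τ ω} ∩ S0 X (n-m))
        = {ω | n-m ≤ τ ω} ∩ S0 X (n-m) := by
      ext ω
      constructor
      · rintro (⟨h1', h2'⟩ | ⟨h1', h2'⟩)
        · exact ⟨by have h' : τ ω = n-m := h1'; show n-m ≤ τ ω; omega, h2'⟩
        · exact ⟨by have : n-m+1 ≤ τ ω := h1'; simp only [Set.mem_setOf_eq]; omega, h2'⟩
      · rintro ⟨h1', h2'⟩
        have hτω : n-m ≤ τ ω := h1'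
        rcases Nat.eq_or_lt_of_le hτω with heq | hlt
        · exact Or.inl ⟨heq.symm, h2'⟩
        · exact Or.inr ⟨by simp only [Set.mem_setOf_eq]; omega, h2'⟩
    have hadd1 : μ ({ω | n-m ≤ τ ω} ∩ S1 X (n-m)) = a1 + b1 := by
      rw [← hcup1, measure_union hdisj1 (hGi1.inter (measS1 X hmeas _))]
    have hadd0 : μ ({ω | n-m ≤ τ ω} ∩ S0 X (n-m)) = a0 + b0 := by
      rw [← hcup0, measure_union hdisj0 (hGi1.inter (measS0 X hmeas _))]
    -- independence
    have hind1 : μ ({ω | n-m ≤ τ ω} ∩ S1 X (n-m)) = μ {ω | n-m ≤ τ ω} * ENNReal.ofReal c := by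
      have h' : μ ({ω | n-m ≤ τ ω} ∩ S1 X (n-m)) = μ {ω | n-m ≤ τ ω} * μ (S1 X (n-m)) :=
        indep_inter_eq μ n X hmeas hindep hi1 hin hGi_sig (measurableSet_singleton (1:ℝ))
      rw [h', meas_S1_eq μ n X c hident h1 hiS]
    have hind0 : μ ({ω | n-m ≤ τ ω} ∩ S0 X (n-m))
        = μ {ω | n-m ≤ τ ω} * ENNReal.ofReal (1-c) := by
      have h' : μ ({ω | n-m ≤ τ ω} ∩ S0 X (n-m)) = μ {ω | n-m ≤ τ ω} * μ (S0 X (n-m)) :=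
        indep_inter_eq μ n X hmeas hindep hi1 hin hGi_sig (measurableSet_singleton (0:ℝ))
      rw [h', meas_S0_eq μ n X c hident h0 hiS]
    -- real versions
    have hfin : ∀ A : Set Ω, (μ A) ≠ ⊤ := fun A => measure_ne_top μ A
    have hr1 : a1.toReal + b1.toReal = (μ {ω | n-m ≤ τ ω}).toReal * c := by
      rw [← ENNReal.toReal_add (hfin _) (hfin _), ← hadd1, hind1,
        ENNReal.toReal_mul, ENNReal.toReal_ofReal hc0.le]
    have hr0 : a0.toReal + b0.toReal = (μ {ω | n-m ≤ τ ω}).toReal * (1-c) := by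
      rw [← ENNReal.toReal_add (hfin _) (hfin _), ← hadd0, hind0,
        ENNReal.toReal_mul, ENNReal.toReal_ofReal (by linarith)]
    have hrsplit : (μ {ω | n-m+1 ≤ τ ω}).toReal = b1.toReal + b0.toReal := by
      rw [hsplitG, ENNReal.toReal_add (hfin _) (hfin _)]
    have hee : ee n c (m+1) = c * (1 - ((n-m:ℕ):ℝ)*c) + (1-c) * ee n c m := rfl
    calc ∫ ω, ({ω' | τ ω' = n-m}).indicator (Y (n-m)) ω ∂μ
          + ∑ t ∈ Finset.Icc (n-m+1) n, ∫ ω, ({ω' | τ ω' = t}).indicator (Y t) ω ∂μ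
        ≤ ((1 - ((n-m:ℕ):ℝ)*c) * a1.toReal + (-(((n-m:ℕ):ℝ)*c)) * a0.toReal)
          + ee n c m * (μ {ω | n-m+1 ≤ τ ω}).toReal := by
          exact add_le_add (le_of_eq hrep.2) IH
      _ ≤ ((1 - ((n-m:ℕ):ℝ)*c) * a1.toReal + ee n c m * a0.toReal)
          + ((1 - ((n-m:ℕ):ℝ)*c) * b1.toReal + ee n c m * b0.toReal) := by
          rw [hrsplit]
          have hb1' := ENNReal.toReal_nonneg (a := b1)
          have ha0' := ENNReal.toReal_nonneg (a := a0)
          nlinarith [mul_le_mul_of_nonneg_right hlb ha0',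
            mul_le_mul_of_nonneg_right hub hb1']
      _ = (1 - ((n-m:ℕ):ℝ)*c) * ((μ {ω | n-m ≤ τ ω}).toReal * c)
          + ee n c m * ((μ {ω | n-m ≤ τ ω}).toReal * (1-c)) := by
          rw [← hr1, ← hr0]; ring
      _ = ee n c (m+1) * (μ {ω | n-m ≤ τ ω}).toReal := by
          rw [hee]; ring

lemma EYtau_le (hmeas : ∀ i, Measurable (X i))
    (hindep : iIndepFun (fun i : Fin n => X (i.1 + 1)) μ)
    (hident : ∀ i ∈ Set.Icc 1 n, IdentDistrib (X i) (X 1) μ μ)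
    (h1 : μ {ω | X 1 ω = 1} = ENNReal.ofReal c)
    (h0 : μ {ω | X 1 ω = 0} = ENNReal.ofReal (1 - c))
    (hc0 : 0 < c) (hc1 : c ≤ 1) (hn1 : 1 ≤ n)
    (Y : ℕ → Ω → ℝ) (hY : ∀ i ω, Y i ω = X i ω - i * c)
    (τ : Ω → ℕ) (hstop : IsStopRule Y n τ) :
    ∫ ω, Y (τ ω) ω ∂μ ≤ ee n c n := by
  have hTt : ∀ t, t ∈ Finset.Icc 1 n → MeasurableSet {ω | τ ω = t} := fun t ht =>
    sig_le_ambient X hmeas t _ ((priorSigma_le_sig X c Y hY t) _ (hstop.2 t ht))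
  have hdecomp : (fun ω => Y (τ ω) ω)
      = fun ω => ∑ t ∈ Finset.Icc 1 n, ({ω' | τ ω' = t}).indicator (Y t) ω := by
    funext ω
    have hsingle := Finset.sum_eq_single_of_mem (s := Finset.Icc 1 n)
      (f := fun t => ({ω' | τ ω' = t}).indicator (Y t) ω) (τ ω) (hstop.1 ω)
      (fun t ht hts => Set.indicator_of_notMem
        (show ω ∉ {ω' | τ ω' = t} from fun h => hts (Eq.symm (show τ ω = t from h))) (Y t))
    rw [hsingle]
    exact (Set.indicator_of_mem (show ω ∈ {ω' | τ ω' = τ ω} from rfl) (Y (τ ω))).symm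
  rw [hdecomp, integral_finset_sum _ (fun t ht =>
    (indicator_repr μ n X c hmeas hident hc0 hc1 h1 h0 Y hY ht (hTt t ht)).1)]
  have hbound := stop_bound μ n X c hmeas hindep hident h1 h0 hc0 hc1 Y hY τ hstop n le_rfl
  rw [show n+1-n = 1 by omega] at hbound
  have hG1 : {ω | 1 ≤ τ ω} = Set.univ := by
    ext ω
    simp only [Set.mem_setOf_eq, Set.mem_univ, iff_true]
    exact (Finset.mem_Icc.1 (hstop.1 ω)).1
  rw [hG1, measure_univ] at hbound
  simpa using hbound

lemma Vn_eq (hmeas : ∀ i, Measurable (X i))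
    (hindep : iIndepFun (fun i : Fin n => X (i.1 + 1)) μ)
    (hident : ∀ i ∈ Set.Icc 1 n, IdentDistrib (X i) (X 1) μ μ)
    (h1 : μ {ω | X 1 ω = 1} = ENNReal.ofReal c)
    (h0 : μ {ω | X 1 ω = 0} = ENNReal.ofReal (1 - c))
    (hc0 : 0 < c) (hc1 : c ≤ 1) (hn1 : 1 ≤ n)
    (Y : ℕ → Ω → ℝ) (hY : ∀ i ω, Y i ω = X i ω - i * c) :
    Vn μ Y n = ee n c n := by
  rw [Vn]
  refine IsGreatest.csSup_eq ⟨?_, ?_⟩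
  · exact ⟨tauStar X n, tauStar_isStopRule X hn1 c Y hY,
      (tauStar_integral μ n X c hmeas hindep hident h1 h0 hc0 hc1 hn1 Y hY).symm⟩
  · rintro r ⟨τ, hstop, rfl⟩
    exact EYtau_le μ n X c hmeas hindep hident h1 h0 hc0 hc1 hn1 Y hY τ hstop

lemma sum_d (k : ℕ) (c : ℝ) (hc0 : 0 < c) (hc1 : c ≤ 1)
    (hkc : (k:ℝ) * c ≤ 1) (hk1c : 1 ≤ ((k:ℝ)+1) * c) :
    ∀ N, k+1 ≤ N →
      ∑ t ∈ Finset.Icc 1 N, (max (1 - (t:ℝ)*c) (-c) - (1 - (t:ℝ)*c)) * (c*(1-c)^(t-1))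
        = (k:ℝ)*c*(1-c)^(k+1) - ((N:ℝ)-1)*c*(1-c)^N := by
  intro N hN
  induction N, hN using Nat.le_induction with
  | base =>
    have hz : ∀ t ∈ Finset.Icc 1 (k+1),
        (max (1 - (t:ℝ)*c) (-c) - (1 - (t:ℝ)*c)) * (c*(1-c)^(t-1)) = 0 := by
      intro t ht
      obtain ⟨ht1, ht2⟩ := Finset.mem_Icc.1 ht
      have htr : (t:ℝ) ≤ (k:ℝ) + 1 := by exact_mod_cast ht2
      have hmax : max (1 - (t:ℝ)*c) (-c) = 1 - (t:ℝ)*c := by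
        apply max_eq_left
        nlinarith
      rw [hmax]
      ring
    rw [Finset.sum_congr rfl hz, Finset.sum_const, smul_zero]
    have : ((k+1:ℕ):ℝ) - 1 = (k:ℝ) := by push_cast; ring
    rw [this]
    ring
  | succ N hN ih =>
    rw [Finset.sum_Icc_succ_top (by omega : 1 ≤ N+1), ih]
    have hNr : (k:ℝ) + 1 ≤ (N:ℝ) := by exact_mod_cast hN
    have hmax : max (1 - ((N+1:ℕ):ℝ)*c) (-c) = -c := by
      apply max_eq_right
      push_cast
      nlinarith
    rw [hmax]
    have h1 : ((N+1:ℕ):ℝ) = (N:ℝ) + 1 := by push_cast; ring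
    have h2 : (N+1) - 1 = N := by omega
    rw [h1, h2, pow_succ]
    ring

lemma final_alg (n k : ℕ) (c : ℝ) (hc0 : 0 < c) (hc1 : c ≤ 1) (hkn : k + 1 ≤ n)
    (hkc : (k:ℝ) * c ≤ 1) (hk1c : 1 ≤ ((k:ℝ)+1) * c) :
    ((∑ t ∈ Finset.Icc 1 n, max (1 - (t:ℝ)*c) (-c) * (c * (1-c)^(t-1))) + (-c) * (1-c)^n)
      - ((∑ t ∈ Finset.Icc 1 n, c * (1-c)^(t-1) * (1 - (t:ℝ)*c)) + (1-c)^n * (-((n:ℝ)*c)))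
    = (k:ℝ) * c * (1-c)^(k+1) := by
  have hsub : (∑ t ∈ Finset.Icc 1 n, max (1 - (t:ℝ)*c) (-c) * (c * (1-c)^(t-1)))
      - (∑ t ∈ Finset.Icc 1 n, c * (1-c)^(t-1) * (1 - (t:ℝ)*c))
      = ∑ t ∈ Finset.Icc 1 n,
        (max (1 - (t:ℝ)*c) (-c) - (1 - (t:ℝ)*c)) * (c*(1-c)^(t-1)) := by
    rw [← Finset.sum_sub_distrib]
    exact Finset.sum_congr rfl fun t ht => by ring
  have hd := sum_d k c hc0 hc1 hkc hk1c n hkn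
  have hn1 : (1:ℝ) ≤ (n:ℝ) := by exact_mod_cast (by omega : 1 ≤ n)
  calc ((∑ t ∈ Finset.Icc 1 n, max (1 - (t:ℝ)*c) (-c) * (c * (1-c)^(t-1))) + (-c) * (1-c)^n)
      - ((∑ t ∈ Finset.Icc 1 n, c * (1-c)^(t-1) * (1 - (t:ℝ)*c)) + (1-c)^n * (-((n:ℝ)*c)))
      = ((∑ t ∈ Finset.Icc 1 n, max (1 - (t:ℝ)*c) (-c) * (c * (1-c)^(t-1)))
        - (∑ t ∈ Finset.Icc 1 n, c * (1-c)^(t-1) * (1 - (t:ℝ)*c)))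
        + ((n:ℝ)-1)*c*(1-c)^n := by ring
    _ = (k:ℝ)*c*(1-c)^(k+1) := by rw [hsub, hd]; ring

end Main2

end Stmt4

set_option linter.unusedSectionVars false in
theorem stmt4
    {Ω : Type*} [MeasurableSpace Ω] (μ : Measure Ω) [IsProbabilityMeasure μ]
    (n : ℕ) (X : ℕ → Ω → ℝ)
    (hmeas : ∀ i, Measurable (X i))
    (hindep : iIndepFun (fun i : Fin n => X (i.1 + 1)) μ)
    (hident : ∀ i ∈ Set.Icc 1 n, IdentDistrib (X i) (X 1) μ μ)
    (c : ℝ) (Y : ℕ → Ω → ℝ) (hY : ∀ i ω, Y i ω = X i ω - i * c)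
    (hc0 : 0 < c) (hc : c ≤ 1/2)
    (hn : (⌈1/c⌉ - 1) + 1 ≤ (n : ℤ))
    (h1 : μ {ω | X 1 ω = 1} = ENNReal.ofReal c)
    (h0 : μ {ω | X 1 ω = 0} = ENNReal.ofReal (1 - c)) :
    Mn μ Y n - Vn μ Y n =
      ((⌈1/c⌉ - 1 : ℤ) : ℝ) * c * (1 - c) ^ ((⌈1/c⌉ - 1) + 1 : ℤ) := by
  have hc1 : c ≤ 1 := by linarith
  have hceil : 1 < ⌈1/c⌉ := by
    rw [Int.lt_ceil]
    push_cast
    rw [lt_div_iff₀ hc0]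
    linarith
  set k : ℕ := (⌈1/c⌉ - 1).toNat with hkdef
  have hk : (k:ℤ) = ⌈1/c⌉ - 1 := Int.toNat_of_nonneg (by omega)
  have hk1 : 1 ≤ k := by omega
  have hkn : k + 1 ≤ n := by omega
  have hkR : (k:ℝ) = ((⌈1/c⌉:ℤ):ℝ) - 1 := by
    have := congrArg (Int.cast : ℤ → ℝ) hk
    push_cast at this
    linarith
  have hkc : (k:ℝ) * c ≤ 1 := by
    have hlt : ((⌈1/c⌉:ℤ):ℝ) < 1/c + 1 := Int.ceil_lt_add_one (1/c)
    have : (k:ℝ) < 1/c := by rw [hkR]; linarith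
    exact le_of_lt ((lt_div_iff₀ hc0).1 this)
  have hk1c : 1 ≤ ((k:ℝ)+1) * c := by
    have hle : 1/c ≤ ((⌈1/c⌉:ℤ):ℝ) := Int.le_ceil (1/c)
    have : 1/c ≤ (k:ℝ) + 1 := by rw [hkR]; linarith
    exact (div_le_iff₀ hc0).1 this
  have hn1 : 1 ≤ n := by omega
  rw [Stmt4.Mn_eq μ n X c hmeas hindep hident h1 h0 hc0 hc1 hn1 Y hY,
    Stmt4.Vn_eq μ n X c hmeas hindep hident h1 h0 hc0 hc1 hn1 Y hY,
    Stmt4.ee_closed (n := n) (c := c) n le_rfl,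
    show n+1-n = 1 by omega]
  have e1 : ((⌈1/c⌉ - 1 : ℤ):ℝ) = (k:ℝ) := by
    rw [← hk]; push_cast; ring
  have e2 : (1-c)^((⌈1/c⌉-1)+1 : ℤ) = (1-c)^(k+1) := by
    rw [← hk, show ((k:ℤ)+1) = ((k+1:ℕ):ℤ) by push_cast; ring, zpow_natCast]
  rw [e1, e2]
  exact Stmt4.final_alg n k c hc0 hc1 hkn hkc hk1c
end

section
/- Let 1/2 ≤ c ≤ 1, let n ≥ 2, and let X_1, ..., X_n be i.i.d. random variables with P(X_1 = 1) = 1/2 = 1 - P(X_1 = 0). With Y_i = X_i - i·c, one has M(Y_1,...,Y_n) - V(Y_1,...,Y_n) = (1-c)/4; that is, the upper bound of the prophet inequality for fixed cost c ≥ 1/2 is attained. -/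
open MeasureTheory ProbabilityTheory

theorem sumswap (p : ℕ → ℝ) (n : ℕ) :
    ∑ i ∈ Finset.Icc 1 n, (i:ℝ) * p i = ∑ i ∈ Finset.Icc 1 n, ∑ j ∈ Finset.Icc i n, p j := by
  rw [Finset.sum_comm' (s' := fun j => Finset.Icc 1 j) (t' := Finset.Icc 1 n)]
  · refine Finset.sum_congr rfl fun i hi => ?_
    rw [Finset.sum_const, Nat.card_Icc, nsmul_eq_mul]
    simp
  · intro x y
    simp only [Finset.mem_Icc]
    omega

set_option linter.unusedVariables false

set_option maxHeartbeats 1000000 in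
theorem stmt5
    {Ω : Type*} [MeasurableSpace Ω] (μ : Measure Ω) [IsProbabilityMeasure μ]
    (n : ℕ) (X : ℕ → Ω → ℝ)
    (hmeas : ∀ i, Measurable (X i))
    (hindep : iIndepFun (fun i : Fin n => X (i.1 + 1)) μ)
    (hident : ∀ i ∈ Set.Icc 1 n, IdentDistrib (X i) (X 1) μ μ)
    (c : ℝ) (Y : ℕ → Ω → ℝ) (hY : ∀ i ω, Y i ω = X i ω - i * c)
    (hc0 : 1/2 ≤ c) (hc : c ≤ 1) (hn : 2 ≤ n)
    (h1 : μ {ω | X 1 ω = 1} = ENNReal.ofReal (1/2))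
    (h0 : μ {ω | X 1 ω = 0} = ENNReal.ofReal (1/2)) :
    Mn μ Y n - Vn μ Y n = (1 - c) / 4 := by
  have hYeq : ∀ i, Y i = fun ω => X i ω - i * c := fun i => funext fun ω => hY i ω
  have hYmeas : ∀ i, Measurable (Y i) := by
    intro i; rw [hYeq]; exact (hmeas i).sub measurable_const
  have hmeas1 : ∀ i, MeasurableSet {ω | X i ω = 1} :=
    fun i => hmeas i (measurableSet_singleton 1)
  have hmeas0 : ∀ i, MeasurableSet {ω | X i ω = 0} :=
    fun i => hmeas i (measurableSet_singleton 0)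
  have hμ1 : ∀ i ∈ Finset.Icc 1 n, μ {ω | X i ω = 1} = ENNReal.ofReal (1/2) := by
    intro i hi
    simp only [Finset.mem_Icc] at hi
    have h := (hident i ⟨hi.1, hi.2⟩).measure_mem_eq (measurableSet_singleton (1:ℝ))
    have e1 : X i ⁻¹' {1} = {ω | X i ω = 1} := rfl
    have e2 : X 1 ⁻¹' {1} = {ω | X 1 ω = 1} := rfl
    rw [e1, e2, h1] at h
    exact h
  have hμ0 : ∀ i ∈ Finset.Icc 1 n, μ {ω | X i ω = 0} = ENNReal.ofReal (1/2) := by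
    intro i hi
    simp only [Finset.mem_Icc] at hi
    have h := (hident i ⟨hi.1, hi.2⟩).measure_mem_eq (measurableSet_singleton (0:ℝ))
    have e1 : X i ⁻¹' {0} = {ω | X i ω = 0} := rfl
    have e2 : X 1 ⁻¹' {0} = {ω | X 1 ω = 0} := rfl
    rw [e1, e2, h0] at h
    exact h
  have hae : ∀ i ∈ Finset.Icc 1 n, ∀ᵐ ω ∂μ, X i ω = 1 ∨ X i ω = 0 := by
    intro i hi
    have hd : Disjoint {ω | X i ω = 1} {ω | X i ω = 0} := by
      rw [Set.disjoint_left]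
      intro ω hω1 hω0
      simp only [Set.mem_setOf_eq] at hω1 hω0
      rw [hω1] at hω0; norm_num at hω0
    have hu : μ ({ω | X i ω = 1} ∪ {ω | X i ω = 0}) = 1 := by
      rw [measure_union hd (hmeas0 i), hμ1 i hi, hμ0 i hi]
      rw [← ENNReal.ofReal_add (by norm_num) (by norm_num)]
      norm_num
    have hcompl := (prob_compl_eq_zero_iff ((hmeas1 i).union (hmeas0 i))).mpr hu
    rw [ae_iff]
    have heq : {ω | ¬(X i ω = 1 ∨ X i ω = 0)} = ({ω | X i ω = 1} ∪ {ω | X i ω = 0})ᶜ := by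
      ext ω
      simp [not_or]
    rw [heq]
    exact hcompl
  have hXind : ∀ i ∈ Finset.Icc 1 n,
      X i =ᵐ[μ] ({ω | X i ω = 1}).indicator (fun _ => (1:ℝ)) := by
    intro i hi
    filter_upwards [hae i hi] with ω hω
    rcases hω with h | h
    · rw [Set.indicator_of_mem (show ω ∈ {ω | X i ω = 1} from h)]
      exact h
    · rw [Set.indicator_of_notMem (show ω ∉ {ω | X i ω = 1} from by
        simp only [Set.mem_setOf_eq, h]; norm_num)]
      exact h
  have hXint : ∀ i ∈ Finset.Icc 1 n, Integrable (X i) μ := by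
    intro i hi
    exact ((integrable_const (1:ℝ)).indicator (hmeas1 i)).congr (hXind i hi).symm
  have hYint : ∀ i ∈ Finset.Icc 1 n, Integrable (Y i) μ := by
    intro i hi
    rw [hYeq]; exact (hXint i hi).sub (integrable_const _)
  -- integral of Y i over a measurable set
  have hint_ind : ∀ i ∈ Finset.Icc 1 n, ∀ s : Set Ω, MeasurableSet s →
      ∫ ω, s.indicator (Y i) ω ∂μ
        = (μ (s ∩ {ω | X i ω = 1})).toReal - (i:ℝ) * c * (μ s).toReal := by
    intro i hi s hs
    have hcongr : s.indicator (Y i) =ᵐ[μ] fun ω =>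
        (s ∩ {ω | X i ω = 1}).indicator (fun _ => (1:ℝ)) ω
          - s.indicator (fun _ => (i:ℝ) * c) ω := by
      filter_upwards [hae i hi] with ω hω
      by_cases hsω : ω ∈ s
      · rcases hω with h | h
        · have hm : ω ∈ s ∩ {ω | X i ω = 1} := ⟨hsω, h⟩
          simp [Set.indicator_of_mem hsω, Set.indicator_of_mem hm, hY, h]
        · have hm : ω ∉ s ∩ {ω | X i ω = 1} := by
            rintro ⟨-, hm2⟩
            simp only [Set.mem_setOf_eq] at hm2
            rw [h] at hm2; norm_num at hm2
          simp [Set.indicator_of_mem hsω, Set.indicator_of_notMem hm, hY, h]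
      · have hm : ω ∉ s ∩ {ω | X i ω = 1} := fun hm => hsω hm.1
        simp [Set.indicator_of_notMem hsω, Set.indicator_of_notMem hm]
    rw [integral_congr_ae hcongr,
      integral_sub ((integrable_const _).indicator (hs.inter (hmeas1 i)))
        ((integrable_const _).indicator hs),
      integral_indicator_const _ (hs.inter (hmeas1 i)), integral_indicator_const _ hs]
    simp [smul_eq_mul, measureReal_def]; ring
  -- the upper bound for any stopping rule
  have hVub : ∀ τ : Ω → ℕ, IsStopRule Y n τ → ∫ ω, Y (τ ω) ω ∂μ ≤ 1/2 - c := by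
    intro τ hτ
    set E : ℕ → Set Ω := fun i => {ω | τ ω = i} with hE
    have hEmeas : ∀ i ∈ Finset.Icc 1 n, MeasurableSet (E i) := by
      intro i hi
      have hle : priorSigma Y i ≤ (inferInstance : MeasurableSpace Ω) := by
        refine iSup₂_le fun j _ => ?_
        exact (hYmeas j).comap_le
      exact hle _ (hτ.2 i hi)
    -- decomposition of the integral
    have hrepr : (fun ω => Y (τ ω) ω)
        = fun ω => ∑ i ∈ Finset.Icc 1 n, (E i).indicator (Y i) ω := by
      funext ω
      rw [Finset.sum_eq_single_of_mem (τ ω) (hτ.1 ω)]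
      · rw [Set.indicator_of_mem (show ω ∈ E (τ ω) from rfl)]
      · intro j hj hne
        rw [Set.indicator_of_notMem (show ω ∉ E j from fun h =>
          hne ((show τ ω = j from h).symm))]
    have hint : ∫ ω, Y (τ ω) ω ∂μ
        = ∑ i ∈ Finset.Icc 1 n,
            ((μ (E i ∩ {ω | X i ω = 1})).toReal - (i:ℝ) * c * (μ (E i)).toReal) := by
      rw [hrepr, integral_finset_sum _
        (fun i hi => ((hYint i hi).indicator (hEmeas i hi)))]
      exact Finset.sum_congr rfl fun i hi => hint_ind i hi (E i) (hEmeas i hi)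
    set p : ℕ → ℝ := fun i => (μ (E i)).toReal with hp
    set q : ℕ → ℝ := fun i => (μ {ω | i ≤ τ ω}).toReal with hqdef
    have hdisjE : (↑(Finset.Icc 1 n) : Set ℕ).PairwiseDisjoint E := by
      intro i _ j _ hij
      rw [Function.onFun, Set.disjoint_left]
      intro ω h1' h2'
      exact hij ((by exact h1' : τ ω = i).symm.trans (by exact h2' : τ ω = j))
    have hq1 : q 1 = 1 := by
      have : {ω | 1 ≤ τ ω} = Set.univ := by
        ext ω; simp only [Set.mem_setOf_eq, Set.mem_univ, iff_true]
        have := hτ.1 ω; simp only [Finset.mem_Icc] at this; omega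
      rw [hqdef]; simp only [this, measure_univ, ENNReal.toReal_one]
    have hT : ∀ i ∈ Finset.Icc 1 n, {ω | i ≤ τ ω} = ⋃ j ∈ Finset.Icc i n, E j := by
      intro i hi
      ext ω
      simp only [Set.mem_setOf_eq, Set.mem_iUnion, Finset.mem_Icc, exists_prop, hE]
      have := hτ.1 ω; simp only [Finset.mem_Icc] at this
      constructor
      · intro h; exact ⟨τ ω, ⟨h, this.2⟩, rfl⟩
      · rintro ⟨j, ⟨hj1, _⟩, rfl⟩; exact hj1
    have hqsum : ∀ i ∈ Finset.Icc 1 n, q i = ∑ j ∈ Finset.Icc i n, p j := by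
      intro i hi
      simp only [Finset.mem_Icc] at hi
      rw [hqdef]
      simp only
      rw [hT i (by simp only [Finset.mem_Icc]; omega)]
      rw [measure_biUnion_finset (hdisjE.subset (by
          intro j hj
          simp only [Finset.coe_Icc, Set.mem_Icc] at hj ⊢
          omega))
        (fun j hj => hEmeas j (by simp only [Finset.mem_Icc] at hj ⊢; omega))]
      exact ENNReal.toReal_sum fun j _ => measure_ne_top μ _
    -- independence: μ (T i ∩ {X i = 1}) = μ (T i) * (1/2)
    have hkey : ∀ i ∈ Finset.Icc 1 n,
        μ ({ω | i ≤ τ ω} ∩ {ω | X i ω = 1})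
          = μ {ω | i ≤ τ ω} * ENNReal.ofReal (1/2) := by
      intro i hi
      simp only [Finset.mem_Icc] at hi
      rcases eq_or_lt_of_le hi.1 with h1' | h2'
      · -- i = 1 : the event {1 ≤ τ} is everything
        have huniv : {ω | i ≤ τ ω} = Set.univ := by
          ext ω; simp only [Set.mem_setOf_eq, Set.mem_univ, iff_true]
          have := hτ.1 ω; simp only [Finset.mem_Icc] at this; omega
        rw [huniv, Set.univ_inter, measure_univ, one_mul,
          hμ1 i (by simp only [Finset.mem_Icc]; omega)]
      · -- i ≥ 2 : use independence
        have h2i : 2 ≤ i := h2'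
        have hI : iIndep
            (fun k : Fin n => MeasurableSpace.comap (X (k.1+1)) Real.measurableSpace) μ :=
          (iIndepFun_iff_iIndep _ _ _).mp hindep
        have hi1n : i - 1 < n := by omega
        have hle : ∀ k : Fin n,
            MeasurableSpace.comap (X (k.1+1)) Real.measurableSpace
              ≤ (inferInstance : MeasurableSpace Ω) := fun k => (hmeas _).comap_le
        have hIndep : Indep
            (⨆ k ∈ {k : Fin n | k.1 + 1 < i},
              MeasurableSpace.comap (X (k.1+1)) Real.measurableSpace)
            (MeasurableSpace.comap (X i) Real.measurableSpace) μ := by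
          refine indep_of_indep_of_le_right
            (indep_iSup_of_disjoint hle hI
              (S := {k : Fin n | k.1 + 1 < i})
              (T := {(⟨i - 1, hi1n⟩ : Fin n)}) ?_) ?_
          · rw [Set.disjoint_left]
            intro k hk hk'
            rw [Set.mem_singleton_iff] at hk'
            subst hk'
            have hk2 : (i - 1) + 1 < i := hk
            omega
          · have hXa : X ((⟨i - 1, hi1n⟩ : Fin n).1 + 1) = X i := by
              show X (i - 1 + 1) = X i
              rw [Nat.sub_add_cancel (by omega : 1 ≤ i)]
            rw [← hXa]
            exact le_biSup
              (f := fun k : Fin n =>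
                MeasurableSpace.comap (X (k.1 + 1)) Real.measurableSpace)
              (Set.mem_singleton _)
        have hprior_le : ∀ j, j < i → priorSigma Y j
            ≤ ⨆ k ∈ {k : Fin n | k.1 + 1 < i},
                MeasurableSpace.comap (X (k.1+1)) Real.measurableSpace := by
          intro j hji
          refine iSup₂_le fun l hl => ?_
          simp only [Finset.mem_Icc] at hl
          have hYl : Y l = (fun x : ℝ => x - l * c) ∘ X l := funext fun ω => hY l ω
          have hstep : MeasurableSpace.comap (Y l) Real.measurableSpace
              ≤ MeasurableSpace.comap (X l) Real.measurableSpace := by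
            rw [hYl, ← MeasurableSpace.comap_comp]
            exact MeasurableSpace.comap_mono
              ((measurable_id.sub measurable_const).comap_le)
          refine hstep.trans ?_
          have hlb : l - 1 < n := by omega
          have hb : X ((⟨l - 1, hlb⟩ : Fin n).1 + 1) = X l := by
            show X (l - 1 + 1) = X l
            rw [Nat.sub_add_cancel (by omega : 1 ≤ l)]
          have hbS : (⟨l - 1, hlb⟩ : Fin n) ∈ {k : Fin n | k.1 + 1 < i} := by
            show l - 1 + 1 < i
            omega
          rw [← hb]
          exact le_biSup
            (f := fun k : Fin n =>
              MeasurableSpace.comap (X (k.1 + 1)) Real.measurableSpace)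
            hbS
        have hTset : {ω | i ≤ τ ω} = (⋃ j ∈ Finset.Icc 1 (i-1), E j)ᶜ := by
          ext ω
          have hτω := hτ.1 ω
          simp only [Finset.mem_Icc] at hτω
          simp only [Set.mem_compl_iff, Set.mem_iUnion, Finset.mem_Icc,
            Set.mem_setOf_eq, exists_prop]
          constructor
          · rintro h ⟨j, ⟨hj1, hj2⟩, hj3⟩
            have hj3' : τ ω = j := hj3
            omega
          · intro h
            by_contra hlt
            exact h ⟨τ ω, ⟨hτω.1, by omega⟩, (show ω ∈ E (τ ω) from rfl)⟩
        have hTmeas : MeasurableSet[⨆ k ∈ {k : Fin n | k.1 + 1 < i},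
            MeasurableSpace.comap (X (k.1+1)) Real.measurableSpace] {ω | i ≤ τ ω} := by
          rw [hTset]
          refine MeasurableSet.compl ?_
          refine MeasurableSet.biUnion (Finset.Icc 1 (i-1)).countable_toSet
            (fun j hj => ?_)
          have hj' : j ∈ Finset.Icc 1 (i-1) := hj
          simp only [Finset.mem_Icc] at hj'
          exact hprior_le j (by omega) _
            (hτ.2 j (by simp only [Finset.mem_Icc]; omega))
        have hA : MeasurableSet[MeasurableSpace.comap (X i) Real.measurableSpace]
            {ω | X i ω = 1} := ⟨{1}, measurableSet_singleton 1, rfl⟩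
        have := (Indep_iff _ _ μ).mp hIndep _ _ hTmeas hA
        rw [this, hμ1 i (by simp only [Finset.mem_Icc]; omega)]
    -- put things together
    have hub1 : ∀ i ∈ Finset.Icc 1 n,
        (μ (E i ∩ {ω | X i ω = 1})).toReal - (i:ℝ) * c * p i
          ≤ (1/2) * q i - (i:ℝ) * c * p i := by
      intro i hi
      have hsub : E i ∩ {ω | X i ω = 1} ⊆ {ω | i ≤ τ ω} ∩ {ω | X i ω = 1} := by
        rintro ω ⟨h1', h2'⟩
        exact ⟨le_of_eq (by exact h1' : τ ω = i).symm, h2'⟩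
      have hmono : μ (E i ∩ {ω | X i ω = 1}) ≤ μ ({ω | i ≤ τ ω} ∩ {ω | X i ω = 1}) :=
        measure_mono hsub
      have h := hkey i hi
      have : (μ (E i ∩ {ω | X i ω = 1})).toReal ≤ (1/2) * q i := by
        have h2' : (μ ({ω | i ≤ τ ω} ∩ {ω | X i ω = 1})).toReal = (1/2) * q i := by
          rw [h, ENNReal.toReal_mul, ENNReal.toReal_ofReal (by norm_num)]
          rw [hqdef]; ring
        rw [← h2']
        exact ENNReal.toReal_mono (measure_ne_top μ _) hmono
      linarith
    have hpq : ∑ i ∈ Finset.Icc 1 n, (i:ℝ) * p i = ∑ i ∈ Finset.Icc 1 n, q i := by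
      rw [sumswap]
      exact (Finset.sum_congr rfl fun i hi => (hqsum i hi).symm)
    have hqnonneg : ∀ i, 0 ≤ q i := fun i => ENNReal.toReal_nonneg
    have hq1le : 1 ≤ ∑ i ∈ Finset.Icc 1 n, q i := by
      rw [← hq1]
      exact Finset.single_le_sum (fun i _ => hqnonneg i)
        (by simp only [Finset.mem_Icc]; omega)
    calc ∫ ω, Y (τ ω) ω ∂μ
        = ∑ i ∈ Finset.Icc 1 n,
            ((μ (E i ∩ {ω | X i ω = 1})).toReal - (i:ℝ) * c * p i) := hint
      _ ≤ ∑ i ∈ Finset.Icc 1 n, ((1/2) * q i - (i:ℝ) * c * p i) :=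
          Finset.sum_le_sum hub1
      _ = (1/2) * (∑ i ∈ Finset.Icc 1 n, q i)
            - c * ∑ i ∈ Finset.Icc 1 n, (i:ℝ) * p i := by
          rw [Finset.sum_sub_distrib, ← Finset.mul_sum]
          congr 1
          rw [Finset.mul_sum]
          exact Finset.sum_congr rfl fun i _ => by ring
      _ = (1/2 - c) * ∑ i ∈ Finset.Icc 1 n, q i := by rw [hpq]; ring
      _ ≤ (1/2 - c) * 1 := by
          have hprod : 0 ≤ (c - 1/2) * ((∑ i ∈ Finset.Icc 1 n, q i) - 1) :=
            mul_nonneg (by linarith) (by linarith)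
          nlinarith [hprod]
      _ = 1/2 - c := by ring
  -- the constant stopping rule τ = 1 achieves 1/2 - c
  have hstop1 : IsStopRule Y n (fun _ => 1) := by
    constructor
    · intro ω; simp only [Finset.mem_Icc]; omega
    · intro i hi
      by_cases h : i = 1
      · subst h
        have : {ω : Ω | (fun _ => 1) ω = 1} = Set.univ := by
          ext ω; simp
        rw [this]; exact @MeasurableSet.univ _ (priorSigma Y 1)
      · have : {ω : Ω | (fun _ => 1) ω = i} = ∅ := by
          ext ω; simp [Ne.symm]; omega
        rw [this]; exact @MeasurableSet.empty _ (priorSigma Y i)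
  have hval1 : ∫ ω, Y ((fun _ => (1:ℕ)) ω) ω ∂μ = 1/2 - c := by
    have h1n : (1:ℕ) ∈ Finset.Icc 1 n := by simp only [Finset.mem_Icc]; omega
    have := hint_ind 1 h1n Set.univ MeasurableSet.univ
    simp only [Set.indicator_univ] at this
    rw [this, Set.univ_inter, measure_univ, hμ1 1 h1n,
      ENNReal.toReal_ofReal (by norm_num)]
    norm_num
  have hVn : Vn μ Y n = 1/2 - c := by
    have hmem : (1/2 - c : ℝ)
        ∈ {r | ∃ τ, IsStopRule Y n τ ∧ r = ∫ ω, Y (τ ω) ω ∂μ} :=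
      ⟨fun _ => 1, hstop1, hval1.symm⟩
    have hub : ∀ r ∈ {r | ∃ τ, IsStopRule Y n τ ∧ r = ∫ ω, Y (τ ω) ω ∂μ},
        r ≤ 1/2 - c := by
      rintro r ⟨τ, hτ, rfl⟩
      exact hVub τ hτ
    exact le_antisymm (csSup_le ⟨_, hmem⟩ hub) (le_csSup ⟨_, hub⟩ hmem)
  -- the prophet's value
  set B1 : Set Ω := {ω | X 1 ω = 1} with hB1
  set B2 : Set Ω := {ω | X 1 ω = 0} ∩ {ω | X 2 ω = 1} with hB2
  set B3 : Set Ω := {ω | X 1 ω = 0} ∩ {ω | X 2 ω = 0} with hB3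
  have h1n : (1:ℕ) ∈ Finset.Icc 1 n := by simp only [Finset.mem_Icc]; omega
  have h2n : (2:ℕ) ∈ Finset.Icc 1 n := by simp only [Finset.mem_Icc]; omega
  have hgood : ∀ᵐ ω ∂μ, ∀ i, i ∈ Finset.Icc 1 n → (X i ω = 1 ∨ X i ω = 0) := by
    rw [ae_all_iff]
    intro i
    by_cases hi : i ∈ Finset.Icc 1 n
    · filter_upwards [hae i hi] with ω h _
      exact h
    · filter_upwards with ω h
      exact absurd h hi
  have hfun : (fun ω => sSup ((fun i => Y i ω) '' Set.Icc 1 n)) =ᵐ[μ]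
      fun ω => B1.indicator (fun _ => 1 - c) ω + B2.indicator (fun _ => 1 - 2*c) ω
        + B3.indicator (fun _ => -c) ω := by
    filter_upwards [hgood] with ω hω
    have hX1 : X 1 ω = 1 ∨ X 1 ω = 0 := hω 1 h1n
    have hX2 : X 2 ω = 1 ∨ X 2 ω = 0 := hω 2 h2n
    have hXle : ∀ i, i ∈ Finset.Icc 1 n → X i ω ≤ 1 := by
      intro i hi
      rcases hω i hi with h | h <;> rw [h] <;> norm_num
    set s : Set ℝ := (fun i => Y i ω) '' Set.Icc 1 n with hs
    have h1mem : Y 1 ω ∈ s := Set.mem_image_of_mem _ ⟨le_refl 1, by omega⟩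
    have h2mem : Y 2 ω ∈ s := Set.mem_image_of_mem _ ⟨by omega, by omega⟩
    have hbdd : BddAbove s := ((Set.finite_Icc 1 n).image _).bddAbove
    have hub : ∀ y ∈ s, y ≤ max (Y 1 ω) (Y 2 ω) := by
      rintro y ⟨i, hi, rfl⟩
      rw [Set.mem_Icc] at hi
      obtain ⟨hi1, hi2⟩ := hi
      show Y i ω ≤ max (Y 1 ω) (Y 2 ω)
      have hiF : i ∈ Finset.Icc 1 n := by simp only [Finset.mem_Icc]; exact ⟨hi1, hi2⟩
      have hXi : X i ω ≤ 1 := hXle i hiF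
      have hige1 : (1:ℝ) ≤ (i:ℝ) := by exact_mod_cast hi1
      rcases hX1 with hx1 | hx1
      · refine le_trans ?_ (le_max_left _ _)
        rw [hY, hY, hx1]
        push_cast
        nlinarith
      · rcases Nat.lt_or_ge i 3 with h3 | h3
        · interval_cases i
          · exact le_max_left _ _
          · exact le_max_right _ _
        · refine le_trans ?_ (le_max_left _ _)
          rw [hY, hY, hx1]
          have hige3 : (3:ℝ) ≤ (i:ℝ) := by exact_mod_cast h3
          push_cast
          nlinarith
    have hsup : sSup s = max (Y 1 ω) (Y 2 ω) := by
      refine le_antisymm (csSup_le ⟨_, h1mem⟩ hub) ?_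
      rcases le_total (Y 1 ω) (Y 2 ω) with h | h
      · rw [max_eq_right h]; exact le_csSup hbdd h2mem
      · rw [max_eq_left h]; exact le_csSup hbdd h1mem
    rw [hsup]
    rcases hX1 with hx1 | hx1
    · have hm1 : ω ∈ B1 := hx1
      have hm2 : ω ∉ B2 := fun h => by
        have := h.1; simp only [Set.mem_setOf_eq] at this; rw [hx1] at this; norm_num at this
      have hm3 : ω ∉ B3 := fun h => by
        have := h.1; simp only [Set.mem_setOf_eq] at this; rw [hx1] at this; norm_num at this
      rw [Set.indicator_of_mem hm1, Set.indicator_of_notMem hm2,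
        Set.indicator_of_notMem hm3]
      have : max (Y 1 ω) (Y 2 ω) = Y 1 ω := by
        apply max_eq_left
        rw [hY, hY, hx1]
        have := hXle 2 h2n
        push_cast
        nlinarith
      rw [this, hY, hx1]
      push_cast; ring
    · have hm1 : ω ∉ B1 := fun h => by
        simp only [hB1, Set.mem_setOf_eq] at h; rw [hx1] at h; norm_num at h
      rcases hX2 with hx2 | hx2
      · have hm2 : ω ∈ B2 := ⟨hx1, hx2⟩
        have hm3 : ω ∉ B3 := fun h => by
          have := h.2; simp only [Set.mem_setOf_eq] at this; rw [hx2] at this; norm_num at this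
        rw [Set.indicator_of_notMem hm1, Set.indicator_of_mem hm2,
          Set.indicator_of_notMem hm3]
        have : max (Y 1 ω) (Y 2 ω) = Y 2 ω := by
          apply max_eq_right
          rw [hY, hY, hx1, hx2]
          push_cast
          nlinarith
        rw [this, hY, hx2]
        push_cast; ring
      · have hm2 : ω ∉ B2 := fun h => by
          have := h.2; simp only [Set.mem_setOf_eq] at this; rw [hx2] at this; norm_num at this
        have hm3 : ω ∈ B3 := ⟨hx1, hx2⟩
        rw [Set.indicator_of_notMem hm1, Set.indicator_of_notMem hm2,
          Set.indicator_of_mem hm3]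
        have : max (Y 1 ω) (Y 2 ω) = Y 1 ω := by
          apply max_eq_left
          rw [hY, hY, hx1, hx2]
          push_cast
          nlinarith
        rw [this, hY, hx1]
        push_cast; ring
  -- measures of B1, B2, B3
  have hmB1 : MeasurableSet B1 := hmeas1 1
  have hmB2 : MeasurableSet B2 := (hmeas0 1).inter (hmeas1 2)
  have hmB3 : MeasurableSet B3 := (hmeas0 1).inter (hmeas0 2)
  have hind12 : IndepFun (X 1) (X 2) μ := by
    have := hindep.indepFun (i := ⟨0, by omega⟩) (j := ⟨1, by omega⟩)
      (by simp [Fin.ext_iff])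
    simpa using this
  have hμB1 : (μ B1).toReal = 1/2 := by
    rw [hB1, h1, ENNReal.toReal_ofReal (by norm_num)]
  have hμB2 : (μ B2).toReal = 1/4 := by
    have : μ B2 = μ {ω | X 1 ω = 0} * μ {ω | X 2 ω = 1} := by
      have := hind12.measure_inter_preimage_eq_mul ({0} : Set ℝ) ({1} : Set ℝ)
        (measurableSet_singleton 0) (measurableSet_singleton 1)
      exact this
    rw [this, h0, hμ1 2 h2n, ENNReal.toReal_mul,
      ENNReal.toReal_ofReal (by norm_num : (0:ℝ) ≤ 1/2)]
    norm_num
  have hμB3 : (μ B3).toReal = 1/4 := by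
    have : μ B3 = μ {ω | X 1 ω = 0} * μ {ω | X 2 ω = 0} := by
      have := hind12.measure_inter_preimage_eq_mul ({0} : Set ℝ) ({0} : Set ℝ)
        (measurableSet_singleton 0) (measurableSet_singleton 0)
      exact this
    rw [this, h0, hμ0 2 h2n, ENNReal.toReal_mul,
      ENNReal.toReal_ofReal (by norm_num : (0:ℝ) ≤ 1/2)]
    norm_num
  have hMn : Mn μ Y n = (μ B1).toReal * (1 - c) + ((μ B2).toReal * (1 - 2*c)
      + (μ B3).toReal * (-c)) := by
    have hi1 : Integrable (fun a => B1.indicator (fun _ => 1 - c) a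
        + B2.indicator (fun _ => 1 - 2*c) a) μ :=
      ((integrable_const _).indicator hmB1).add ((integrable_const _).indicator hmB2)
    have hi2 : Integrable (fun a => B3.indicator (fun _ => -c) a) μ :=
      (integrable_const _).indicator hmB3
    rw [Mn, integral_congr_ae hfun, integral_add hi1 hi2,
      integral_add ((integrable_const _).indicator hmB1)
        ((integrable_const _).indicator hmB2),
      integral_indicator_const _ hmB1, integral_indicator_const _ hmB2,
      integral_indicator_const _ hmB3]
    simp only [smul_eq_mul, measureReal_def]
    ring
  rw [hMn, hVn, hμB1, hμB2, hμB3]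
  ring
end

section
/- Let n ≥ 1, let c = 1/(n+1), and let X_1, ..., X_n be i.i.d. random variables with P(X_1 = 1) = 1/(n+1) = 1 - P(X_1 = 0). With Y_i = X_i - i·c, one has M(Y_1,...,Y_n) - V(Y_1,...,Y_n) = (n-1)·(1 - 1/(n+1))^n/(n+1); that is, the upper bound of the prophet inequality for fixed horizon n is attained. -/
open MeasureTheory ProbabilityTheory

set_option linter.unusedVariables false

/- ### Auxiliary lemmas -/

lemma comap_sub_const' {Ω : Type*} (f : Ω → ℝ) (a : ℝ) :
    MeasurableSpace.comap (fun ω => f ω - a) Real.measurableSpace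
      = MeasurableSpace.comap f Real.measurableSpace := by
  have : (fun ω => f ω - a) = (fun x : ℝ => x - a) ∘ f := rfl
  rw [this, ← MeasurableSpace.comap_comp]
  congr 1
  apply le_antisymm
  · exact (measurable_sub_const a).comap_le
  · intro s hs
    exact ⟨(fun x : ℝ => x + a) ⁻¹' s, measurable_add_const a hs, by ext x; simp⟩

lemma sumA (q : ℝ) (m : ℕ) :
    ∑ i ∈ Finset.Icc 1 m, (1 - (i : ℝ) * (1 - q)) * q ^ (i - 1) * (1 - q)
      = (m : ℝ) * q ^ m * (1 - q) := by
  induction m with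
  | zero => simp
  | succ m ih =>
    rw [Finset.sum_Icc_succ_top (by omega : 1 ≤ m + 1), ih]
    have : (m + 1) - 1 = m := by omega
    rw [this]
    push_cast
    ring

lemma meas_biInter_nat {Ω : Type*} [MeasurableSpace Ω] {μ : Measure Ω} [IsProbabilityMeasure μ]
    {n : ℕ} {X : ℕ → Ω → ℝ}
    (hindep : iIndepFun (fun i : Fin n => X (i.1 + 1)) μ)
    (g : ℕ → Set Ω) (i : ℕ) (hi : i ≤ n)
    (hg : ∀ j ∈ Finset.Icc 1 i,
      MeasurableSet[MeasurableSpace.comap (X j) Real.measurableSpace] (g j)) :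
    μ (⋂ j ∈ Finset.Icc 1 i, g j) = ∏ j ∈ Finset.Icc 1 i, μ (g j) := by
  rcases Nat.eq_zero_or_pos i with h0 | hpos
  · subst h0; simp
  have hn : 1 ≤ n := le_trans hpos hi
  set e : ℕ → Fin n := fun j => ⟨min (j - 1) (n - 1), by omega⟩ with he
  have hval1 : ∀ j ∈ Finset.Icc 1 i, ((e j : ℕ)) + 1 = j := by
    intro j hj
    simp only [Finset.mem_Icc] at hj
    simp only [he]
    omega
  have hinj : ∀ a ∈ Finset.Icc 1 i, ∀ b ∈ Finset.Icc 1 i, e a = e b → a = b := by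
    intro a ha b hb hab
    have h1 := hval1 a ha
    have h2 := hval1 b hb
    rw [hab] at h1
    omega
  have key := hindep.meas_biInter (S := (Finset.Icc 1 i).image e)
      (s := fun k => g ((k : ℕ) + 1)) ?_
  · rw [Finset.set_biInter_finset_image, Finset.prod_image hinj] at key
    rw [Set.iInter₂_congr (fun j hj => by rw [hval1 j hj] : ∀ j hj, g ((e j : ℕ) + 1) = g j)] at key
    rw [key]
    exact Finset.prod_congr rfl fun j hj => by rw [hval1 j hj]
  · intro k hk
    obtain ⟨j, hj, rfl⟩ := Finset.mem_image.1 hk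
    have h := hg j hj
    rw [← hval1 j hj] at h
    simpa using h

lemma indep_prior {Ω : Type*} [MeasurableSpace Ω] {μ : Measure Ω} {n : ℕ} {X : ℕ → Ω → ℝ}
    (hmeas : ∀ i, Measurable (X i))
    (hindep : iIndepFun (fun i : Fin n => X (i.1 + 1)) μ)
    {i : ℕ} (hi1 : 1 ≤ i) (hi2 : i ≤ n) {t1 t2 : Set Ω}
    (h1 : MeasurableSet[⨆ j ∈ Finset.Icc 1 (i - 1),
        MeasurableSpace.comap (X j) Real.measurableSpace] t1)
    (h2 : MeasurableSet[MeasurableSpace.comap (X i) Real.measurableSpace] t2) :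
    μ (t1 ∩ t2) = μ t1 * μ t2 := by
  set s' : Fin n → MeasurableSpace Ω :=
    fun k => MeasurableSpace.comap (X (k.1 + 1)) Real.measurableSpace with hs'
  have h_le : ∀ k, s' k ≤ ‹MeasurableSpace Ω› := fun k => (hmeas _).comap_le
  have hInd := ProbabilityTheory.indep_biSup_compl h_le hindep.iIndep {k : Fin n | (k : ℕ) + 1 < i}
  refine (ProbabilityTheory.Indep_iff _ _ _).1 hInd t1 t2 ?_ ?_
  · have hle2 : (⨆ j ∈ Finset.Icc 1 (i - 1),
        MeasurableSpace.comap (X j) Real.measurableSpace)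
        ≤ ⨆ k ∈ {k : Fin n | (k : ℕ) + 1 < i}, s' k := by
      refine iSup₂_le fun j hj => ?_
      simp only [Finset.mem_Icc] at hj
      have hjn : j - 1 < n := by omega
      have hv : ((⟨j - 1, hjn⟩ : Fin n) : ℕ) + 1 = j := by simp only [Fin.val_mk]; omega
      have hmem : (⟨j - 1, hjn⟩ : Fin n) ∈ {k : Fin n | (k : ℕ) + 1 < i} := by
        simp only [Set.mem_setOf_eq, Fin.val_mk]; omega
      have heq : MeasurableSpace.comap (X j) Real.measurableSpace = s' ⟨j - 1, hjn⟩ := by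
        simp only [hs', hv]
      rw [heq]
      exact le_biSup s' hmem
    exact hle2 t1 h1
  · have hjn : i - 1 < n := by omega
    have hv : ((⟨i - 1, hjn⟩ : Fin n) : ℕ) + 1 = i := by simp only [Fin.val_mk]; omega
    have hmem : (⟨i - 1, hjn⟩ : Fin n) ∈ {k : Fin n | (k : ℕ) + 1 < i}ᶜ := by
      simp only [Set.mem_compl_iff, Set.mem_setOf_eq, Fin.val_mk]; omega
    refine le_biSup s' hmem t2 ?_
    show MeasurableSet[s' ⟨i - 1, hjn⟩] t2
    have e : s' ⟨i - 1, hjn⟩ = MeasurableSpace.comap (X i) Real.measurableSpace := by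
      simp only [hs', hv]
    rw [e]
    exact h2

theorem stmt6
    {Ω : Type*} [MeasurableSpace Ω] (μ : Measure Ω) [IsProbabilityMeasure μ]
    (n : ℕ) (X : ℕ → Ω → ℝ)
    (hmeas : ∀ i, Measurable (X i))
    (hindep : iIndepFun (fun i : Fin n => X (i.1 + 1)) μ)
    (hident : ∀ i ∈ Set.Icc 1 n, IdentDistrib (X i) (X 1) μ μ)
    (c : ℝ) (Y : ℕ → Ω → ℝ) (hY : ∀ i ω, Y i ω = X i ω - i * c)
    (hn : 1 ≤ n) (hc : c = 1/((n:ℝ)+1))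
    (h1 : μ {ω | X 1 ω = 1} = ENNReal.ofReal (1/((n:ℝ)+1)))
    (h0 : μ {ω | X 1 ω = 0} = ENNReal.ofReal (1 - 1/((n:ℝ)+1))) :
    Mn μ Y n - Vn μ Y n = (((n:ℝ) - 1) * (1 - 1/((n:ℝ)+1)) ^ n / ((n:ℝ)+1)) := by
  classical
  set p : ℝ := 1 / ((n : ℝ) + 1) with hpdef
  have hn1 : (1:ℝ) ≤ (n:ℝ) := by exact_mod_cast hn
  have hp0 : 0 < p := by rw [hpdef]; positivity
  have hp1 : p < 1 := by
    rw [hpdef, div_lt_one (by positivity)]; linarith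
  have hq0 : (0:ℝ) ≤ 1 - p := by linarith
  have hc0 : 0 ≤ c := by rw [hc]; exact hp0.le
  set SM : ℕ → Set Ω := fun i => {ω | X i ω = 1} with hSMdef
  set SZ : ℕ → Set Ω := fun i => {ω | X i ω = 0} with hSZdef
  have hSMc : ∀ i, MeasurableSet[MeasurableSpace.comap (X i) Real.measurableSpace] (SM i) :=
    fun i => ⟨{1}, measurableSet_singleton 1, rfl⟩
  have hSZc : ∀ i, MeasurableSet[MeasurableSpace.comap (X i) Real.measurableSpace] (SZ i) :=
    fun i => ⟨{0}, measurableSet_singleton 0, rfl⟩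
  have hSMm : ∀ i, MeasurableSet (SM i) := fun i => (hmeas i).comap_le _ (hSMc i)
  have hSZm : ∀ i, MeasurableSet (SZ i) := fun i => (hmeas i).comap_le _ (hSZc i)
  have hPM : ∀ i ∈ Finset.Icc 1 n, μ (SM i) = ENNReal.ofReal p := by
    intro i hi
    have hi' : i ∈ Set.Icc 1 n := by
      rw [Finset.mem_Icc] at hi; exact Set.mem_Icc.2 hi
    have h := (hident i hi').measure_mem_eq (measurableSet_singleton (1:ℝ))
    exact h.trans h1
  have hPZ : ∀ i ∈ Finset.Icc 1 n, μ (SZ i) = ENNReal.ofReal (1 - p) := by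
    intro i hi
    have hi' : i ∈ Set.Icc 1 n := by
      rw [Finset.mem_Icc] at hi; exact Set.mem_Icc.2 hi
    have h := (hident i hi').measure_mem_eq (measurableSet_singleton (0:ℝ))
    exact h.trans h0
  have hunion : ∀ i ∈ Finset.Icc 1 n, μ (SM i ∪ SZ i) = 1 := by
    intro i hi
    have hd : Disjoint (SM i) (SZ i) := by
      rw [Set.disjoint_left]
      intro ω hω1 hω0
      exact one_ne_zero ((hω1 : X i ω = 1).symm.trans (hω0 : X i ω = 0))
    rw [measure_union hd (hSZm i), hPM i hi, hPZ i hi,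
      ← ENNReal.ofReal_add hp0.le hq0]
    norm_num
  have hcompl : ∀ i ∈ Finset.Icc 1 n, μ ((SM i ∪ SZ i)ᶜ) = 0 :=
    fun i hi => (prob_compl_eq_zero_iff ((hSMm i).union (hSZm i))).2 (hunion i hi)
  have hXae : ∀ i ∈ Finset.Icc 1 n, X i =ᵐ[μ] (SM i).indicator (fun _ => (1:ℝ)) := by
    intro i hi
    refine Filter.eventuallyEq_iff_exists_mem.2 ⟨SM i ∪ SZ i, mem_ae_iff.2 (hcompl i hi), ?_⟩
    intro ω hω
    rcases hω with h | h
    · rw [Set.indicator_of_mem h]; exact h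
    · have hnm : ω ∉ SM i := fun hm => one_ne_zero ((hm : X i ω = 1).symm.trans h)
      rw [Set.indicator_of_notMem hnm]; exact h
  have hXint : ∀ i ∈ Finset.Icc 1 n, Integrable (X i) μ :=
    fun i hi => ((integrable_const (1:ℝ)).indicator (hSMm i)).congr (hXae i hi).symm
  have hYeq : ∀ i, Y i = fun ω => X i ω - i * c := fun i => funext (hY i)
  have hYmeas : ∀ i, Measurable (Y i) := fun i => by
    rw [hYeq i]; exact (hmeas i).sub measurable_const
  have hYint : ∀ i ∈ Finset.Icc 1 n, Integrable (Y i) μ := fun i hi => by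
    rw [hYeq i]; exact (hXint i hi).sub (integrable_const _)
  have hcomapYX : ∀ j, MeasurableSpace.comap (Y j) Real.measurableSpace
      = MeasurableSpace.comap (X j) Real.measurableSpace := fun j => by
    rw [hYeq j]; exact comap_sub_const' _ _
  have hprior : ∀ i, priorSigma Y i
      = ⨆ j ∈ Finset.Icc 1 i, MeasurableSpace.comap (X j) Real.measurableSpace := fun i => by
    simp only [priorSigma, hcomapYX]
  have hpriorle : ∀ i, priorSigma Y i ≤ (inferInstance : MeasurableSpace Ω) := fun i => by
    simp only [priorSigma]
    exact iSup₂_le fun j _ => (hYmeas j).comap_le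
  have hXub : ∀ (i' i : ℕ), i ≤ i' → priorSigma Y i
      ≤ ⨆ j ∈ Finset.Icc 1 i', MeasurableSpace.comap (X j) Real.measurableSpace := by
    intro i' i hii'
    rw [hprior i]
    exact biSup_mono fun j hj => by
      rw [Finset.mem_Icc] at *; omega
  have h1n : (1:ℕ) ∈ Finset.Icc 1 n := Finset.mem_Icc.2 ⟨le_refl 1, hn⟩
  -- ### Part 1 : Vn = 0
  have hV : Vn μ Y n = 0 := by
    have h0mem : (0:ℝ) ∈ {r | ∃ τ, IsStopRule Y n τ ∧ r = ∫ ω, Y (τ ω) ω ∂μ} := by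
      refine ⟨fun _ => 1, ⟨fun ω => h1n, fun i hi => ?_⟩, ?_⟩
      · rcases eq_or_ne i 1 with rfl | hne
        · have he : {ω : Ω | (fun _ => (1:ℕ)) ω = 1} = Set.univ := by ext ω; simp
          rw [he]; exact @MeasurableSet.univ Ω (priorSigma Y 1)
        · have he : {ω : Ω | (fun _ => (1:ℕ)) ω = i} = ∅ := by
            ext ω; simpa using fun h => hne h.symm
          rw [he]; exact @MeasurableSet.empty Ω (priorSigma Y i)
      · have hrw : ∫ ω, Y ((fun _ => (1:ℕ)) ω) ω ∂μ = ∫ ω, (X 1 ω - (1:ℕ) * c) ∂μ := by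
          apply integral_congr_ae
          filter_upwards with ω
          rw [hY 1 ω]
        rw [hrw, integral_sub (hXint 1 h1n) (integrable_const _), integral_const,
          integral_congr_ae (hXae 1 h1n), integral_indicator_const (1:ℝ) (hSMm 1), measureReal_def, measureReal_def, hPM 1 h1n]
        simp only [measure_univ, ENNReal.toReal_one, smul_eq_mul, one_mul,
          ENNReal.toReal_ofReal hp0.le, Nat.cast_one]
        rw [hc]; ring
    have hub : ∀ r ∈ {r | ∃ τ, IsStopRule Y n τ ∧ r = ∫ ω, Y (τ ω) ω ∂μ}, r ≤ (0:ℝ) := by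
      rintro r ⟨τ, ⟨hτ1, hτ2⟩, rfl⟩
      set T : ℕ → Set Ω := fun j => {ω | τ ω = j} with hTdef
      have hTmeas : ∀ j ∈ Finset.Icc 1 n, MeasurableSet (T j) :=
        fun j hj => hpriorle j _ (hτ2 j hj)
      set R : ℕ → Set Ω := fun j => {ω | j ≤ τ ω} with hRdef
      have hRe : ∀ j, 1 ≤ j → R j = ⋃ k ∈ Finset.Icc j n, T k := by
        intro j hj1
        ext ω
        simp only [hRdef, hTdef, Set.mem_setOf_eq, Set.mem_iUnion, Finset.mem_Icc, exists_prop]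
        have hb := Finset.mem_Icc.1 (hτ1 ω)
        constructor
        · intro h; exact ⟨τ ω, ⟨h, hb.2⟩, rfl⟩
        · rintro ⟨k, ⟨hk1, _⟩, rfl⟩; exact hk1
      have hRmeas' : ∀ j ∈ Finset.Icc 1 n,
          MeasurableSet[⨆ k ∈ Finset.Icc 1 (j - 1),
            MeasurableSpace.comap (X k) Real.measurableSpace] (R j) := by
        intro j hj
        obtain ⟨hj1, hj2⟩ := Finset.mem_Icc.1 hj
        have hcomp : R j = (⋃ k ∈ Finset.Icc 1 (j - 1), T k)ᶜ := by
          ext ω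
          simp only [hRdef, hTdef, Set.mem_setOf_eq, Set.mem_compl_iff, Set.mem_iUnion,
            Finset.mem_Icc, exists_prop, not_exists, not_and]
          have hb := Finset.mem_Icc.1 (hτ1 ω)
          constructor
          · intro h k hk hke; omega
          · intro h
            by_contra hlt
            push_neg at hlt
            exact h (τ ω) ⟨hb.1, by omega⟩ rfl
        rw [hcomp]
        refine MeasurableSet.compl ?_
        refine MeasurableSet.biUnion (Finset.countable_toSet _) fun k hk => ?_
        have hk0 : k ∈ Finset.Icc 1 (j - 1) := hk
        have hk' : 1 ≤ k ∧ k ≤ j - 1 := Finset.mem_Icc.1 hk0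
        exact hXub (j - 1) k hk'.2 _ (hτ2 k (Finset.mem_Icc.2 ⟨hk'.1, by omega⟩))
      have hRT : ∀ j, T j ⊆ R j := fun j ω (h : τ ω = j) => le_of_eq h.symm
      have hkey : ∀ j ∈ Finset.Icc 1 n, μ (R j ∩ SM j) = μ (R j) * ENNReal.ofReal p := by
        intro j hj
        obtain ⟨hj1, hj2⟩ := Finset.mem_Icc.1 hj
        rw [indep_prior hmeas hindep hj1 hj2 (hRmeas' j hj) (hSMc j), hPM j hj]
      have hstep1 : ∫ ω, Y (τ ω) ω ∂μ
          = ∑ j ∈ Finset.Icc 1 n,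
            ((μ (T j ∩ SM j)).toReal - (j:ℝ) * c * (μ (T j)).toReal) := by
        have hrepr : (fun ω => Y (τ ω) ω)
            = fun ω => ∑ j ∈ Finset.Icc 1 n, (T j).indicator (Y j) ω := by
          funext ω
          have h' : ∑ j ∈ Finset.Icc 1 n, (T j).indicator (Y j) ω
              = (T (τ ω)).indicator (Y (τ ω)) ω :=
            Finset.sum_eq_single_of_mem (τ ω) (hτ1 ω)
              (fun j _ hne => Set.indicator_of_notMem
                (fun (h : ω ∈ T j) => hne (Eq.symm (h : τ ω = j))) _)
          rw [h', Set.indicator_of_mem (show ω ∈ T (τ ω) from rfl)]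
        rw [hrepr, integral_finset_sum _ fun j hj => (hYint j hj).indicator (hTmeas j hj)]
        refine Finset.sum_congr rfl fun j hj => ?_
        rw [integral_indicator (hTmeas j hj)]
        have hYj : ∫ ω in T j, Y j ω ∂μ = ∫ ω in T j, (X j ω - (j:ℝ) * c) ∂μ := by
          apply integral_congr_ae
          filter_upwards with ω
          rw [hY j ω]
        rw [hYj, integral_sub ((hXint j hj).restrict) (integrable_const _), setIntegral_const]
        have hXj : ∫ ω in T j, X j ω ∂μ = (μ (T j ∩ SM j)).toReal := by
          rw [integral_congr_ae (ae_restrict_of_ae (hXae j hj)),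
            ← integral_indicator (hTmeas j hj), Set.indicator_indicator,
            integral_indicator_const (1:ℝ) ((hTmeas j hj).inter (hSMm j))]
          simp [measureReal_def]
        rw [hXj]
        simp only [smul_eq_mul, measureReal_def]
        ring
      have hμR : ∀ j ∈ Finset.Icc 1 n,
          (μ (R j)).toReal = ∑ k ∈ Finset.Icc j n, (μ (T k)).toReal := by
        intro j hj
        obtain ⟨hj1, hj2⟩ := Finset.mem_Icc.1 hj
        have hdisj : (↑(Finset.Icc j n) : Set ℕ).PairwiseDisjoint T := by
          intro a _ b _ hab
          rw [Function.onFun, Set.disjoint_left]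
          intro ω (ha : τ ω = a) (hb : τ ω = b)
          exact hab (ha.symm.trans hb)
        rw [hRe j hj1, measure_biUnion_finset hdisj
          (fun k hk => hTmeas k (by rw [Finset.mem_Icc] at *; omega)),
          ENNReal.toReal_sum (fun k _ => measure_ne_top μ _)]
      have hbound : ∀ j ∈ Finset.Icc 1 n,
          (μ (T j ∩ SM j)).toReal ≤ p * ∑ k ∈ Finset.Icc j n, (μ (T k)).toReal := by
        intro j hj
        have hle : μ (T j ∩ SM j) ≤ μ (R j ∩ SM j) :=
          measure_mono (Set.inter_subset_inter_left _ (hRT j))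
        have h2 : (μ (T j ∩ SM j)).toReal ≤ (μ (R j ∩ SM j)).toReal :=
          ENNReal.toReal_mono (measure_ne_top μ _) hle
        rw [hkey j hj, ENNReal.toReal_mul, ENNReal.toReal_ofReal hp0.le] at h2
        rw [← hμR j hj]
        linarith [h2]
      have hswap : ∑ j ∈ Finset.Icc 1 n, (p * ∑ k ∈ Finset.Icc j n, (μ (T k)).toReal
            - (j:ℝ) * c * (μ (T j)).toReal) = 0 := by
        have hcomm : ∑ j ∈ Finset.Icc 1 n, ∑ k ∈ Finset.Icc j n, (μ (T k)).toReal
            = ∑ k ∈ Finset.Icc 1 n, (k:ℝ) * (μ (T k)).toReal := by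
          rw [Finset.sum_comm' (t' := Finset.Icc 1 n) (s' := fun k => Finset.Icc 1 k)
            (by intro x y; rw [Finset.mem_Icc, Finset.mem_Icc, Finset.mem_Icc, Finset.mem_Icc]; omega)]
          refine Finset.sum_congr rfl fun k hk => ?_
          rw [Finset.sum_const, Nat.card_Icc, show k + 1 - 1 = k from by omega, nsmul_eq_mul]
        rw [Finset.sum_sub_distrib, ← Finset.mul_sum, hcomm]
        have hc2 : ∑ j ∈ Finset.Icc 1 n, (j:ℝ) * c * (μ (T j)).toReal
            = c * ∑ j ∈ Finset.Icc 1 n, (j:ℝ) * (μ (T j)).toReal := by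
          rw [Finset.mul_sum]
          exact Finset.sum_congr rfl fun j _ => by ring
        rw [hc2, hc, hpdef]
        ring
      calc ∫ ω, Y (τ ω) ω ∂μ
          = ∑ j ∈ Finset.Icc 1 n,
            ((μ (T j ∩ SM j)).toReal - (j:ℝ) * c * (μ (T j)).toReal) := hstep1
        _ ≤ ∑ j ∈ Finset.Icc 1 n, (p * ∑ k ∈ Finset.Icc j n, (μ (T k)).toReal
            - (j:ℝ) * c * (μ (T j)).toReal) := by
            refine Finset.sum_le_sum fun j hj => ?_
            have := hbound j hj
            linarith
        _ = 0 := hswap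
    exact IsGreatest.csSup_eq ⟨h0mem, hub⟩
  -- ### Part 2 : Mn
  have hM : Mn μ Y n = ((n:ℝ) - 1) * (1 - p) ^ n * p := by
    set A : ℕ → Set Ω := fun i => (⋂ j ∈ Finset.Icc 1 (i - 1), SZ j) ∩ SM i with hAdef
    set A0 : Set Ω := ⋂ j ∈ Finset.Icc 1 n, SZ j with hA0def
    have hAmeas : ∀ i, MeasurableSet (A i) :=
      fun i => (Finset.measurableSet_biInter _ fun j _ => hSZm j).inter (hSMm i)
    have hA0meas : MeasurableSet A0 := Finset.measurableSet_biInter _ fun j _ => hSZm j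
    have hIcc : ∀ i : ℕ, 1 ≤ i → Finset.Icc 1 i = insert i (Finset.Icc 1 (i - 1)) := by
      intro i h
      ext k
      simp only [Finset.mem_Icc, Finset.mem_insert]
      omega
    have hμA : ∀ i ∈ Finset.Icc 1 n,
        μ (A i) = ENNReal.ofReal (1 - p) ^ (i - 1) * ENNReal.ofReal p := by
      intro i hi
      obtain ⟨hi1, hi2⟩ := Finset.mem_Icc.1 hi
      set g : ℕ → Set Ω := fun j => if j = i then SM i else SZ j with hgdef
      have hset : ⋂ j ∈ Finset.Icc 1 i, g j = A i := by
        rw [hIcc i hi1, Finset.set_biInter_insert]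
        have hgi : g i = SM i := if_pos rfl
        have hinner : ⋂ j ∈ Finset.Icc 1 (i - 1), g j = ⋂ j ∈ Finset.Icc 1 (i - 1), SZ j :=
          Set.iInter₂_congr fun j hj => if_neg (by
            have := Finset.mem_Icc.1 hj; omega)
        rw [hgi, hinner, hAdef, Set.inter_comm]
      have hgm : ∀ j ∈ Finset.Icc 1 i,
          MeasurableSet[MeasurableSpace.comap (X j) Real.measurableSpace] (g j) := by
        intro j hj
        by_cases h : j = i
        · subst h; rw [hgdef]; simp only [if_pos rfl]; exact hSMc j
        · rw [hgdef]; simp only [if_neg h]; exact hSZc j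
      have hprod := meas_biInter_nat hindep g i hi2 hgm
      rw [hset] at hprod
      rw [hprod, hIcc i hi1, Finset.prod_insert (by simp [Finset.mem_Icc]; omega)]
      have hrest : ∀ j ∈ Finset.Icc 1 (i - 1), μ (g j) = ENNReal.ofReal (1 - p) := by
        intro j hj
        obtain ⟨ha, hb⟩ := Finset.mem_Icc.1 hj
        rw [hgdef]
        simp only [if_neg (by omega : j ≠ i)]
        exact hPZ j (Finset.mem_Icc.2 ⟨ha, by omega⟩)
      rw [Finset.prod_congr rfl hrest, Finset.prod_const, Nat.card_Icc,
        show i - 1 + 1 - 1 = i - 1 from by omega]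
      have hgi : μ (g i) = ENNReal.ofReal p := by
        rw [hgdef]; simp only [if_pos rfl]; exact hPM i hi
      rw [hgi, mul_comm]
    have hμA0 : μ A0 = ENNReal.ofReal (1 - p) ^ n := by
      have h := meas_biInter_nat hindep SZ n le_rfl fun j _ => hSZc j
      rw [hA0def, h, Finset.prod_congr rfl hPZ, Finset.prod_const, Nat.card_Icc,
        show n + 1 - 1 = n from by omega]
    -- the a.e. identification of the max
    have hGc : μ ((⋂ i ∈ Finset.Icc 1 n, (SM i ∪ SZ i))ᶜ) = 0 := by
      have : (⋂ i ∈ Finset.Icc 1 n, (SM i ∪ SZ i))ᶜ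
          = ⋃ i ∈ Finset.Icc 1 n, (SM i ∪ SZ i)ᶜ := by
        simp [Set.compl_iInter]
      rw [this]
      exact measure_biUnion_null_iff (Finset.countable_toSet _) |>.2 fun i hi =>
        hcompl i (by simpa using hi)
    have haeq : (fun ω => sSup ((fun i => Y i ω) '' Set.Icc 1 n))
        =ᵐ[μ] fun ω => (∑ i ∈ Finset.Icc 1 n,
            (A i).indicator (fun _ => 1 - (i:ℝ) * c) ω) + A0.indicator (fun _ => -c) ω := by
      refine Filter.eventuallyEq_iff_exists_mem.2
        ⟨⋂ i ∈ Finset.Icc 1 n, (SM i ∪ SZ i), mem_ae_iff.2 hGc, ?_⟩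
      intro ω hω
      have hG : ∀ j ∈ Finset.Icc 1 n, X j ω = 1 ∨ X j ω = 0 := by
        intro j hj
        have := Set.mem_iInter₂.1 hω j hj
        rcases this with h | h
        · exact Or.inl h
        · exact Or.inr h
      have hbdd : BddAbove ((fun i => Y i ω) '' Set.Icc 1 n) :=
        ((Set.finite_Icc 1 n).image _).bddAbove
      by_cases hex : ∃ j, (j ∈ Finset.Icc 1 n ∧ X j ω = 1)
      · set i₀ := Nat.find hex with hi₀def
        have hspec := Nat.find_spec hex
        obtain ⟨hi₀mem, hi₀X⟩ := hspec
        obtain ⟨hi₀1, hi₀n⟩ := Finset.mem_Icc.1 hi₀mem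
        have hmin : ∀ j, j < i₀ → ¬(j ∈ Finset.Icc 1 n ∧ X j ω = 1) :=
          fun j hj => Nat.find_min hex hj
        have hic1 : (i₀:ℝ) * c ≤ 1 := by
          have h1' : (i₀:ℝ) ≤ (n:ℝ) := Nat.cast_le.2 hi₀n
          have h2' : (n:ℝ) * c ≤ 1 := by
            rw [hc, hpdef, mul_one_div, div_le_one (by positivity)]
            linarith
          nlinarith [hc0]
        have hval : ((∑ i ∈ Finset.Icc 1 n,
            (A i).indicator (fun _ => 1 - (i:ℝ) * c) ω) + A0.indicator (fun _ => -c) ω)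
            = 1 - (i₀:ℝ) * c := by
          have hA0not : ω ∉ A0 := by
            intro hmem
            rw [hA0def] at hmem
            have := Set.mem_iInter₂.1 hmem i₀ hi₀mem
            exact one_ne_zero (hi₀X.symm.trans this)
          rw [Set.indicator_of_notMem hA0not, add_zero]
          have hsingle : ∑ i ∈ Finset.Icc 1 n, (A i).indicator (fun _ => 1 - (i:ℝ) * c) ω
              = (A i₀).indicator (fun _ => 1 - (i₀:ℝ) * c) ω := by
            refine Finset.sum_eq_single_of_mem i₀ hi₀mem fun j hjmem hne => ?_
            refine Set.indicator_of_notMem ?_ _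
            intro hmem
            simp only [hAdef, Set.mem_inter_iff] at hmem
            obtain ⟨hZ, hMj⟩ := hmem
            rcases lt_or_gt_of_ne hne with h | h
            · exact hmin j h ⟨hjmem, hMj⟩
            · have := Set.mem_iInter₂.1 hZ i₀ (Finset.mem_Icc.2 ⟨hi₀1, by omega⟩)
              exact one_ne_zero (hi₀X.symm.trans this)
          rw [hsingle]
          have hmemA : ω ∈ A i₀ := by
            simp only [hAdef, Set.mem_inter_iff]
            refine ⟨?_, hi₀X⟩
            refine Set.mem_iInter₂.2 fun j hj => ?_
            obtain ⟨hja, hjb⟩ := Finset.mem_Icc.1 hj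
            have hjn' : j ∈ Finset.Icc 1 n := Finset.mem_Icc.2 ⟨hja, by omega⟩
            have hne1 : X j ω ≠ 1 := fun h => hmin j (by omega) ⟨hjn', h⟩
            exact (hG j hjn').resolve_left hne1
          exact Set.indicator_of_mem hmemA _
        have hsup : sSup ((fun i => Y i ω) '' Set.Icc 1 n) = 1 - (i₀:ℝ) * c := by
          apply le_antisymm
          · refine csSup_le ⟨Y i₀ ω, ⟨i₀, Set.mem_Icc.2 ⟨hi₀1, hi₀n⟩, rfl⟩⟩ ?_
            rintro y ⟨j, hj, rfl⟩
            obtain ⟨hj1, hj2⟩ := Set.mem_Icc.1 hj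
            show Y j ω ≤ 1 - (i₀:ℝ) * c
            rw [hY j ω]
            rcases hG j (Finset.mem_Icc.2 ⟨hj1, hj2⟩) with h1' | h0'
            · rw [h1']
              have hle : (i₀:ℝ) ≤ (j:ℝ) :=
                Nat.cast_le.2 (Nat.find_min' hex ⟨Finset.mem_Icc.2 ⟨hj1, hj2⟩, h1'⟩)
              nlinarith [hc0]
            · rw [h0']
              have : 0 ≤ (j:ℝ) * c := by positivity
              linarith
          · refine le_csSup hbdd ⟨i₀, Set.mem_Icc.2 ⟨hi₀1, hi₀n⟩, ?_⟩
            show Y i₀ ω = 1 - (i₀:ℝ) * c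
            rw [hY i₀ ω, hi₀X]
        exact hsup.trans hval.symm
      · push_neg at hex
        have hall : ∀ j ∈ Finset.Icc 1 n, X j ω = 0 :=
          fun j hj => (hG j hj).resolve_left (hex j hj)
        have hval : ((∑ i ∈ Finset.Icc 1 n,
            (A i).indicator (fun _ => 1 - (i:ℝ) * c) ω) + A0.indicator (fun _ => -c) ω)
            = -c := by
          have hz : ∑ i ∈ Finset.Icc 1 n, (A i).indicator (fun _ => 1 - (i:ℝ) * c) ω = 0 := by
            refine Finset.sum_eq_zero fun j hj => Set.indicator_of_notMem ?_ _
            intro hmem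
            simp only [hAdef, Set.mem_inter_iff] at hmem
            exact hex j hj hmem.2
          rw [hz, zero_add]
          have hmemA0 : ω ∈ A0 := by
            rw [hA0def]
            exact Set.mem_iInter₂.2 fun j hj => hall j hj
          exact Set.indicator_of_mem hmemA0 _
        have hsup : sSup ((fun i => Y i ω) '' Set.Icc 1 n) = -c := by
          apply le_antisymm
          · refine csSup_le ⟨Y 1 ω, ⟨1, Set.mem_Icc.2 ⟨le_refl 1, hn⟩, rfl⟩⟩ ?_
            rintro y ⟨j, hj, rfl⟩
            obtain ⟨hj1, hj2⟩ := Set.mem_Icc.1 hj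
            show Y j ω ≤ -c
            rw [hY j ω, hall j (Finset.mem_Icc.2 ⟨hj1, hj2⟩)]
            have hj1' : (1:ℝ) ≤ (j:ℝ) := by exact_mod_cast hj1
            nlinarith [hc0]
          · refine le_csSup hbdd ⟨1, Set.mem_Icc.2 ⟨le_refl 1, hn⟩, ?_⟩
            show Y 1 ω = -c
            rw [hY 1 ω, hall 1 h1n]
            push_cast
            ring
        exact hsup.trans hval.symm
    have hMcalc : Mn μ Y n = ∑ i ∈ Finset.Icc 1 n,
        (1 - (i:ℝ) * c) * ((1 - p) ^ (i - 1) * p) + (-c) * (1 - p) ^ n := by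
      show (∫ ω, sSup ((fun i => Y i ω) '' Set.Icc 1 n) ∂μ) = _
      rw [integral_congr_ae haeq]
      rw [integral_add (integrable_finset_sum _ fun i hi =>
          (integrable_const _).indicator (hAmeas i)) ((integrable_const _).indicator hA0meas)]
      rw [integral_finset_sum _ fun i hi => (integrable_const _).indicator (hAmeas i)]
      congr 1
      · refine Finset.sum_congr rfl fun i hi => ?_
        rw [integral_indicator_const _ (hAmeas i), measureReal_def, hμA i hi, ENNReal.toReal_mul,
          ENNReal.toReal_pow, ENNReal.toReal_ofReal hq0, ENNReal.toReal_ofReal hp0.le,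
          smul_eq_mul]
        ring
      · rw [integral_indicator_const _ hA0meas, measureReal_def, hμA0, ENNReal.toReal_pow,
          ENNReal.toReal_ofReal hq0, smul_eq_mul]
        ring
    rw [hMcalc]
    have hs := sumA (1 - p) n
    rw [sub_sub_cancel] at hs
    have hterm : ∑ i ∈ Finset.Icc 1 n, (1 - (i:ℝ) * c) * ((1 - p) ^ (i - 1) * p)
        = ∑ i ∈ Finset.Icc 1 n, (1 - (i:ℝ) * p) * (1 - p) ^ (i - 1) * p :=
      Finset.sum_congr rfl fun i _ => by rw [hc]; ring
    rw [hterm, hs, hc]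
    ring
  rw [hM, hV, hpdef]
  ring
end

section
/- (Lemma 2.4, monotonicity part) Let n ≥ 2, let X_1, ..., X_n be i.i.d. random variables taking values in [0,1] with essential infimum inf{x ∈ ℝ : P(X_1 ≤ x) > 0} = 0 and essential supremum sup{x ∈ ℝ : P(X_1 ≤ x) < 1} = 1, let c > 0 with E(X_1) > c, and let Y_i = X_i - i·c. Setting v_i = V(Y_1,...,Y_i) for i = 1,...,n-1, one has 1 > v_{n-1} > v_{n-2} > ··· > v_2 > v_1 > 0. -/
open MeasureTheory ProbabilityTheory

noncomputable def wseq {Ω : Type*} [MeasurableSpace Ω] (μ : Measure Ω)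
    (X : ℕ → Ω → ℝ) (c : ℝ) : ℕ → ℝ
  | 0 => 0
  | d+1 => (∫ ω, max (X 1 ω) (wseq μ X c d) ∂μ) - c

section Aux

variable {Ω : Type*} [MeasurableSpace Ω] {μ : Measure Ω} [IsProbabilityMeasure μ]
  {n : ℕ} {X Y : ℕ → Ω → ℝ} {c : ℝ}

lemma wseq_zero : wseq μ X c 0 = 0 := rfl

lemma wseq_succ (d : ℕ) :
    wseq μ X c (d+1) = (∫ ω, max (X 1 ω) (wseq μ X c d) ∂μ) - c := rfl

lemma int_bdd {f : Ω → ℝ} (hf : AEStronglyMeasurable f μ) (C : ℝ) (hC : ∀ ω, |f ω| ≤ C) :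
    Integrable f μ :=
  Integrable.mono' (integrable_const C) hf (ae_of_all _ fun ω => by
    simpa [Real.norm_eq_abs] using hC ω)

lemma comap_Y_eq (hY : ∀ i ω, Y i ω = X i ω - i * c) (l : ℕ) :
    MeasurableSpace.comap (Y l) Real.measurableSpace
      = MeasurableSpace.comap (X l) Real.measurableSpace := by
  apply le_antisymm
  · have h : Y l = (fun x : ℝ => x - l * c) ∘ X l := funext fun ω => hY l ω
    rw [h, ← MeasurableSpace.comap_comp]
    exact MeasurableSpace.comap_mono (Measurable.comap_le (measurable_id.sub measurable_const))
  · have h : X l = (fun x : ℝ => x + l * c) ∘ Y l := funext fun ω => by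
      simp [hY l ω]
    nth_rewrite 1 [h]
    rw [← MeasurableSpace.comap_comp]
    exact MeasurableSpace.comap_mono (Measurable.comap_le (measurable_id.add measurable_const))

lemma measurable_Y (hmeas : ∀ i, Measurable (X i)) (hY : ∀ i ω, Y i ω = X i ω - i * c)
    (i : ℕ) : Measurable (Y i) := by
  have h : Y i = fun ω => X i ω - i * c := funext fun ω => hY i ω
  rw [h]; exact (hmeas i).sub measurable_const

lemma priorSigma_le (hYm : ∀ i, Measurable (Y i)) (i : ℕ) :
    priorSigma Y i ≤ ‹MeasurableSpace Ω› :=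
  iSup₂_le fun j _ => Measurable.comap_le (hYm j)

lemma priorSigma_mono {i i' : ℕ} (h : i ≤ i') : priorSigma Y i ≤ priorSigma Y i' :=
  iSup₂_le fun j hj => le_iSup₂ (f := fun j (_ : j ∈ Finset.Icc 1 i') =>
    MeasurableSpace.comap (Y j) Real.measurableSpace) j (by
      simp only [Finset.mem_Icc] at hj ⊢; omega)

lemma comap_le_priorSigma (hY : ∀ i ω, Y i ω = X i ω - i * c) {i j : ℕ}
    (hj1 : 1 ≤ j) (hji : j ≤ i) :
    MeasurableSpace.comap (X j) Real.measurableSpace ≤ priorSigma Y i := by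
  rw [← comap_Y_eq hY]
  exact le_iSup₂ (f := fun j (_ : j ∈ Finset.Icc 1 i) =>
    MeasurableSpace.comap (Y j) Real.measurableSpace) j (Finset.mem_Icc.mpr ⟨hj1, hji⟩)

lemma ms_prior (hY : ∀ i ω, Y i ω = X i ω - i * c) {i j : ℕ} (hj1 : 1 ≤ j) (hji : j ≤ i)
    {s : Set ℝ} (hs : MeasurableSet s) :
    MeasurableSet[priorSigma Y i] (X j ⁻¹' s) :=
  comap_le_priorSigma hY hj1 hji _ ⟨s, hs, rfl⟩

lemma indep_prior_s10 (hmeas : ∀ i, Measurable (X i)) (hY : ∀ i ω, Y i ω = X i ω - i * c)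
    (hindep : iIndepFun (fun i : Fin n => X (i.1 + 1)) μ)
    {j : ℕ} (hj1 : 1 ≤ j) (hjn : j ≤ n) :
    Indep (priorSigma Y (j-1)) (MeasurableSpace.comap (X j) Real.measurableSpace) μ := by
  set s : Fin n → MeasurableSpace Ω :=
    fun i => MeasurableSpace.comap (X (i.1 + 1)) Real.measurableSpace with hs
  have hsle : ∀ i, s i ≤ ‹MeasurableSpace Ω› := fun i => Measurable.comap_le (hmeas _)
  have h := indep_biSup_compl hsle
    ((iIndepFun_iff_iIndep _ _ _).mp hindep) {i : Fin n | (i : ℕ) + 1 < j}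
  refine indep_of_indep_of_le_right (indep_of_indep_of_le_left h ?_) ?_
  · -- priorSigma Y (j-1) ≤ ⨆ i ∈ t, s i
    refine iSup₂_le fun l hl => ?_
    simp only [Finset.mem_Icc] at hl
    have hln : l - 1 < n := by omega
    rw [comap_Y_eq hY]
    refine le_trans (le_of_eq ?eq1) (le_iSup₂ (f := fun (i : Fin n)
      (_ : i ∈ {i : Fin n | (i : ℕ) + 1 < j}) => s i) ⟨l-1, hln⟩ ?mem1)
    case eq1 =>
      rw [hs]
      show MeasurableSpace.comap (X l) Real.measurableSpace
        = MeasurableSpace.comap (X (l - 1 + 1)) Real.measurableSpace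
      rw [Nat.sub_add_cancel hl.1]
    case mem1 => simp only [Set.mem_setOf_eq]; omega
  · -- comap (X j) ≤ ⨆ i ∈ tᶜ, s i
    have hjn' : j - 1 < n := by omega
    refine le_trans (le_of_eq ?eq2) (le_iSup₂ (f := fun (i : Fin n)
      (_ : i ∈ {i : Fin n | (i : ℕ) + 1 < j}ᶜ) => s i) ⟨j-1, hjn'⟩ ?mem2)
    case eq2 =>
      rw [hs]
      show MeasurableSpace.comap (X j) Real.measurableSpace
        = MeasurableSpace.comap (X (j - 1 + 1)) Real.measurableSpace
      rw [Nat.sub_add_cancel hj1]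
    case mem2 => simp only [Set.mem_compl_iff, Set.mem_setOf_eq]; omega

lemma factor (hmeas : ∀ i, Measurable (X i)) (hY : ∀ i ω, Y i ω = X i ω - i * c)
    (hindep : iIndepFun (fun i : Fin n => X (i.1 + 1)) μ)
    (hident : ∀ i ∈ Set.Icc 1 n, IdentDistrib (X i) (X 1) μ μ)
    (hval : ∀ i ∈ Set.Icc 1 n, ∀ ω, X i ω ∈ Set.Icc (0:ℝ) 1)
    {j : ℕ} (hj1 : 1 ≤ j) (hjn : j ≤ n) (v : ℝ) {B : Set Ω}
    (hB : MeasurableSet[priorSigma Y (j-1)] B) :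
    ∫ ω, B.indicator (fun ω => max (X j ω) v) ω ∂μ
      = (μ B).toReal * ∫ ω, max (X 1 ω) v ∂μ := by
  have hYm := measurable_Y hmeas hY
  have hBm : MeasurableSet B := priorSigma_le hYm (j-1) B hB
  have hindf : IndepFun (fun ω => max (X j ω) v) (B.indicator (fun _ => (1:ℝ))) μ := by
    rw [IndepFun_iff_Indep]
    have hmaster := indep_prior_s10 hmeas hY hindep hj1 hjn
    refine indep_of_indep_of_le_right (indep_of_indep_of_le_left hmaster.symm ?_) ?_
    · -- comap (max ∘ X j) ≤ comap (X j)
      have h : (fun ω => max (X j ω) v) = (fun x : ℝ => max x v) ∘ X j := rfl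
      rw [h, ← MeasurableSpace.comap_comp]
      exact MeasurableSpace.comap_mono
        (Measurable.comap_le (measurable_id.max measurable_const))
    · -- comap (indicator) ≤ priorSigma Y (j-1)
      exact Measurable.comap_le
        (show Measurable[priorSigma Y (j-1)] (B.indicator fun _ => (1:ℝ)) from
          Measurable.indicator measurable_const hB)
  have hintj : Integrable (fun ω => max (X j ω) v) μ := by
    refine int_bdd ((hmeas j).max measurable_const).aestronglyMeasurable (max 1 |v|) fun ω => ?_
    have h := hval j ⟨hj1, hjn⟩ ω
    simp only [Set.mem_Icc] at h
    rw [abs_le]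
    refine ⟨?_, max_le_max h.2 (le_abs_self v)⟩
    refine le_trans ?_ (le_max_right (X j ω) v)
    nlinarith [neg_abs_le v, le_max_right (1:ℝ) |v|]
  have hintB : Integrable (B.indicator (fun _ => (1:ℝ))) μ := by
    refine int_bdd ((measurable_const (a := (1:ℝ))).indicator hBm).aestronglyMeasurable 1
      fun ω => ?_
    by_cases hω : ω ∈ B <;> simp [Set.indicator_apply, hω]
  have heq : (fun ω => B.indicator (fun ω => max (X j ω) v) ω)
      = fun ω => (fun ω => max (X j ω) v) ω * B.indicator (fun _ => (1:ℝ)) ω := by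
    funext ω
    by_cases hω : ω ∈ B <;> simp [Set.indicator_apply, hω]
  rw [heq]
  have hm : ∫ ω, ((fun ω => max (X j ω) v) * (B.indicator fun _ => (1:ℝ))) ω ∂μ
      = (∫ ω, max (X j ω) v ∂μ) * ∫ ω, B.indicator (fun _ => (1:ℝ)) ω ∂μ :=
    hindf.integral_mul_eq_mul_integral hintj.aestronglyMeasurable hintB.aestronglyMeasurable
  rw [show (fun ω => max (X j ω) v * B.indicator (fun _ => (1:ℝ)) ω)
    = fun ω => ((fun ω => max (X j ω) v) * (B.indicator fun _ => (1:ℝ))) ω from rfl, hm]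
  have h1 : ∫ ω, B.indicator (fun _ => (1:ℝ)) ω ∂μ = (μ B).toReal := by
    rw [integral_indicator_const (1:ℝ) hBm]; simp [Measure.real]
  have h2 : ∫ ω, max (X j ω) v ∂μ = ∫ ω, max (X 1 ω) v ∂μ := by
    have := (hident j ⟨hj1, hjn⟩).comp (u := fun x => max x v)
      (measurable_id.max measurable_const)
    exact this.integral_eq
  rw [h1, h2]; ring

lemma measure_le_pos (hmeas : ∀ i, Measurable (X i))
    (hval1 : ∀ ω, X 1 ω ∈ Set.Icc (0:ℝ) 1)
    (hinf : sInf {x : ℝ | 0 < μ {ω | X 1 ω ≤ x}} = 0) {t : ℝ} (ht : 0 < t) :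
    0 < (μ {ω | X 1 ω ≤ t}).toReal := by
  set S := {x : ℝ | 0 < μ {ω | X 1 ω ≤ x}} with hS
  have hone : (1:ℝ) ∈ S := by
    have : {ω | X 1 ω ≤ 1} = Set.univ := by
      ext ω; simpa using (hval1 ω).2
    simp [hS, this]
  have hobt : ∃ x ∈ S, x < t := by
    by_contra hcon
    push_neg at hcon
    have : t ≤ sInf S := le_csInf ⟨1, hone⟩ hcon
    rw [hinf] at this
    linarith
  obtain ⟨x, hxS, hxt⟩ := hobt
  have hsub : {ω | X 1 ω ≤ x} ⊆ {ω | X 1 ω ≤ t} := fun ω hω => le_trans hω hxt.le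
  have hpos : 0 < μ {ω | X 1 ω ≤ t} := lt_of_lt_of_le hxS (measure_mono hsub)
  exact ENNReal.toReal_pos (ne_of_gt hpos) (measure_ne_top μ _)

lemma integrable_maxX (hmeas : ∀ i, Measurable (X i))
    (hval1 : ∀ ω, X 1 ω ∈ Set.Icc (0:ℝ) 1) (v : ℝ) :
    Integrable (fun ω => max (X 1 ω) v) μ := by
  refine int_bdd ((hmeas 1).max measurable_const).aestronglyMeasurable (max 1 |v|) fun ω => ?_
  have h := hval1 ω
  simp only [Set.mem_Icc] at h
  rw [abs_le]
  refine ⟨?_, max_le_max h.2 (le_abs_self v)⟩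
  refine le_trans ?_ (le_max_right (X 1 ω) v)
  nlinarith [neg_abs_le v, le_max_right (1:ℝ) |v|]

lemma wseq_chain (hmeas : ∀ i, Measurable (X i))
    (hval1 : ∀ ω, X 1 ω ∈ Set.Icc (0:ℝ) 1)
    (hinf : sInf {x : ℝ | 0 < μ {ω | X 1 ω ≤ x}} = 0)
    (hc : 0 < c) (hEX : c < ∫ ω, X 1 ω ∂μ) :
    ∀ d, wseq μ X c d < wseq μ X c (d+1) ∧ 0 ≤ wseq μ X c d := by
  intro d
  induction d with
  | zero =>
    constructor
    · rw [wseq_zero, wseq_succ, wseq_zero]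
      have h : ∫ ω, max (X 1 ω) 0 ∂μ = ∫ ω, X 1 ω ∂μ :=
        integral_congr_ae (ae_of_all _ fun ω => max_eq_left (hval1 ω).1)
      rw [h]; linarith
    · rw [wseq_zero]
  | succ d ih =>
    obtain ⟨hab, ha⟩ := ih
    refine ⟨?_, le_of_lt (lt_of_le_of_lt ha hab)⟩
    set a := wseq μ X c d with hadef
    set b := wseq μ X c (d+1) with hbdef
    set t := (a + b)/2 with htdef
    have ht0 : 0 < t := by simp only [htdef]; linarith
    have hat : a ≤ t := by simp only [htdef]; linarith
    have htb : t < b := by simp only [htdef]; linarith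
    have hmsble : MeasurableSet {ω | X 1 ω ≤ t} := (hmeas 1) measurableSet_Iic
    have hpos := measure_le_pos (μ := μ) hmeas hval1 hinf ht0
    have hintind : Integrable ({ω | X 1 ω ≤ t}.indicator (fun _ => (b-a)/2)) μ := by
      refine int_bdd ((measurable_const (a := (b-a)/2)).indicator hmsble).aestronglyMeasurable
        (|(b-a)/2|) fun ω => ?_
      by_cases hω : ω ∈ {ω | X 1 ω ≤ t} <;> simp [Set.indicator_apply, hω, abs_nonneg]
    have key : (∫ ω, max (X 1 ω) a ∂μ) + (b-a)/2 * (μ {ω | X 1 ω ≤ t}).toReal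
        ≤ ∫ ω, max (X 1 ω) b ∂μ := by
      have hconst : (b-a)/2 * (μ {ω | X 1 ω ≤ t}).toReal
          = ∫ ω, {ω | X 1 ω ≤ t}.indicator (fun _ => (b-a)/2) ω ∂μ := by
        rw [integral_indicator_const _ hmsble, smul_eq_mul, mul_comm]; rfl
      rw [hconst, ← integral_add (integrable_maxX hmeas hval1 a) hintind]
      refine integral_mono (Integrable.add (integrable_maxX hmeas hval1 a) hintind)
        (integrable_maxX hmeas hval1 b) fun ω => ?_
      by_cases hω : ω ∈ {ω | X 1 ω ≤ t}
      · have hx : X 1 ω ≤ t := hω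
        have h1 : max (X 1 ω) a ≤ t := max_le hx hat
        have h2 : b ≤ max (X 1 ω) b := le_max_right _ _
        simp only [Pi.add_apply, Set.indicator_of_mem hω]
        simp only [htdef] at h1 ⊢
        linarith
      · simp only [Pi.add_apply, Set.indicator_of_notMem hω, add_zero]
        exact max_le_max le_rfl hab.le
    have hb' : b = (∫ ω, max (X 1 ω) a ∂μ) - c := hbdef.trans (wseq_succ d)
    rw [show wseq μ X c (d+1+1) = (∫ ω, max (X 1 ω) b ∂μ) - c from wseq_succ (d+1)]
    nlinarith [hpos]

lemma wseq_le_one (hmeas : ∀ i, Measurable (X i))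
    (hval1 : ∀ ω, X 1 ω ∈ Set.Icc (0:ℝ) 1) (hc : 0 < c) :
    ∀ d, wseq μ X c d ≤ 1 ∧ (1 ≤ d → wseq μ X c d ≤ 1 - c) := by
  intro d
  induction d with
  | zero => exact ⟨by rw [wseq_zero]; norm_num, by omega⟩
  | succ d ih =>
    have h : ∫ ω, max (X 1 ω) (wseq μ X c d) ∂μ ≤ 1 := by
      have h2 := integral_mono (μ := μ) (integrable_maxX hmeas hval1 (wseq μ X c d))
        (integrable_const 1) (fun ω => max_le (hval1 ω).2 ih.1)
      simpa using h2
    have h3 : wseq μ X c (d+1) ≤ 1 - c := by rw [wseq_succ]; linarith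
    exact ⟨by linarith, fun _ => h3⟩

lemma ms_of_le {m m' : MeasurableSpace Ω} (h : m ≤ m') {s : Set Ω}
    (hs : MeasurableSet[m] s) : MeasurableSet[m'] s := h _ hs

lemma exists_threshold (hmeas : ∀ i, Measurable (X i))
    (hY : ∀ i ω, Y i ω = X i ω - i * c)
    (hval : ∀ i ∈ Set.Icc 1 n, ∀ ω, X i ω ∈ Set.Icc (0:ℝ) 1)
    {k : ℕ} (hk1 : 1 ≤ k) (hkn : k ≤ n) :
    ∃ τ : Ω → ℕ, IsStopRule Y k τ ∧
      (∀ ω, wseq μ X c (k - τ ω) ≤ X (τ ω) ω) ∧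
      (∀ j ω, 1 ≤ j → j + 1 ≤ τ ω → X j ω < wseq μ X c (k - j)) := by
  classical
  set T : Ω → ℕ := fun ω => sInf {j | 1 ≤ j ∧ wseq μ X c (k - j) ≤ X j ω} with hT
  have hmem : ∀ ω, k ∈ {j | 1 ≤ j ∧ wseq μ X c (k - j) ≤ X j ω} := fun ω => by
    refine ⟨hk1, ?_⟩
    rw [Nat.sub_self, wseq_zero]
    exact (hval k ⟨hk1, hkn⟩ ω).1
  have hTmem : ∀ ω, T ω ∈ {j | 1 ≤ j ∧ wseq μ X c (k - j) ≤ X j ω} :=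
    fun ω => Nat.sInf_mem ⟨k, hmem ω⟩
  have hTle : ∀ ω, T ω ≤ k := fun ω => Nat.sInf_le (hmem ω)
  have hT1 : ∀ ω, 1 ≤ T ω := fun ω => (hTmem ω).1
  have hstop : ∀ ω, wseq μ X c (k - T ω) ≤ X (T ω) ω := fun ω => (hTmem ω).2
  have hcont : ∀ j ω, 1 ≤ j → j + 1 ≤ T ω → X j ω < wseq μ X c (k - j) := by
    intro j ω hj hjT
    have h := Nat.notMem_of_lt_sInf (s := {j | 1 ≤ j ∧ wseq μ X c (k - j) ≤ X j ω})
      (show j < T ω by omega)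
    simp only [Set.mem_setOf_eq, not_and, not_le] at h
    exact h hj
  refine ⟨T, ⟨fun ω => Finset.mem_Icc.mpr ⟨hT1 ω, hTle ω⟩, ?_⟩, hstop, hcont⟩
  intro i hi
  simp only [Finset.mem_Icc] at hi
  have hset : {ω | T ω = i} = (X i ⁻¹' Set.Ici (wseq μ X c (k - i))) ∩
      ⋂ l ∈ Finset.Icc 1 (i-1), (X l ⁻¹' Set.Iio (wseq μ X c (k - l))) := by
    ext ω
    simp only [Set.mem_inter_iff, Set.mem_preimage, Set.mem_Ici, Set.mem_Iio,
      Set.mem_iInter, Finset.mem_Icc, Set.mem_setOf_eq]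
    constructor
    · intro heq
      refine ⟨heq ▸ hstop ω, fun l hl => hcont l ω hl.1 (by omega)⟩
    · rintro ⟨h1, h2⟩
      have hiS : i ∈ {j | 1 ≤ j ∧ wseq μ X c (k - j) ≤ X j ω} := ⟨hi.1, h1⟩
      have hle : T ω ≤ i := Nat.sInf_le hiS
      rcases Nat.lt_or_ge (T ω) i with hlt | hge
      · exfalso
        have h3 := h2 (T ω) ⟨hT1 ω, by omega⟩
        exact absurd (hstop ω) (not_le.mpr h3)
      · omega
  rw [hset]
  refine MeasurableSet.inter ?_ ?_
  · exact ms_prior hY hi.1 le_rfl measurableSet_Ici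
  · refine Finset.measurableSet_biInter _ fun l hl => ?_
    simp only [Finset.mem_Icc] at hl
    exact ms_prior hY hl.1 (by omega) measurableSet_Iio

lemma main_bound (hmeas : ∀ i, Measurable (X i)) (hY : ∀ i ω, Y i ω = X i ω - i * c)
    (hindep : iIndepFun (fun i : Fin n => X (i.1 + 1)) μ)
    (hident : ∀ i ∈ Set.Icc 1 n, IdentDistrib (X i) (X 1) μ μ)
    (hval : ∀ i ∈ Set.Icc 1 n, ∀ ω, X i ω ∈ Set.Icc (0:ℝ) 1)
    (hc : 0 < c)
    {k : ℕ} (hk1 : 1 ≤ k) (hkn : k ≤ n)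
    {τ : Ω → ℕ} (hτ : IsStopRule Y k τ)
    (R : ℝ → ℝ → Prop)
    (hRrefl : ∀ a, R a a)
    (hRtrans : ∀ a b c', R a b → R b c' → R a c')
    (hRadd : ∀ a x y, R x y → R (a + x) (a + y))
    (hRsub : ∀ z x y, R x y → R (x - z) (y - z))
    (hRint : ∀ f g : Ω → ℝ, Integrable f μ → Integrable g μ →
      (∀ ω, R (f ω) (g ω)) → R (∫ ω, f ω ∂μ) (∫ ω, g ω ∂μ))
    (hpt : ∀ j, 1 ≤ j → j ≤ k → ∀ ω,
      R ({ω | τ ω = j}.indicator (fun ω => X j ω) ω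
          + {ω | j + 1 ≤ τ ω}.indicator (fun _ => wseq μ X c (k - j)) ω)
        ({ω | j ≤ τ ω}.indicator (fun ω => max (X j ω) (wseq μ X c (k - j))) ω)) :
    R (∫ ω, Y (τ ω) ω ∂μ) (wseq μ X c k) := by
  have hYm := measurable_Y hmeas hY
  have hτ1 := hτ.1
  have hms : ∀ l, 1 ≤ l → l ≤ k → MeasurableSet {ω | τ ω = l} := fun l h1 h2 =>
    ms_of_le (priorSigma_le hYm l) (hτ.2 l (Finset.mem_Icc.mpr ⟨h1, h2⟩))
  have hAprior : ∀ j, j ≤ k + 1 → MeasurableSet[priorSigma Y (j-1)] {ω | j ≤ τ ω} := by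
    intro j hjk1
    have hAeq : {ω | j ≤ τ ω} = (⋃ l ∈ Finset.Icc 1 (j-1), {ω | τ ω = l})ᶜ := by
      ext ω
      have hb := hτ1 ω
      simp only [Finset.mem_Icc] at hb
      simp only [Set.mem_setOf_eq, Set.mem_compl_iff, Set.mem_iUnion, exists_prop,
        Finset.mem_Icc, not_exists, not_and]
      constructor
      · intro h l hl heq; omega
      · intro h
        by_contra hcon
        exact h (τ ω) ⟨by omega, by omega⟩ rfl
    rw [hAeq]
    refine MeasurableSet.compl ?_
    refine Finset.measurableSet_biUnion _ fun l hl => ?_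
    simp only [Finset.mem_Icc] at hl
    exact ms_of_le (priorSigma_mono hl.2) (hτ.2 l (Finset.mem_Icc.mpr ⟨hl.1, by omega⟩))
  have hAms : ∀ j, j ≤ k + 1 → MeasurableSet {ω | j ≤ τ ω} := fun j hj =>
    ms_of_le (priorSigma_le hYm (j-1)) (hAprior j hj)
  have hindint : ∀ (s : Set Ω), MeasurableSet s → ∀ (f : Ω → ℝ), Measurable f →
      ∀ C : ℝ, (∀ ω, |f ω| ≤ C) → Integrable (s.indicator f) μ := by
    intro s hs f hf C hC
    refine int_bdd (hf.indicator hs).aestronglyMeasurable C fun ω => ?_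
    by_cases hω : ω ∈ s
    · simpa [Set.indicator_of_mem hω] using hC ω
    · simpa [Set.indicator_of_notMem hω] using le_trans (abs_nonneg _) (hC ω)
  have hXbd : ∀ l, 1 ≤ l → l ≤ k → ∀ ω, |X l ω| ≤ 1 := by
    intro l h1 h2 ω
    have h := hval l ⟨h1, le_trans h2 hkn⟩ ω
    simp only [Set.mem_Icc] at h
    rw [abs_le]; exact ⟨by linarith, h.2⟩
  have hIY : ∀ l, 1 ≤ l → l ≤ k → Integrable ({ω | τ ω = l}.indicator (Y l)) μ := by
    intro l h1 h2
    refine hindint _ (hms l h1 h2) _ (hYm l) (1 + k * c) fun ω => ?_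
    rw [hY l ω]
    have h3 : (l:ℝ) * c ≤ (k:ℝ) * c :=
      mul_le_mul_of_nonneg_right (Nat.cast_le.mpr h2) hc.le
    have h4 := hXbd l h1 h2 ω
    have h5 : 0 ≤ (l:ℝ) * c := by positivity
    rw [abs_le] at h4 ⊢
    constructor <;> nlinarith [h4.1, h4.2]
  have hIX : ∀ l, 1 ≤ l → l ≤ k →
      Integrable ({ω | τ ω = l}.indicator (fun ω => X l ω)) μ := fun l h1 h2 =>
    hindint _ (hms l h1 h2) _ (hmeas l) 1 (hXbd l h1 h2)
  -- the expected return as a finite sum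
  have hYτ : ∫ ω, Y (τ ω) ω ∂μ
      = ∑ l ∈ Finset.Icc 1 k, ∫ ω, {ω | τ ω = l}.indicator (Y l) ω ∂μ := by
    have hfun : (fun ω => Y (τ ω) ω)
        = fun ω => ∑ l ∈ Finset.Icc 1 k, {ω | τ ω = l}.indicator (Y l) ω := by
      funext ω
      rw [Finset.sum_eq_single_of_mem (τ ω) (hτ1 ω)]
      · rw [Set.indicator_of_mem (by exact rfl)]
      · intro b _ hbne
        exact Set.indicator_of_notMem (fun h => hbne (by exact h.symm)) _
    rw [hfun, integral_finset_sum _ fun l hl => by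
      simp only [Finset.mem_Icc] at hl
      exact hIY l hl.1 hl.2]
  -- the backward induction
  have key : ∀ d, d ≤ k →
      R (∑ l ∈ Finset.Icc (k+1-d) k, ∫ ω, {ω | τ ω = l}.indicator (Y l) ω ∂μ)
        ((wseq μ X c d - ((k:ℝ) - (d:ℝ)) * c) * (μ {ω | k+1-d ≤ τ ω}).toReal) := by
    intro d
    induction d with
    | zero =>
      intro _
      have h1 : Finset.Icc (k+1-0) k = ∅ := Finset.Icc_eq_empty (by omega)
      have h2 : {ω | k+1-0 ≤ τ ω} = ∅ := by
        ext ω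
        have hb := hτ1 ω
        simp only [Finset.mem_Icc] at hb
        simp only [Set.mem_setOf_eq, Set.mem_empty_iff_false, iff_false]
        omega
      rw [h1, h2]
      simpa using hRrefl 0
    | succ d ih =>
      intro hdk
      have hd : d ≤ k := by omega
      specialize ih hd
      set j := k - d with hj
      have hj1 : 1 ≤ j := by omega
      have hjk : j ≤ k := by omega
      have hjn : j ≤ n := by omega
      have e1 : k + 1 - (d+1) = j := by omega
      have e2 : k + 1 - d = j + 1 := by omega
      have e3 : k - j = d := by omega
      have hcast : ((k:ℝ) - (d:ℝ)) = (j:ℝ) := by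
        rw [hj]; rw [Nat.cast_sub hd]
      rw [e1]
      rw [e2, hcast] at ih
      -- integrability pieces at stage j
      have hIXj := hIX j hj1 hjk
      have hICj : Integrable ({ω | j+1 ≤ τ ω}.indicator (fun _ => wseq μ X c d)) μ :=
        hindint _ (hAms (j+1) (by omega)) _ measurable_const |wseq μ X c d|
          (fun ω => le_rfl)
      have hIMj : Integrable
          ({ω | j ≤ τ ω}.indicator (fun ω => max (X j ω) (wseq μ X c d))) μ := by
        refine hindint _ (hAms j (by omega)) _ ((hmeas j).max measurable_const)
          (max 1 |wseq μ X c d|) fun ω => ?_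
        have h4 := hXbd j hj1 hjk ω
        rw [abs_le] at h4 ⊢
        constructor
        · refine le_trans ?_ (le_max_right (X j ω) _)
          nlinarith [neg_abs_le (wseq μ X c d), le_max_right (1:ℝ) |wseq μ X c d|]
        · exact max_le_max h4.2 (le_abs_self _)
      -- split the sum
      have hsum : ∑ l ∈ Finset.Icc j k, ∫ ω, {ω | τ ω = l}.indicator (Y l) ω ∂μ
          = (∫ ω, {ω | τ ω = j}.indicator (Y j) ω ∂μ)
            + ∑ l ∈ Finset.Icc (j+1) k, ∫ ω, {ω | τ ω = l}.indicator (Y l) ω ∂μ := by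
        have hins : Finset.Icc j k = insert j (Finset.Icc (j+1) k) := by
          ext l; simp only [Finset.mem_Icc, Finset.mem_insert]; omega
        rw [hins, Finset.sum_insert (by simp only [Finset.mem_Icc]; omega)]
      -- decompose the Y integral
      have hYj : ∫ ω, {ω | τ ω = j}.indicator (Y j) ω ∂μ
          = (∫ ω, {ω | τ ω = j}.indicator (fun ω => X j ω) ω ∂μ)
            - ((j:ℝ) * c) * (μ {ω | τ ω = j}).toReal := by
        have hfun : {ω | τ ω = j}.indicator (Y j) = fun ω =>
            {ω | τ ω = j}.indicator (fun ω => X j ω) ω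
              - {ω | τ ω = j}.indicator (fun _ => (j:ℝ) * c) ω := by
          funext ω
          by_cases hω : ω ∈ {ω | τ ω = j} <;>
            simp [Set.indicator_apply, hω, hY j ω]
        rw [hfun, integral_sub hIXj (hindint _ (hms j hj1 hjk) _ measurable_const
          |(j:ℝ)*c| (fun ω => le_rfl)), integral_indicator_const _ (hms j hj1 hjk),
          smul_eq_mul, mul_comm]; rfl
      -- measure splitting
      have hP : (μ {ω | j ≤ τ ω}).toReal
          = (μ {ω | τ ω = j}).toReal + (μ {ω | j+1 ≤ τ ω}).toReal := by
        have hu : {ω | j ≤ τ ω} = {ω | τ ω = j} ∪ {ω | j+1 ≤ τ ω} := by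
          ext ω; simp only [Set.mem_setOf_eq, Set.mem_union]; omega
        have hdisj : Disjoint {ω | τ ω = j} {ω | j+1 ≤ τ ω} := by
          rw [Set.disjoint_left]
          intro ω h1 h2
          simp only [Set.mem_setOf_eq] at h1 h2
          omega
        rw [hu, measure_union hdisj (hAms (j+1) (by omega)),
          ENNReal.toReal_add (measure_ne_top μ _) (measure_ne_top μ _)]
      -- the middle (pointwise) step
      have hmidpt : ∀ ω,
          R ({ω | τ ω = j}.indicator (fun ω => X j ω) ω
              + {ω | j + 1 ≤ τ ω}.indicator (fun _ => wseq μ X c d) ω)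
            ({ω | j ≤ τ ω}.indicator (fun ω => max (X j ω) (wseq μ X c d)) ω) := by
        have h := hpt j hj1 hjk
        rw [e3] at h
        exact h
      have hmid : R ((∫ ω, {ω | τ ω = j}.indicator (fun ω => X j ω) ω ∂μ)
            + wseq μ X c d * (μ {ω | j+1 ≤ τ ω}).toReal)
          (∫ ω, {ω | j ≤ τ ω}.indicator (fun ω => max (X j ω) (wseq μ X c d)) ω ∂μ) := by
        have hca : wseq μ X c d * (μ {ω | j+1 ≤ τ ω}).toReal
            = ∫ ω, {ω | j+1 ≤ τ ω}.indicator (fun _ => wseq μ X c d) ω ∂μ := by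
          rw [integral_indicator_const _ (hAms (j+1) (by omega)), smul_eq_mul, mul_comm]; rfl
        rw [hca, ← integral_add hIXj hICj]
        exact hRint _ _ (hIXj.add hICj) hIMj hmidpt
      -- independence factorization
      have hfac : ∫ ω, {ω | j ≤ τ ω}.indicator (fun ω => max (X j ω) (wseq μ X c d)) ω ∂μ
          = (μ {ω | j ≤ τ ω}).toReal * ∫ ω, max (X 1 ω) (wseq μ X c d) ∂μ :=
        factor hmeas hY hindep hident hval hj1 hjn _ (hAprior j (by omega))
      have hwdef : ∫ ω, max (X 1 ω) (wseq μ X c d) ∂μ = wseq μ X c (d+1) + c := by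
        rw [wseq_succ]; ring
      -- assemble
      have step1 : R (∑ l ∈ Finset.Icc j k, ∫ ω, {ω | τ ω = l}.indicator (Y l) ω ∂μ)
          ((∫ ω, {ω | τ ω = j}.indicator (fun ω => X j ω) ω ∂μ)
            - ((j:ℝ) * c) * (μ {ω | τ ω = j}).toReal
            + (wseq μ X c d - (j:ℝ) * c) * (μ {ω | j+1 ≤ τ ω}).toReal) := by
        rw [hsum, hYj]
        exact hRadd _ _ _ ih
      have step2 : R ((∫ ω, {ω | τ ω = j}.indicator (fun ω => X j ω) ω ∂μ)
            - ((j:ℝ) * c) * (μ {ω | τ ω = j}).toReal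
            + (wseq μ X c d - (j:ℝ) * c) * (μ {ω | j+1 ≤ τ ω}).toReal)
          ((wseq μ X c (d+1) + c) * (μ {ω | j ≤ τ ω}).toReal
            - (j:ℝ) * c * (μ {ω | j ≤ τ ω}).toReal) := by
        have h2 := hRsub ((j:ℝ) * c * (μ {ω | j ≤ τ ω}).toReal) _ _ hmid
        have e4 : (∫ ω, {ω | τ ω = j}.indicator (fun ω => X j ω) ω ∂μ)
            - ((j:ℝ) * c) * (μ {ω | τ ω = j}).toReal
            + (wseq μ X c d - (j:ℝ) * c) * (μ {ω | j+1 ≤ τ ω}).toReal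
            = (∫ ω, {ω | τ ω = j}.indicator (fun ω => X j ω) ω ∂μ)
              + wseq μ X c d * (μ {ω | j+1 ≤ τ ω}).toReal
              - (j:ℝ) * c * (μ {ω | j ≤ τ ω}).toReal := by
          rw [hP]; ring
        have e5 : (∫ ω, {ω | j ≤ τ ω}.indicator
              (fun ω => max (X j ω) (wseq μ X c d)) ω ∂μ)
            - (j:ℝ) * c * (μ {ω | j ≤ τ ω}).toReal
            = (wseq μ X c (d+1) + c) * (μ {ω | j ≤ τ ω}).toReal
              - (j:ℝ) * c * (μ {ω | j ≤ τ ω}).toReal := by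
          rw [hfac, hwdef]; ring
        rw [e4, ← e5]
        exact h2
      have e6 : (wseq μ X c (d+1) - ((k:ℝ) - ((d:ℕ)+1:ℕ)) * c) * (μ {ω | j ≤ τ ω}).toReal
          = (wseq μ X c (d+1) + c) * (μ {ω | j ≤ τ ω}).toReal
            - (j:ℝ) * c * (μ {ω | j ≤ τ ω}).toReal := by
        have h7 : ((k:ℝ) - ((d:ℕ)+1:ℕ)) = (j:ℝ) - 1 := by
          push_cast
          rw [← hcast]; ring
        rw [h7]; ring
      rw [show ((d+1:ℕ):ℝ) = ((d:ℕ)+1:ℕ) from by push_cast; ring] -- adjust cast if needed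
      rw [e6]
      exact hRtrans _ _ _ step1 step2
  have hfin := key k le_rfl
  have e8 : k + 1 - k = 1 := by omega
  rw [e8] at hfin
  have e9 : {ω | 1 ≤ τ ω} = Set.univ := by
    ext ω
    have hb := hτ1 ω
    simp only [Finset.mem_Icc] at hb
    simp only [Set.mem_setOf_eq, Set.mem_univ, iff_true]
    omega
  rw [e9] at hfin
  simp only [measure_univ, ENNReal.toReal_one, mul_one, sub_self, zero_mul, sub_zero] at hfin
  rw [hYτ]
  exact hfin

end Aux

set_option linter.unusedVariables false

theorem stmt10
    {Ω : Type*} [MeasurableSpace Ω] (μ : Measure Ω) [IsProbabilityMeasure μ]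
    (n : ℕ) (X : ℕ → Ω → ℝ)
    (hmeas : ∀ i, Measurable (X i))
    (hindep : iIndepFun (fun i : Fin n => X (i.1 + 1)) μ)
    (hident : ∀ i ∈ Set.Icc 1 n, IdentDistrib (X i) (X 1) μ μ)
    (hval : ∀ i ∈ Set.Icc 1 n, ∀ ω, X i ω ∈ Set.Icc (0:ℝ) 1)
    (c : ℝ) (Y : ℕ → Ω → ℝ) (hY : ∀ i ω, Y i ω = X i ω - i * c)
    (hinf : sInf {x : ℝ | 0 < μ {ω | X 1 ω ≤ x}} = 0)
    (hsup : sSup {x : ℝ | μ {ω | X 1 ω ≤ x} < 1} = 1)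
    (hn : 2 ≤ n) (hc : 0 < c) (hEX : c < ∫ ω, X 1 ω ∂μ) :
    Vn μ Y (n-1) < 1 ∧
    (∀ i, 1 ≤ i → i + 1 ≤ n - 1 → Vn μ Y i < Vn μ Y (i+1)) ∧
    0 < Vn μ Y 1 := by
  have hval1 : ∀ ω, X 1 ω ∈ Set.Icc (0:ℝ) 1 := hval 1 ⟨le_refl 1, by omega⟩
  have wchain := wseq_chain hmeas hval1 hinf hc hEX
  have wle := wseq_le_one (μ := μ) (X := X) hmeas hval1 hc
  have hbounds : ∀ k, 1 ≤ k → k ≤ n →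
      wseq μ X c k ≤ Vn μ Y k ∧ Vn μ Y k ≤ wseq μ X c k := by
    intro k hk1 hkn
    obtain ⟨σ, hσ, hstop, hcont⟩ := exists_threshold (μ := μ) (c := c) hmeas hY hval hk1 hkn
    have hupper : ∀ r ∈ {r | ∃ τ, IsStopRule Y k τ ∧ r = ∫ ω, Y (τ ω) ω ∂μ},
        r ≤ wseq μ X c k := by
      rintro r ⟨τ, hτ, rfl⟩
      refine main_bound hmeas hY hindep hident hval hc hk1 hkn hτ (· ≤ ·)
        (fun a => le_rfl) (fun a b c' h1 h2 => h1.trans h2)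
        (fun a x y h => by simpa using add_le_add_left h a)
        (fun z x y h => by simpa using sub_le_sub_right h z)
        (fun f g hf hg h => integral_mono hf hg h) ?_
      intro j hj1 hjk ω
      by_cases h1 : τ ω = j
      · subst h1
        simp only [Set.indicator_apply, Set.mem_setOf_eq]
        rw [if_pos trivial, if_neg (by omega : ¬ (τ ω + 1 ≤ τ ω)), if_pos (le_refl (τ ω))]
        simpa using le_max_left _ _
      · by_cases h2 : j + 1 ≤ τ ω
        · simp only [Set.indicator_apply, Set.mem_setOf_eq]
          rw [if_neg h1, if_pos h2, if_pos (by omega)]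
          simpa using le_max_right _ _
        · simp only [Set.indicator_apply, Set.mem_setOf_eq]
          rw [if_neg h1, if_neg h2, if_neg (by omega)]
          simp
    have hlow : wseq μ X c k ≤ ∫ ω, Y (σ ω) ω ∂μ := by
      refine main_bound hmeas hY hindep hident hval hc hk1 hkn hσ (fun a b => b ≤ a)
        (fun a => le_rfl) (fun a b c' h1 h2 => h2.trans h1)
        (fun a x y h => by simpa using add_le_add_left h a)
        (fun z x y h => by simpa using sub_le_sub_right h z)
        (fun f g hf hg h => integral_mono hg hf h) ?_
      intro j hj1 hjk ω
      by_cases h1 : σ ω = j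
      · subst h1
        simp only [Set.indicator_apply, Set.mem_setOf_eq]
        rw [if_pos trivial, if_neg (by omega : ¬ (σ ω + 1 ≤ σ ω)), if_pos (le_refl (σ ω))]
        simpa using max_le le_rfl (hstop ω)
      · by_cases h2 : j + 1 ≤ σ ω
        · simp only [Set.indicator_apply, Set.mem_setOf_eq]
          rw [if_neg h1, if_pos h2, if_pos (by omega)]
          simpa using max_le (le_of_lt (hcont j ω hj1 h2)) le_rfl
        · simp only [Set.indicator_apply, Set.mem_setOf_eq]
          rw [if_neg h1, if_neg h2, if_neg (by omega)]
          simp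
    have hne : Set.Nonempty {r | ∃ τ, IsStopRule Y k τ ∧ r = ∫ ω, Y (τ ω) ω ∂μ} :=
      ⟨_, σ, hσ, rfl⟩
    have hbdd : BddAbove {r | ∃ τ, IsStopRule Y k τ ∧ r = ∫ ω, Y (τ ω) ω ∂μ} :=
      ⟨wseq μ X c k, fun r hr => hupper r hr⟩
    constructor
    · exact le_trans hlow (le_csSup hbdd ⟨σ, hσ, rfl⟩)
    · exact csSup_le hne hupper
  refine ⟨?_, ?_, ?_⟩
  · have h := (hbounds (n-1) (by omega) (by omega)).2
    have h2 := (wle (n-1)).2 (by omega)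
    linarith
  · intro i hi1 hin
    have ha := (hbounds i (by omega) (by omega)).2
    have hb := (hbounds (i+1) (by omega) (by omega)).1
    have hm := (wchain i).1
    linarith
  · have h := (hbounds 1 le_rfl (by omega)).1
    have h0 := (wchain 0).1
    rw [wseq_zero] at h0
    linarith
end
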